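/- arXiv:2410.07729 — 7 statements merged into one kernel-verified Lean document; each statement's English description precedes it below -/
import Mathlib

section
/- Let n ≥ 2 be an integer and c a nonzero real number, with n odd or (n even and c < 0), and let k be a natural number with 1 ≤ k ≤ ⌊n/2⌋. Then the function y : ℂ → ℂ defined by y(x) = ∫₀^∞ e^{-(-c)^{n-1} w^n/n} ( e^{-c w x} - e^{-c w x a_k} cos(c w x b_k - 2kπ/n) ) dw satisfies the ordinary differential equation y^{(n-1)}(x) + c·x·y(x) = 0 for every x ∈ ℂ. -/
open MeasureTheory Real Set

lemma airy_aux_bound {A : ℝ} (hA : 0 < A) {n : ℕ} (hn : 2 ≤ n) (j : ℕ) (K : ℝ) :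
    ∃ C : ℝ, ∀ w : ℝ, 0 < w → w ^ j * Real.exp (K * w - A * w ^ n / n) ≤ C * Real.exp (-w) := by
  have hn0 : (0:ℝ) < n := by positivity
  set a : ℝ := A / n with ha_def
  have ha : 0 < a := div_pos hA hn0
  set B : ℝ := K + j + 1 with hB_def
  refine ⟨Real.exp (B ^ 2 / (4 * a) + a), fun w hw => ?_⟩
  have h1 : w ^ j ≤ Real.exp (j * w) := by
    calc w ^ j ≤ (Real.exp w) ^ j :=
          pow_le_pow_left₀ hw.le (by linarith [Real.add_one_le_exp w]) j
      _ = Real.exp (j * w) := by rw [← Real.exp_nat_mul]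
  have h2 : -(A * w ^ n / n) ≤ -(a * w ^ 2) + a := by
    rcases le_or_gt 1 w with h | h
    · have hwn : w ^ 2 ≤ w ^ n := pow_le_pow_right₀ h hn
      have : a * w ^ 2 ≤ a * w ^ n := by nlinarith
      have he : A * w ^ n / n = a * w ^ n := by rw [ha_def]; ring
      nlinarith
    · have h0 : 0 ≤ A * w ^ n / n := by positivity
      have hw2 : w ^ 2 ≤ 1 := by nlinarith
      nlinarith
  calc w ^ j * Real.exp (K * w - A * w ^ n / n)
      ≤ Real.exp (j * w) * Real.exp (K * w - A * w ^ n / n) :=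
        mul_le_mul_of_nonneg_right h1 (Real.exp_nonneg _)
    _ = Real.exp (j * w + (K * w - A * w ^ n / n)) := (Real.exp_add _ _).symm
    _ ≤ Real.exp ((B ^ 2 / (4 * a) + a) + -w) := by
        apply Real.exp_le_exp.2
        have h3 : B * w - a * w ^ 2 ≤ B ^ 2 / (4 * a) := by
          rw [le_div_iff₀ (by positivity)]
          nlinarith [sq_nonneg (B - 2 * a * w)]
        have hBw : B * w = K * w + j * w + w := by rw [hB_def]; ring
        linarith
    _ = Real.exp (B ^ 2 / (4 * a) + a) * Real.exp (-w) := Real.exp_add _ _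

lemma airy_aux_integrable {A : ℝ} (hA : 0 < A) {n : ℕ} (hn : 2 ≤ n) (j : ℕ) (K : ℝ) :
    IntegrableOn (fun w : ℝ => w ^ j * Real.exp (K * w - A * w ^ n / n)) (Ioi 0) := by
  obtain ⟨C, hC⟩ := airy_aux_bound hA hn j K
  have hmaj : IntegrableOn (fun w : ℝ => C * Real.exp (-w)) (Ioi 0) := by
    have := (exp_neg_integrableOn_Ioi 0 one_pos).const_mul C
    simpa [IntegrableOn] using this
  refine hmaj.mono' ?_ ?_
  · exact (Continuous.aestronglyMeasurable (by fun_prop)).restrict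
  · filter_upwards [ae_restrict_mem measurableSet_Ioi] with w hw
    rw [Real.norm_eq_abs, abs_of_nonneg (mul_nonneg (pow_nonneg (le_of_lt hw) j) (Real.exp_nonneg _))]
    exact hC w hw

noncomputable def phiAux (A : ℝ) (n : ℕ) (c : ℝ) (l : ℂ) (j : ℕ) (x : ℂ) : ℂ :=
  ∫ w in Ioi (0 : ℝ),
    Complex.exp (-(A : ℂ) * (w : ℂ) ^ n / n) * (w : ℂ) ^ j * Complex.exp (-(c : ℂ) * w * l * x)

lemma airy_integrand_norm (A : ℝ) (n : ℕ) (c : ℝ) (l x : ℂ) (j : ℕ) {w : ℝ} (hw : 0 < w) :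
    ‖Complex.exp (-(A : ℂ) * (w : ℂ) ^ n / n) * (w : ℂ) ^ j *
        Complex.exp (-(c : ℂ) * w * l * x)‖
      = w ^ j * Real.exp ((-(c : ℂ) * l * x).re * w - A * w ^ n / n) := by
  have e1 : -(A : ℂ) * (w : ℂ) ^ n / (n : ℂ) = ((-(A * w ^ n / n) : ℝ) : ℂ) := by
    push_cast; ring
  have e2 : -(c : ℂ) * (w : ℂ) * l * x = (w : ℂ) * (-(c : ℂ) * l * x) := by ring
  rw [e1, e2]
  simp only [norm_mul, Complex.norm_exp, Complex.ofReal_re,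
    Complex.re_ofReal_mul, norm_pow, Complex.norm_real, Real.norm_eq_abs, abs_of_pos hw]
  rw [show (-(c : ℂ) * l * x).re * w - A * w ^ n / n
      = -(A * w ^ n / n) + w * (-(c : ℂ) * l * x).re from by ring, Real.exp_add]
  ring

lemma airy_integrand_integrable {A : ℝ} (hA : 0 < A) {n : ℕ} (hn : 2 ≤ n)
    (c : ℝ) (l x : ℂ) (j : ℕ) :
    IntegrableOn (fun w : ℝ =>
      Complex.exp (-(A : ℂ) * (w : ℂ) ^ n / n) * (w : ℂ) ^ j *
        Complex.exp (-(c : ℂ) * w * l * x)) (Ioi 0) := by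
  refine (airy_aux_integrable hA hn j ((-(c : ℂ) * l * x).re)).mono' ?_ ?_
  · exact (Continuous.aestronglyMeasurable (by fun_prop)).restrict
  · filter_upwards [ae_restrict_mem measurableSet_Ioi] with w hw
    rw [airy_integrand_norm A n c l x j hw]

lemma phiAux_hasDerivAt {A : ℝ} (hA : 0 < A) {n : ℕ} (hn : 2 ≤ n)
    (c : ℝ) (l : ℂ) (j : ℕ) (x₀ : ℂ) :
    HasDerivAt (phiAux A n c l j) (-(c : ℂ) * l * phiAux A n c l (j + 1) x₀) x₀ := by
  set K : ℝ := |c| * ‖l‖ * (‖x₀‖ + 1) with hK_def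
  have key := hasDerivAt_integral_of_dominated_loc_of_deriv_le
    (μ := volume.restrict (Ioi (0:ℝ)))
    (F := fun (x : ℂ) (w : ℝ) =>
      Complex.exp (-(A : ℂ) * (w : ℂ) ^ n / n) * (w : ℂ) ^ j *
        Complex.exp (-(c : ℂ) * w * l * x))
    (F' := fun (x : ℂ) (w : ℝ) => (-(c : ℂ) * l) *
      (Complex.exp (-(A : ℂ) * (w : ℂ) ^ n / n) * (w : ℂ) ^ (j + 1) *
        Complex.exp (-(c : ℂ) * w * l * x)))
    (x₀ := x₀)
    (bound := fun w : ℝ => (|c| * ‖l‖) * (w ^ (j + 1) * Real.exp (K * w - A * w ^ n / n)))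
    (s := Metric.ball x₀ 1) (Metric.ball_mem_nhds x₀ one_pos)
    (Filter.Eventually.of_forall fun x =>
      (Continuous.aestronglyMeasurable (by fun_prop)).restrict)
    (airy_integrand_integrable hA hn c l x₀ j)
    ((Continuous.aestronglyMeasurable (by fun_prop)).restrict)
    ?_ (((airy_aux_integrable hA hn (j + 1) K).const_mul _)) ?_
  · have : (∫ w in Ioi (0:ℝ), (-(c : ℂ) * l) *
        (Complex.exp (-(A : ℂ) * (w : ℂ) ^ n / n) * (w : ℂ) ^ (j + 1) *
          Complex.exp (-(c : ℂ) * w * l * x₀)))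
        = -(c : ℂ) * l * phiAux A n c l (j + 1) x₀ := by
      rw [integral_const_mul]; rfl
    rw [this] at key
    exact key.2
  · filter_upwards [ae_restrict_mem measurableSet_Ioi] with w hw x hx
    rw [norm_mul, airy_integrand_norm A n c l x (j + 1) hw]
    have hx' : ‖x‖ ≤ ‖x₀‖ + 1 := by
      have := mem_ball_iff_norm.1 hx
      calc ‖x‖ = ‖x₀ + (x - x₀)‖ := by ring_nf
        _ ≤ ‖x₀‖ + ‖x - x₀‖ := norm_add_le _ _
        _ ≤ ‖x₀‖ + 1 := by linarith
    have hre : (-(c : ℂ) * l * x).re ≤ K := by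
      calc (-(c : ℂ) * l * x).re ≤ ‖-(c : ℂ) * l * x‖ := Complex.re_le_norm _
        _ = |c| * ‖l‖ * ‖x‖ := by
            simp [abs_neg]
        _ ≤ K := by
            rw [hK_def]
            exact mul_le_mul_of_nonneg_left hx' (by positivity)
    have : ‖-(c : ℂ) * l‖ = |c| * ‖l‖ := by
      simp
    rw [this]
    refine mul_le_mul_of_nonneg_left ?_ (by positivity)
    refine mul_le_mul_of_nonneg_left (Real.exp_le_exp.2 ?_) (pow_nonneg hw.le _)
    have := mul_le_mul_of_nonneg_right hre hw.le
    linarith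
  · filter_upwards [ae_restrict_mem measurableSet_Ioi] with w hw x hx
    have h : HasDerivAt (fun x : ℂ => -(c : ℂ) * (w : ℂ) * l * x) (-(c : ℂ) * (w : ℂ) * l) x := by
      simpa using (hasDerivAt_id x).const_mul (-(c : ℂ) * (w : ℂ) * l)
    have h2 := (h.cexp).const_mul
      (Complex.exp (-(A : ℂ) * (w : ℂ) ^ n / n) * (w : ℂ) ^ j)
    refine HasDerivAt.congr_deriv h2 ?_
    ring

lemma phiAux_iteratedDeriv {A : ℝ} (hA : 0 < A) {n : ℕ} (hn : 2 ≤ n)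
    (c : ℝ) (l : ℂ) (m : ℕ) :
    iteratedDeriv m (phiAux A n c l 0) = fun x => (-(c : ℂ) * l) ^ m * phiAux A n c l m x := by
  induction m with
  | zero => funext x; simp
  | succ m ih =>
    funext x
    rw [iteratedDeriv_succ, ih,
      deriv_const_mul _ (phiAux_hasDerivAt hA hn c l m x).differentiableAt,
      (phiAux_hasDerivAt hA hn c l m x).deriv]
    ring

lemma airy_tendsto_top {A : ℝ} (hA : 0 < A) {n : ℕ} (hn : 2 ≤ n) (c : ℝ) (l x : ℂ) :
    Filter.Tendsto (fun w : ℝ =>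
        Complex.exp (-(A : ℂ) * (w : ℂ) ^ n / n) * Complex.exp (-(c : ℂ) * w * l * x))
      Filter.atTop (nhds 0) := by
  obtain ⟨C, hC⟩ := airy_aux_bound hA hn 0 ((-(c : ℂ) * l * x).re)
  apply squeeze_zero_norm' (a := fun w : ℝ => C * Real.exp (-w))
  · filter_upwards [Filter.eventually_gt_atTop 0] with w hw
    have : ‖Complex.exp (-(A : ℂ) * (w : ℂ) ^ n / n) * Complex.exp (-(c : ℂ) * w * l * x)‖
        = ‖Complex.exp (-(A : ℂ) * (w : ℂ) ^ n / n) * (w : ℂ) ^ (0:ℕ) *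
            Complex.exp (-(c : ℂ) * w * l * x)‖ := by rw [pow_zero, mul_one]
    rw [this, airy_integrand_norm A n c l x 0 hw]
    simpa using hC w hw
  · simpa using (Real.tendsto_exp_neg_atTop_nhds_zero).const_mul C

lemma phiAux_ibp {A : ℝ} (hA : 0 < A) {n : ℕ} (hn : 2 ≤ n) (c : ℝ) (l x : ℂ) :
    (A : ℂ) * phiAux A n c l (n - 1) x = 1 - (c : ℂ) * l * x * phiAux A n c l 0 x := by
  have hn0 : (n : ℂ) ≠ 0 := by
    simp only [ne_eq, Nat.cast_eq_zero]; omega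
  set f : ℝ → ℂ := fun w =>
    Complex.exp (-(A : ℂ) * (w : ℂ) ^ n / n) * Complex.exp (-(c : ℂ) * w * l * x) with hf_def
  set f' : ℝ → ℂ := fun w =>
    (-(A : ℂ)) * (Complex.exp (-(A : ℂ) * (w : ℂ) ^ n / n) * (w : ℂ) ^ (n - 1) *
        Complex.exp (-(c : ℂ) * w * l * x))
    + (-(c : ℂ) * l * x) * (Complex.exp (-(A : ℂ) * (w : ℂ) ^ n / n) * (w : ℂ) ^ (0:ℕ) *
        Complex.exp (-(c : ℂ) * w * l * x)) with hf'_def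
  have hderiv : ∀ w : ℝ, HasDerivAt f (f' w) w := by
    intro w
    have h1 : HasDerivAt (fun z : ℂ => -(A : ℂ) * z ^ n / (n : ℂ))
        (-(A : ℂ) * ((n : ℂ) * ((w : ℂ)) ^ (n - 1)) / (n : ℂ)) ((w : ℝ) : ℂ) :=
      ((hasDerivAt_pow n (((w : ℝ)) : ℂ)).const_mul (-(A : ℂ))).div_const (n : ℂ)
    have h1' := (h1.comp_ofReal).cexp
    have h2 : HasDerivAt (fun z : ℂ => -(c : ℂ) * z * l * x) (-(c : ℂ) * l * x) ((w : ℝ) : ℂ) := by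
      simpa using (((hasDerivAt_id (((w : ℝ)) : ℂ)).const_mul (-(c : ℂ))).mul_const l).mul_const x
    have h2' := (h2.comp_ofReal).cexp
    have := h1'.mul h2'
    refine HasDerivAt.congr_deriv this ?_
    rw [hf'_def]
    field_simp
  have Eint1 : IntegrableOn (fun w : ℝ =>
      Complex.exp (-(A : ℂ) * (w : ℂ) ^ n / n) * (w : ℂ) ^ (n - 1) *
        Complex.exp (-(c : ℂ) * w * l * x)) (Ioi 0) :=
    airy_integrand_integrable hA hn c l x (n - 1)
  have Eint0 : IntegrableOn (fun w : ℝ =>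
      Complex.exp (-(A : ℂ) * (w : ℂ) ^ n / n) * (w : ℂ) ^ (0:ℕ) *
        Complex.exp (-(c : ℂ) * w * l * x)) (Ioi 0) :=
    airy_integrand_integrable hA hn c l x 0
  have hfint : IntegrableOn f' (Ioi 0) := (Eint1.const_mul _).add (Eint0.const_mul _)
  have hcont : ContinuousWithinAt f (Ici 0) 0 :=
    Continuous.continuousWithinAt (by rw [hf_def]; fun_prop)
  have hibp := integral_Ioi_of_hasDerivAt_of_tendsto hcont (fun w _ => hderiv w) hfint
    (airy_tendsto_top hA hn c l x)
  have hf0 : f 0 = 1 := by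
    rw [hf_def]
    simp [zero_pow (show n ≠ 0 by omega)]
  rw [hf0] at hibp
  have hsplit : ∫ w in Ioi (0:ℝ), f' w
      = (-(A : ℂ)) * phiAux A n c l (n - 1) x + (-(c : ℂ) * l * x) * phiAux A n c l 0 x := by
    rw [hf'_def]
    rw [integral_add (Eint1.const_mul _) (Eint0.const_mul _), integral_const_mul,
      integral_const_mul]
    rfl
  rw [hsplit] at hibp
  linear_combination -hibp
lemma airy_inner_id (t : ℝ) (z : ℂ) :
    Complex.exp (-z) -
      Complex.exp (-z * (Real.cos t : ℝ)) *
        Complex.cos (z * (Real.sin t : ℝ) - (t : ℝ))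
    = Complex.exp (-z)
      - (Complex.exp ((t : ℂ) * Complex.I))⁻¹ / 2 *
          Complex.exp (-z * (Complex.exp ((t : ℂ) * Complex.I))⁻¹)
      - Complex.exp ((t : ℂ) * Complex.I) / 2 *
          Complex.exp (-z * Complex.exp ((t : ℂ) * Complex.I)) := by
  have hm : Complex.exp ((t : ℂ) * Complex.I)
      = Complex.cos (t : ℂ) + Complex.sin (t : ℂ) * Complex.I := Complex.exp_mul_I _
  have hm' : Complex.exp (-((t : ℂ) * Complex.I))
      = Complex.cos (t : ℂ) - Complex.sin (t : ℂ) * Complex.I := by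
    rw [show -((t : ℂ) * Complex.I) = -(t : ℂ) * Complex.I from by ring, Complex.exp_mul_I,
      Complex.cos_neg, Complex.sin_neg]
    ring
  have hc : Complex.cos (z * Complex.sin (t : ℂ) - (t : ℂ))
      = (Complex.exp ((z * Complex.sin (t : ℂ) - (t : ℂ)) * Complex.I)
          + Complex.exp (-(z * Complex.sin (t : ℂ) - (t : ℂ)) * Complex.I)) / 2 := by
    rw [eq_div_iff (two_ne_zero' ℂ)]
    linear_combination Complex.two_cos (z * Complex.sin (t : ℂ) - (t : ℂ))
  have e3 : Complex.exp ((z * Complex.sin (t : ℂ) - (t : ℂ)) * Complex.I)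
      = Complex.exp (z * Complex.sin (t : ℂ) * Complex.I) *
          (Complex.cos (t : ℂ) - Complex.sin (t : ℂ) * Complex.I) := by
    rw [← hm', ← Complex.exp_add]
    ring_nf
  have e4 : Complex.exp (-(z * Complex.sin (t : ℂ) - (t : ℂ)) * Complex.I)
      = Complex.exp (-(z * Complex.sin (t : ℂ) * Complex.I)) *
          (Complex.cos (t : ℂ) + Complex.sin (t : ℂ) * Complex.I) := by
    rw [← hm, ← Complex.exp_add]
    ring_nf
  have e1 : Complex.exp (-z * (Complex.cos (t : ℂ) - Complex.sin (t : ℂ) * Complex.I))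
      = Complex.exp (-(z * Complex.cos (t : ℂ))) *
          Complex.exp (z * Complex.sin (t : ℂ) * Complex.I) := by
    rw [← Complex.exp_add]
    ring_nf
  have e2 : Complex.exp (-z * (Complex.cos (t : ℂ) + Complex.sin (t : ℂ) * Complex.I))
      = Complex.exp (-(z * Complex.cos (t : ℂ))) *
          Complex.exp (-(z * Complex.sin (t : ℂ) * Complex.I)) := by
    rw [← Complex.exp_add]
    ring_nf
  have e0 : Complex.exp (-z * Complex.cos (t : ℂ))
      = Complex.exp (-(z * Complex.cos (t : ℂ))) := by ring_nf
  rw [Complex.ofReal_cos, Complex.ofReal_sin, ← Complex.exp_neg, hm', hm, hc, e3, e4, e1, e2, e0]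
  ring

theorem airy_type_ode_y_plus
    (n : ℕ) (hn : 2 ≤ n) (c : ℝ) (hc : c ≠ 0)
    (hcase : Odd n ∨ (Even n ∧ c < 0))
    (k : ℕ) (hk1 : 1 ≤ k) (hk2 : k ≤ n / 2)
    (y : ℂ → ℂ)
    (hy : ∀ x : ℂ, y x =
      ∫ w in Ioi (0 : ℝ),
        Complex.exp (-(-(c : ℂ)) ^ (n - 1) * (w : ℂ) ^ n / n) *
          (Complex.exp (-(c : ℂ) * w * x)
            - Complex.exp (-(c : ℂ) * w * x * (Real.cos (2 * k * π / n) : ℝ)) *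
              Complex.cos ((c : ℂ) * w * x * (Real.sin (2 * k * π / n) : ℝ)
                - (2 * k * π / n : ℝ)))) :
    ∀ x : ℂ, iteratedDeriv (n - 1) y x + (c : ℂ) * x * y x = 0 := by
  have hA : 0 < (-c) ^ (n - 1) := by
    rcases hcase with h | ⟨he, hc'⟩
    · have heven : Even (n - 1) := by
        rcases h with ⟨m, hm⟩
        exact ⟨m, by omega⟩
      exact heven.pow_pos (neg_ne_zero.2 hc)
    · exact pow_pos (by linarith) _
  set A : ℝ := (-c) ^ (n - 1) with hA_def
  set t : ℝ := 2 * k * π / n with ht_def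
  set μ : ℂ := Complex.exp ((t : ℂ) * Complex.I) with hμ_def
  have hμ0 : μ ≠ 0 := Complex.exp_ne_zero _
  have hμn : μ ^ n = 1 := by
    rw [hμ_def, ← Complex.exp_nat_mul]
    have hne : (n : ℂ) ≠ 0 := by
      simp only [ne_eq, Nat.cast_eq_zero]; omega
    have : (n : ℂ) * ((t : ℂ) * Complex.I) = ((k : ℤ) : ℂ) * (2 * (π : ℂ) * Complex.I) := by
      rw [ht_def]
      push_cast
      field_simp
    rw [this, Complex.exp_int_mul_two_pi_mul_I]
  have hAc : ((A : ℝ) : ℂ) = (-(c : ℂ)) ^ (n - 1) := by rw [hA_def]; push_cast; ring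
  have hμpow : μ ^ (n - 1) = μ⁻¹ := by
    have h1 : μ ^ (n - 1) * μ = 1 := by
      rw [← pow_succ, Nat.sub_add_cancel (by omega), hμn]
    exact eq_inv_of_mul_eq_one_left h1
  have hμinvpow : (μ⁻¹) ^ (n - 1) = μ := by rw [inv_pow, hμpow, inv_inv]
  have hEq : y = fun x => phiAux A n c 1 0 x - μ⁻¹ / 2 * phiAux A n c μ⁻¹ 0 x
      - μ / 2 * phiAux A n c μ 0 x := by
    funext x
    rw [hy x]
    have hint1 := airy_integrand_integrable hA hn c 1 x 0
    have hint2 := airy_integrand_integrable hA hn c μ⁻¹ x 0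
    have hint3 := airy_integrand_integrable hA hn c μ x 0
    have hpt : ∀ w : ℝ,
        Complex.exp (-(-(c : ℂ)) ^ (n - 1) * (w : ℂ) ^ n / n) *
          (Complex.exp (-(c : ℂ) * w * x)
            - Complex.exp (-(c : ℂ) * w * x * ((Real.cos t : ℝ) : ℂ)) *
              Complex.cos ((c : ℂ) * w * x * ((Real.sin t : ℝ) : ℂ) - ((t : ℝ) : ℂ)))
        = (Complex.exp (-(A : ℂ) * (w : ℂ) ^ n / n) * (w : ℂ) ^ (0 : ℕ) *
              Complex.exp (-(c : ℂ) * w * (1 : ℂ) * x))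
          - μ⁻¹ / 2 * (Complex.exp (-(A : ℂ) * (w : ℂ) ^ n / n) * (w : ℂ) ^ (0 : ℕ) *
              Complex.exp (-(c : ℂ) * w * μ⁻¹ * x))
          - μ / 2 * (Complex.exp (-(A : ℂ) * (w : ℂ) ^ n / n) * (w : ℂ) ^ (0 : ℕ) *
              Complex.exp (-(c : ℂ) * w * μ * x)) := by
      intro w
      have hid := airy_inner_id t ((c : ℂ) * w * x)
      have a1 : -(c : ℂ) * (w : ℂ) * x = -((c : ℂ) * w * x) := by ring
      have b1 : -(c : ℂ) * (w : ℂ) * (1 : ℂ) * x = -((c : ℂ) * w * x) := by ring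
      have b2 : -(c : ℂ) * (w : ℂ) * μ⁻¹ * x = -((c : ℂ) * w * x) * μ⁻¹ := by ring
      have b3 : -(c : ℂ) * (w : ℂ) * μ * x = -((c : ℂ) * w * x) * μ := by ring
      have hAc' : -(-(c : ℂ)) ^ (n - 1) = -((A : ℝ) : ℂ) := by rw [hAc]
      rw [a1, b1, b2, b3, hAc']
      simp only [pow_zero, mul_one]
      rw [hμ_def, hid]
      ring
    rw [show (fun w : ℝ =>
        Complex.exp (-(-(c : ℂ)) ^ (n - 1) * (w : ℂ) ^ n / n) *
          (Complex.exp (-(c : ℂ) * w * x)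
            - Complex.exp (-(c : ℂ) * w * x * ((Real.cos t : ℝ) : ℂ)) *
              Complex.cos ((c : ℂ) * w * x * ((Real.sin t : ℝ) : ℂ) - ((t : ℝ) : ℂ))))
        = fun w : ℝ =>
          (Complex.exp (-(A : ℂ) * (w : ℂ) ^ n / n) * (w : ℂ) ^ (0 : ℕ) *
              Complex.exp (-(c : ℂ) * w * (1 : ℂ) * x))
          - μ⁻¹ / 2 * (Complex.exp (-(A : ℂ) * (w : ℂ) ^ n / n) * (w : ℂ) ^ (0 : ℕ) *
              Complex.exp (-(c : ℂ) * w * μ⁻¹ * x))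
          - μ / 2 * (Complex.exp (-(A : ℂ) * (w : ℂ) ^ n / n) * (w : ℂ) ^ (0 : ℕ) *
              Complex.exp (-(c : ℂ) * w * μ * x)) from funext hpt]
    have key := integral_sub (hint1.sub (hint2.const_mul (μ⁻¹ / 2))) (hint3.const_mul (μ / 2))
    simp only [Pi.sub_apply] at key
    rw [integral_sub hint1 (hint2.const_mul (μ⁻¹ / 2)), integral_const_mul, integral_const_mul] at key
    exact key
  have comb : ∀ m, iteratedDeriv m y = fun x =>
      iteratedDeriv m (phiAux A n c 1 0) x
      - μ⁻¹ / 2 * iteratedDeriv m (phiAux A n c μ⁻¹ 0) x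
      - μ / 2 * iteratedDeriv m (phiAux A n c μ 0) x := by
    intro m
    induction m with
    | zero => simpa [iteratedDeriv_zero] using hEq
    | succ m ih =>
      funext z
      rw [iteratedDeriv_succ, ih]
      have du : DifferentiableAt ℂ (iteratedDeriv m (phiAux A n c 1 0)) z := by
        rw [phiAux_iteratedDeriv hA hn c 1 m]
        exact ((phiAux_hasDerivAt hA hn c 1 m z).differentiableAt).const_mul _
      have dv : DifferentiableAt ℂ (iteratedDeriv m (phiAux A n c μ⁻¹ 0)) z := by
        rw [phiAux_iteratedDeriv hA hn c μ⁻¹ m]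
        exact ((phiAux_hasDerivAt hA hn c μ⁻¹ m z).differentiableAt).const_mul _
      have ds : DifferentiableAt ℂ (iteratedDeriv m (phiAux A n c μ 0)) z := by
        rw [phiAux_iteratedDeriv hA hn c μ m]
        exact ((phiAux_hasDerivAt hA hn c μ m z).differentiableAt).const_mul _
      rw [deriv_fun_sub (du.fun_sub (dv.const_mul _)) (ds.const_mul _),
        deriv_fun_sub du (dv.const_mul _), deriv_const_mul _ dv, deriv_const_mul _ ds]
      simp only [← iteratedDeriv_succ]
  intro x
  have Hu := phiAux_ibp hA hn c 1 x
  have Hv := phiAux_ibp hA hn c μ⁻¹ x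
  have Hs := phiAux_ibp hA hn c μ x
  have hu : μ * μ⁻¹ = 1 := mul_inv_cancel₀ hμ0
  have p1 : (-(c : ℂ) * 1) ^ (n - 1) * phiAux A n c 1 (n - 1) x
      = 1 - (c : ℂ) * 1 * x * phiAux A n c 1 0 x := by
    rw [mul_one, ← hAc]; exact Hu
  have p2 : (-(c : ℂ) * μ⁻¹) ^ (n - 1) * phiAux A n c μ⁻¹ (n - 1) x
      = μ * (1 - (c : ℂ) * μ⁻¹ * x * phiAux A n c μ⁻¹ 0 x) := by
    rw [mul_pow, hμinvpow, ← hAc]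
    linear_combination μ * Hv
  have p3 : (-(c : ℂ) * μ) ^ (n - 1) * phiAux A n c μ (n - 1) x
      = μ⁻¹ * (1 - (c : ℂ) * μ * x * phiAux A n c μ 0 x) := by
    rw [mul_pow, hμpow, ← hAc]
    linear_combination μ⁻¹ * Hs
  rw [comb (n - 1), hEq]
  simp only [phiAux_iteratedDeriv hA hn c 1, phiAux_iteratedDeriv hA hn c μ⁻¹,
    phiAux_iteratedDeriv hA hn c μ]
  linear_combination p1 - μ⁻¹ / 2 * p2 - μ / 2 * p3 +
    (-1 + (c : ℂ) * x * μ⁻¹ * phiAux A n c μ⁻¹ 0 x / 2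
      + (c : ℂ) * x * μ * phiAux A n c μ 0 x / 2) * hu
end

section
/- Let n ≥ 2 be an integer and c a nonzero real number, with n odd or (n even and c < 0), and let k be a natural number with 1 ≤ k ≤ ⌊n/2⌋. Then the function y : ℂ → ℂ defined by y(x) = -∫₀^∞ e^{-(-c)^{n-1} w^n/n - c w x a_k} sin(c w x b_k - 2kπ/n) dw satisfies the ordinary differential equation y^{(n-1)}(x) + c·x·y(x) = 0 for every x ∈ ℂ. -/
open MeasureTheory Real Set
open Filter

section AiryAux

/-- Exponent bound: `-A w^n/n + r w ≤ M - b w²` uniformly. -/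
lemma airy_exp_bound (n : ℕ) (hn : 2 ≤ n) (A : ℝ) (hA : 0 < A) (r : ℝ) :
    ∀ w : ℝ, 0 ≤ w →
      -A * w ^ n / n + r * w ≤
        (|r| + A / (2 * n) + r ^ 2 * n / (2 * A)) + (-(A / (2 * n)) * w ^ 2) := by
  intro w hw
  have hn0 : (0 : ℝ) < n := by positivity
  set b : ℝ := A / (2 * n) with hbdef
  have hb : 0 < b := by positivity
  have hAb : A / n = 2 * b := by rw [hbdef]; field_simp
  have hs : r ^ 2 * n / (2 * A) = r ^ 2 / (4 * b) := by
    rw [hbdef]; field_simp; ring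
  set s : ℝ := r ^ 2 / (4 * b) with hsdef
  have hs4 : 4 * b * s = r ^ 2 := by rw [hsdef]; field_simp
  have hs0 : 0 ≤ s := by positivity
  have key : -A * w ^ n / n = -(2 * b) * w ^ n := by
    rw [← hAb]; ring
  rw [key, hs]
  rcases le_total w 1 with hw1 | hw1
  · have h1 : 0 ≤ (2 * b) * w ^ n := by positivity
    have h2 : r * w ≤ |r| := by
      calc r * w ≤ |r| * w := mul_le_mul_of_nonneg_right (le_abs_self r) hw
        _ ≤ |r| * 1 := mul_le_mul_of_nonneg_left hw1 (abs_nonneg r)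
        _ = |r| := mul_one _
    have hw2 : w ^ 2 ≤ 1 := by nlinarith
    have h3 : b * w ^ 2 ≤ b := by nlinarith
    nlinarith
  · have h2n : w ^ 2 ≤ w ^ n := pow_le_pow_right₀ hw1 hn
    have h1 : (2 * b) * w ^ 2 ≤ (2 * b) * w ^ n :=
      mul_le_mul_of_nonneg_left h2n (by positivity)
    have h2 : 0 ≤ (2 * b * w - r) ^ 2 := sq_nonneg _
    have habs : 0 ≤ |r| := abs_nonneg r
    nlinarith

lemma airy_real_int (n : ℕ) (hn : 2 ≤ n) (A : ℝ) (hA : 0 < A) (j : ℕ) (r : ℝ) :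
    IntegrableOn (fun w : ℝ => w ^ j * Real.exp (-A * w ^ n / n + r * w)) (Ioi (0:ℝ)) := by
  have hn0 : (0 : ℝ) < n := by positivity
  have hb : 0 < A / (2 * n) := by positivity
  set M : ℝ := |r| + A / (2 * n) + r ^ 2 * n / (2 * A) with hM
  have base : IntegrableOn (fun w : ℝ => w ^ j * Real.exp (-(A / (2 * n)) * w ^ 2)) (Ioi 0) := by
    have hjj : (-1 : ℝ) < (j : ℝ) := by
      have : (0:ℝ) ≤ j := Nat.cast_nonneg j
      linarith
    simpa [Real.rpow_natCast] using integrableOn_rpow_mul_exp_neg_mul_sq hb hjj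
  have base' := base.const_mul (Real.exp M)
  refine base'.mono' ?_ ?_
  · exact (Continuous.aestronglyMeasurable (by fun_prop)).restrict
  · filter_upwards [ae_restrict_mem measurableSet_Ioi] with w hw
    have hw0 : (0:ℝ) ≤ w := le_of_lt hw
    have hbd := airy_exp_bound n hn A hA r w hw0
    have h1 : Real.exp (-A * w ^ n / n + r * w)
        ≤ Real.exp M * Real.exp (-(A / (2 * n)) * w ^ 2) := by
      rw [← Real.exp_add]
      exact Real.exp_le_exp.mpr hbd
    have h2 : ‖w ^ j * Real.exp (-A * w ^ n / n + r * w)‖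
        = w ^ j * Real.exp (-A * w ^ n / n + r * w) := by
      rw [norm_eq_abs, abs_of_nonneg (by positivity)]
    rw [h2]
    calc w ^ j * Real.exp (-A * w ^ n / n + r * w)
        ≤ w ^ j * (Real.exp M * Real.exp (-(A / (2 * n)) * w ^ 2)) :=
          mul_le_mul_of_nonneg_left h1 (by positivity)
      _ = Real.exp M * (w ^ j * Real.exp (-(A / (2 * n)) * w ^ 2)) := by ring

noncomputable def airyG (c A : ℝ) (n j : ℕ) (μ x : ℂ) : ℂ :=
  ∫ w in Ioi (0:ℝ),
    (-(c:ℂ) * (w:ℂ) * μ) ^ j *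
      Complex.exp (-(A:ℂ) * (w:ℂ) ^ n / (n:ℂ) - (c:ℂ) * (w:ℂ) * x * μ)

lemma airy_re (c A : ℝ) (n : ℕ) (μ x : ℂ) (w : ℝ) :
    (-(A:ℂ) * (w:ℂ) ^ n / (n:ℂ) - (c:ℂ) * (w:ℂ) * x * μ).re
      = -A * w ^ n / n - c * (x * μ).re * w := by
  have h : -(A:ℂ) * (w:ℂ) ^ n / (n:ℂ) - (c:ℂ) * (w:ℂ) * x * μ
      = ((-A * w ^ n / n : ℝ) : ℂ) + ((-(c * w) : ℝ) : ℂ) * (x * μ) := by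
    push_cast; ring
  rw [h, Complex.add_re, Complex.ofReal_re, Complex.re_ofReal_mul]
  ring

lemma airy_norm (c A : ℝ) (n j : ℕ) (μ x : ℂ) (w : ℝ) (hw : 0 ≤ w) :
    ‖(-(c:ℂ) * (w:ℂ) * μ) ^ j *
        Complex.exp (-(A:ℂ) * (w:ℂ) ^ n / (n:ℂ) - (c:ℂ) * (w:ℂ) * x * μ)‖
      = (|c| * w * ‖μ‖) ^ j * Real.exp (-A * w ^ n / n - c * (x * μ).re * w) := by
  rw [norm_mul, norm_pow, Complex.norm_exp, airy_re]
  congr 2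
  rw [norm_mul, norm_mul, norm_neg, Complex.norm_real, Complex.norm_real,
    Real.norm_eq_abs, Real.norm_eq_abs, abs_of_nonneg hw]

lemma airy_int (n : ℕ) (hn : 2 ≤ n) (A : ℝ) (hA : 0 < A) (c : ℝ) (j : ℕ) (μ x : ℂ) :
    IntegrableOn (fun w : ℝ =>
        (-(c:ℂ) * (w:ℂ) * μ) ^ j *
          Complex.exp (-(A:ℂ) * (w:ℂ) ^ n / (n:ℂ) - (c:ℂ) * (w:ℂ) * x * μ))
      (Ioi (0:ℝ)) := by
  set r : ℝ := |c * (x * μ).re| with hr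
  have base := (airy_real_int n hn A hA j r).const_mul ((|c| * ‖μ‖) ^ j)
  refine base.mono' ?_ ?_
  · exact (Continuous.aestronglyMeasurable (by fun_prop)).restrict
  · filter_upwards [ae_restrict_mem measurableSet_Ioi] with w hw
    have hw0 : (0:ℝ) ≤ w := le_of_lt hw
    rw [airy_norm c A n j μ x w hw0]
    have hE : -A * w ^ n / n - c * (x * μ).re * w ≤ -A * w ^ n / n + r * w := by
      have : -(c * (x * μ).re) * w ≤ r * w := by
        apply mul_le_mul_of_nonneg_right _ hw0
        rw [hr]
        exact (neg_le_abs _)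
      linarith
    calc (|c| * w * ‖μ‖) ^ j * Real.exp (-A * w ^ n / n - c * (x * μ).re * w)
        ≤ (|c| * w * ‖μ‖) ^ j * Real.exp (-A * w ^ n / n + r * w) :=
          mul_le_mul_of_nonneg_left (Real.exp_le_exp.mpr hE) (by positivity)
      _ = (|c| * ‖μ‖) ^ j * (w ^ j * Real.exp (-A * w ^ n / n + r * w)) := by ring

lemma airy_hasDeriv (n : ℕ) (hn : 2 ≤ n) (A : ℝ) (hA : 0 < A) (c : ℝ) (j : ℕ)
    (μ : ℂ) (x₀ : ℂ) :
    HasDerivAt (fun x => airyG c A n j μ x) (airyG c A n (j+1) μ x₀) x₀ := by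
  set r : ℝ := |c| * (‖x₀‖ + 1) * ‖μ‖ with hr
  have hr0 : 0 ≤ r := by positivity
  have main := hasDerivAt_integral_of_dominated_loc_of_deriv_le
    (μ := volume.restrict (Ioi (0:ℝ))) (x₀ := x₀)
    (F := fun (x : ℂ) (w : ℝ) =>
      (-(c:ℂ) * (w:ℂ) * μ) ^ j *
        Complex.exp (-(A:ℂ) * (w:ℂ) ^ n / (n:ℂ) - (c:ℂ) * (w:ℂ) * x * μ))
    (F' := fun (x : ℂ) (w : ℝ) =>
      (-(c:ℂ) * (w:ℂ) * μ) ^ (j+1) *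
        Complex.exp (-(A:ℂ) * (w:ℂ) ^ n / (n:ℂ) - (c:ℂ) * (w:ℂ) * x * μ))
    (bound := fun w : ℝ =>
      (|c| * ‖μ‖) ^ (j+1) * (w ^ (j+1) * Real.exp (-A * w ^ n / n + r * w)))
    (Metric.ball_mem_nhds x₀ one_pos)
    (Eventually.of_forall fun x =>
      (Continuous.aestronglyMeasurable (by fun_prop)).restrict)
    (airy_int n hn A hA c j μ x₀)
    ((Continuous.aestronglyMeasurable (by fun_prop)).restrict)
    ?_ (((airy_real_int n hn A hA (j+1) r).const_mul _)) ?_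
  · exact main.2
  · -- bound
    filter_upwards [ae_restrict_mem measurableSet_Ioi] with w hw
    intro x hx
    have hw0 : (0:ℝ) ≤ w := le_of_lt hw
    rw [airy_norm c A n (j+1) μ x w hw0]
    have hxn : ‖x‖ ≤ ‖x₀‖ + 1 := by
      have h1 : ‖x - x₀‖ < 1 := by
        simpa [dist_eq_norm] using Metric.mem_ball.mp hx
      calc ‖x‖ = ‖x₀ + (x - x₀)‖ := by ring_nf
        _ ≤ ‖x₀‖ + ‖x - x₀‖ := norm_add_le _ _
        _ ≤ ‖x₀‖ + 1 := by linarith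
    have hE : -A * w ^ n / n - c * (x * μ).re * w ≤ -A * w ^ n / n + r * w := by
      have h2 : -(c * (x * μ).re) ≤ r := by
        calc -(c * (x * μ).re) ≤ |c * (x * μ).re| := neg_le_abs _
          _ = |c| * |(x * μ).re| := abs_mul _ _
          _ ≤ |c| * ‖x * μ‖ := by
              apply mul_le_mul_of_nonneg_left (Complex.abs_re_le_norm _) (abs_nonneg c)
          _ = |c| * (‖x‖ * ‖μ‖) := by rw [norm_mul]
          _ ≤ |c| * ((‖x₀‖ + 1) * ‖μ‖) := by
              apply mul_le_mul_of_nonneg_left _ (abs_nonneg c)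
              exact mul_le_mul_of_nonneg_right hxn (norm_nonneg μ)
          _ = r := by rw [hr]; ring
      nlinarith [mul_le_mul_of_nonneg_right h2 hw0]
    calc (|c| * w * ‖μ‖) ^ (j+1) * Real.exp (-A * w ^ n / n - c * (x * μ).re * w)
        ≤ (|c| * w * ‖μ‖) ^ (j+1) * Real.exp (-A * w ^ n / n + r * w) :=
          mul_le_mul_of_nonneg_left (Real.exp_le_exp.mpr hE) (by positivity)
      _ = (|c| * ‖μ‖) ^ (j+1) * (w ^ (j+1) * Real.exp (-A * w ^ n / n + r * w)) := by
          ring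
  · -- differentiability
    filter_upwards [ae_restrict_mem measurableSet_Ioi] with w _
    intro x hx
    have h3 : HasDerivAt (fun x : ℂ => (c:ℂ) * (w:ℂ) * x * μ) ((c:ℂ) * (w:ℂ) * μ) x := by
      simpa using (((hasDerivAt_id x).const_mul ((c:ℂ) * (w:ℂ))).mul_const μ)
    have h4 : HasDerivAt
        (fun x : ℂ => -(A:ℂ) * (w:ℂ) ^ n / (n:ℂ) - (c:ℂ) * (w:ℂ) * x * μ)
        (-((c:ℂ) * (w:ℂ) * μ)) x := h3.const_sub _
    have h5 := (h4.cexp).const_mul ((-(c:ℂ) * (w:ℂ) * μ) ^ j)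
    refine h5.congr_deriv ?_
    rw [pow_succ]
    ring

lemma airy_int0 (n : ℕ) (hn : 2 ≤ n) (A : ℝ) (hA : 0 < A) (c : ℝ) (j : ℕ) (μ x : ℂ) :
    IntegrableOn (fun w : ℝ =>
        ((w:ℂ)) ^ j *
          Complex.exp (-(A:ℂ) * (w:ℂ) ^ n / (n:ℂ) - (c:ℂ) * (w:ℂ) * x * μ))
      (Ioi (0:ℝ)) := by
  set r : ℝ := |c * (x * μ).re| with hr
  have base := airy_real_int n hn A hA j r
  refine base.mono' ?_ ?_
  · exact (Continuous.aestronglyMeasurable (by fun_prop)).restrict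
  · filter_upwards [ae_restrict_mem measurableSet_Ioi] with w hw
    have hw0 : (0:ℝ) ≤ w := le_of_lt hw
    have h6 := airy_norm c A n 0 μ x w hw0
    simp only [pow_zero, one_mul] at h6
    rw [norm_mul, norm_pow, Complex.norm_real, Real.norm_eq_abs, abs_of_nonneg hw0, h6]
    have hE : -A * w ^ n / n - c * (x * μ).re * w ≤ -A * w ^ n / n + r * w := by
      have : -(c * (x * μ).re) * w ≤ r * w :=
        mul_le_mul_of_nonneg_right (neg_le_abs _) hw0
      linarith
    exact mul_le_mul_of_nonneg_left (Real.exp_le_exp.mpr hE) (by positivity)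

lemma airy_tendsto_exp (n : ℕ) (hn : 2 ≤ n) (A : ℝ) (hA : 0 < A) (c : ℝ) (μ x : ℂ) :
    Tendsto (fun w : ℝ =>
        -Complex.exp (-(A:ℂ) * (w:ℂ) ^ n / (n:ℂ) - (c:ℂ) * (w:ℂ) * x * μ))
      atTop (nhds 0) := by
  have hn0 : (0 : ℝ) < n := by positivity
  set r : ℝ := |c * (x * μ).re| with hr
  set b : ℝ := A / (2 * n) with hb'
  have hb : 0 < b := by positivity
  set M : ℝ := |r| + A / (2 * n) + r ^ 2 * n / (2 * A) with hM
  rw [tendsto_zero_iff_norm_tendsto_zero]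
  have hlim : Tendsto (fun w : ℝ => Real.exp M * Real.exp (-b * w ^ 2)) atTop (nhds 0) := by
    have h1 : Tendsto (fun w : ℝ => w ^ 2) atTop atTop := tendsto_pow_atTop two_ne_zero
    have h2 : Tendsto (fun w : ℝ => b * w ^ 2) atTop atTop := h1.const_mul_atTop hb
    have h3 : Tendsto (fun w : ℝ => -b * w ^ 2) atTop atBot :=
      h1.const_mul_atTop_of_neg (by linarith)
    have h4 := Real.tendsto_exp_atBot.comp h3
    have h5 := h4.const_mul (Real.exp M)
    simpa using h5
  apply squeeze_zero' (Eventually.of_forall fun w => norm_nonneg _) _ hlim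
  filter_upwards [eventually_ge_atTop (0:ℝ)] with w hw0
  rw [norm_neg]
  have h6 := airy_norm c A n 0 μ x w hw0
  simp only [pow_zero, one_mul] at h6
  rw [h6]
  have hbd := airy_exp_bound n hn A hA r w hw0
  have hE : -A * w ^ n / n - c * (x * μ).re * w ≤ M + (-b * w ^ 2) := by
    have : -(c * (x * μ).re) * w ≤ r * w :=
      mul_le_mul_of_nonneg_right (neg_le_abs _) hw0
    have h7 : -A * w ^ n / n - c * (x * μ).re * w ≤ -A * w ^ n / n + r * w := by linarith
    calc -A * w ^ n / n - c * (x * μ).re * w ≤ -A * w ^ n / n + r * w := h7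
      _ ≤ M + (-(A / (2*n)) * w ^ 2) := hbd
      _ = M + (-b * w ^ 2) := by rw [hb']
  calc Real.exp (-A * w ^ n / n - c * (x * μ).re * w)
      ≤ Real.exp (M + (-b * w ^ 2)) := Real.exp_le_exp.mpr hE
    _ = Real.exp M * Real.exp (-b * w ^ 2) := Real.exp_add _ _

lemma airy_ibp (n : ℕ) (hn : 2 ≤ n) (A : ℝ) (hA : 0 < A) (c : ℝ)
    (hAc : ((A:ℝ) : ℂ) = (-(c:ℂ)) ^ (n - 1)) (μ x : ℂ) (hμ : μ ^ n = 1) :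
    airyG c A n (n-1) μ x = μ ^ (n-1) - (c:ℂ) * x * airyG c A n 0 μ x := by
  have hn0 : (0 : ℝ) < n := by positivity
  have hnC : (n : ℂ) ≠ 0 := by
    simp only [ne_eq, Nat.cast_eq_zero]; omega
  -- FTC on (0, ∞)
  have hg : ∀ z : ℂ, HasDerivAt
      (fun z : ℂ => -Complex.exp (-(A:ℂ) * z ^ n / (n:ℂ) - (c:ℂ) * z * x * μ))
      (((A:ℂ) * z ^ (n-1) + (c:ℂ) * x * μ) *
        Complex.exp (-(A:ℂ) * z ^ n / (n:ℂ) - (c:ℂ) * z * x * μ)) z := by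
    intro z
    have h1 := hasDerivAt_pow n z
    have h2 := (h1.const_mul (-(A:ℂ))).div_const (n:ℂ)
    have h3 : HasDerivAt (fun z : ℂ => (c:ℂ) * z * x * μ) ((c:ℂ) * x * μ) z := by
      simpa using (((hasDerivAt_id z).const_mul ((c:ℂ))).mul_const x).mul_const μ
    have h4 := h2.sub h3
    have h5 := (h4.cexp).neg
    refine h5.congr_deriv ?_
    have hnn : (-(A:ℂ) * ((n:ℂ) * z ^ (n-1)) / (n:ℂ)) = -(A:ℂ) * z ^ (n-1) := by
      field_simp
    simp only [Pi.sub_apply]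
    rw [hnn]
    ring
  have hderiv : ∀ w ∈ Ioi (0:ℝ), HasDerivAt
      (fun w : ℝ => -Complex.exp (-(A:ℂ) * (w:ℂ) ^ n / (n:ℂ) - (c:ℂ) * (w:ℂ) * x * μ))
      (((A:ℂ) * (w:ℂ) ^ (n-1) + (c:ℂ) * x * μ) *
        Complex.exp (-(A:ℂ) * (w:ℂ) ^ n / (n:ℂ) - (c:ℂ) * (w:ℂ) * x * μ)) w :=
    fun w _ => (hg w).comp_ofReal
  have f'int : IntegrableOn (fun w : ℝ =>
      ((A:ℂ) * (w:ℂ) ^ (n-1) + (c:ℂ) * x * μ) *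
        Complex.exp (-(A:ℂ) * (w:ℂ) ^ n / (n:ℂ) - (c:ℂ) * (w:ℂ) * x * μ)) (Ioi 0) := by
    have i1 := (airy_int0 n hn A hA c (n-1) μ x).const_mul ((A:ℂ))
    have i0 := (airy_int0 n hn A hA c 0 μ x).const_mul ((c:ℂ) * x * μ)
    exact (i1.add i0).congr (Filter.Eventually.of_forall fun w => by
      simp only [Pi.add_apply, pow_zero, one_mul]; ring)
  have hcont : ContinuousWithinAt
      (fun w : ℝ => -Complex.exp (-(A:ℂ) * (w:ℂ) ^ n / (n:ℂ) - (c:ℂ) * (w:ℂ) * x * μ))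
      (Ici 0) 0 := Continuous.continuousWithinAt (by fun_prop)
  have key := integral_Ioi_of_hasDerivAt_of_tendsto hcont hderiv f'int
    (airy_tendsto_exp n hn A hA c μ x)
  have hzero : ((0:ℝ):ℂ) ^ n = 0 := by
    rw [Complex.ofReal_zero]
    exact zero_pow (by omega)
  rw [show (0:ℂ) - (fun w : ℝ =>
      -Complex.exp (-(A:ℂ) * (w:ℂ) ^ n / (n:ℂ) - (c:ℂ) * (w:ℂ) * x * μ)) 0 = 1 by
    simp [hzero, zero_pow (show n ≠ 0 by omega)]] at key
  -- now express airyG (n-1) via key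
  have hA1 : (A:ℂ) * (∫ w in Ioi (0:ℝ), (w:ℂ) ^ (n-1) *
        Complex.exp (-(A:ℂ) * (w:ℂ) ^ n / (n:ℂ) - (c:ℂ) * (w:ℂ) * x * μ))
      + ((c:ℂ) * x * μ) * (∫ w in Ioi (0:ℝ),
        Complex.exp (-(A:ℂ) * (w:ℂ) ^ n / (n:ℂ) - (c:ℂ) * (w:ℂ) * x * μ)) = 1 := by
    rw [← MeasureTheory.integral_const_mul, ← MeasureTheory.integral_const_mul,
      ← MeasureTheory.integral_add
        ((airy_int0 n hn A hA c (n-1) μ x).const_mul ((A:ℂ)))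
        (by simpa [pow_zero, one_mul] using
          (airy_int0 n hn A hA c 0 μ x).const_mul ((c:ℂ) * x * μ))]
    rw [← key]
    congr 1
    ext w
    ring
  have hG1 : airyG c A n (n-1) μ x = ((A:ℂ) * μ ^ (n-1)) * (∫ w in Ioi (0:ℝ), (w:ℂ) ^ (n-1) *
      Complex.exp (-(A:ℂ) * (w:ℂ) ^ n / (n:ℂ) - (c:ℂ) * (w:ℂ) * x * μ)) := by
    rw [airyG, ← MeasureTheory.integral_const_mul]
    congr 1
    ext w
    rw [hAc]
    ring
  have hG0 : airyG c A n 0 μ x = ∫ w in Ioi (0:ℝ),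
      Complex.exp (-(A:ℂ) * (w:ℂ) ^ n / (n:ℂ) - (c:ℂ) * (w:ℂ) * x * μ) := by
    rw [airyG]
    simp only [pow_zero, one_mul]
  have hpow : μ ^ (n-1) * μ = 1 := by
    rw [← pow_succ]
    rw [show n - 1 + 1 = n by omega]
    exact hμ
  rw [hG1, hG0]
  set I1 := ∫ w in Ioi (0:ℝ), (w:ℂ) ^ (n-1) *
      Complex.exp (-(A:ℂ) * (w:ℂ) ^ n / (n:ℂ) - (c:ℂ) * (w:ℂ) * x * μ)
  set I0 := ∫ w in Ioi (0:ℝ),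
      Complex.exp (-(A:ℂ) * (w:ℂ) ^ n / (n:ℂ) - (c:ℂ) * (w:ℂ) * x * μ)
  linear_combination (μ ^ (n-1)) * hA1 - (c:ℂ) * x * I0 * hpow

lemma airy_sin_decomp (P u : ℂ) (θ : ℝ) :
    -(Complex.exp (P - u * (Real.cos θ : ℂ)) *
        Complex.sin (u * (Real.sin θ : ℂ) - (θ : ℂ)))
      = Complex.I/2 *
          (Complex.exp (-((θ:ℂ) * Complex.I)) *
              Complex.exp (P - u * Complex.exp (-((θ:ℂ) * Complex.I)))
            - Complex.exp ((θ:ℂ) * Complex.I) *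
              Complex.exp (P - u * Complex.exp ((θ:ℂ) * Complex.I))) := by
  set T : ℂ := (θ : ℂ)
  set CA : ℂ := ((Real.cos θ : ℝ) : ℂ)
  set CB : ℂ := ((Real.sin θ : ℝ) : ℂ)
  have hzb : Complex.exp (T * Complex.I) = CA + CB * Complex.I := by
    rw [Complex.exp_mul_I, ← Complex.ofReal_cos, ← Complex.ofReal_sin]
  have hza : Complex.exp (-(T * Complex.I)) = CA - CB * Complex.I := by
    rw [show -(T * Complex.I) = (-T) * Complex.I by ring, Complex.exp_mul_I,
      Complex.cos_neg, Complex.sin_neg, ← Complex.ofReal_cos, ← Complex.ofReal_sin]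
    ring
  have h1 : Complex.exp (-(T * Complex.I)) *
      Complex.exp (P - u * Complex.exp (-(T * Complex.I)))
      = Complex.exp ((P - u * CA) + (u * CB - T) * Complex.I) := by
    rw [← Complex.exp_add, hza]
    congr 1
    ring
  have h2 : Complex.exp (T * Complex.I) *
      Complex.exp (P - u * Complex.exp (T * Complex.I))
      = Complex.exp ((P - u * CA) - (u * CB - T) * Complex.I) := by
    rw [← Complex.exp_add, hzb]
    congr 1
    ring
  have h3 : Complex.exp (P - u * CA) * Complex.exp (-(u * CB - T) * Complex.I)
      = Complex.exp ((P - u * CA) - (u * CB - T) * Complex.I) := by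
    rw [← Complex.exp_add]
    congr 1
    ring
  have h4 : Complex.exp (P - u * CA) * Complex.exp ((u * CB - T) * Complex.I)
      = Complex.exp ((P - u * CA) + (u * CB - T) * Complex.I) := by
    rw [← Complex.exp_add]
  rw [Complex.sin, h1, h2]
  linear_combination (Complex.I/2) * h4 - (Complex.I/2) * h3

end AiryAux

theorem airy_type_ode_y_minus
    (n : ℕ) (hn : 2 ≤ n) (c : ℝ) (hc : c ≠ 0)
    (hcase : Odd n ∨ (Even n ∧ c < 0))
    (k : ℕ) (hk1 : 1 ≤ k) (hk2 : k ≤ n / 2)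
    (y : ℂ → ℂ)
    (hy : ∀ x : ℂ, y x =
      -∫ w in Ioi (0 : ℝ),
        Complex.exp (-(-(c : ℂ)) ^ (n - 1) * (w : ℂ) ^ n / n
            - (c : ℂ) * w * x * (Real.cos (2 * k * π / n) : ℝ)) *
          Complex.sin ((c : ℂ) * w * x * (Real.sin (2 * k * π / n) : ℝ)
            - (2 * k * π / n : ℝ))) :
    ∀ x : ℂ, iteratedDeriv (n - 1) y x + (c : ℂ) * x * y x = 0 := by
  set A : ℝ := (-c) ^ (n - 1) with hAdef
  have hApos : 0 < A := by
    rcases hcase with hodd | ⟨heven, hneg⟩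
    · have hev : Even (n - 1) := Nat.Odd.sub_odd hodd odd_one
      exact hev.pow_pos (neg_ne_zero.mpr hc)
    · exact pow_pos (by linarith) _
  have hAc : ((A : ℝ) : ℂ) = (-(c : ℂ)) ^ (n - 1) := by
    rw [hAdef]; push_cast; ring
  have hAc' : -(-(c : ℂ)) ^ (n - 1) = -((A : ℝ) : ℂ) := by rw [hAc]
  set θ : ℝ := 2 * k * π / n with hθdef
  set za : ℂ := Complex.exp (-((θ:ℂ) * Complex.I)) with hzadef
  set zb : ℂ := Complex.exp ((θ:ℂ) * Complex.I) with hzbdef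
  have hnC : (n : ℂ) ≠ 0 := by
    simp only [ne_eq, Nat.cast_eq_zero]; omega
  have hzbn : zb ^ n = 1 := by
    rw [hzbdef, ← Complex.exp_nat_mul]
    have h : (n:ℂ) * ((θ:ℂ) * Complex.I) = ((k:ℤ):ℂ) * (2 * (π:ℂ) * Complex.I) := by
      rw [hθdef]; push_cast; field_simp
    rw [h]
    exact Complex.exp_int_mul_two_pi_mul_I k
  have hzan : za ^ n = 1 := by
    rw [hzadef, ← Complex.exp_nat_mul]
    have h : (n:ℂ) * (-((θ:ℂ) * Complex.I)) = ((-(k:ℤ) : ℤ):ℂ) * (2 * (π:ℂ) * Complex.I) := by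
      rw [hθdef]; push_cast; field_simp
    rw [h]
    exact Complex.exp_int_mul_two_pi_mul_I (-(k:ℤ))
  have hrep : ∀ j : ℕ, iteratedDeriv j y =
      fun x => Complex.I/2 * (za * airyG c A n j za x - zb * airyG c A n j zb x) := by
    intro j
    induction j with
    | zero =>
      funext x
      rw [iteratedDeriv_zero, hy x]
      simp only [hAc']
      rw [← MeasureTheory.integral_neg]
      rw [MeasureTheory.integral_congr_ae (Filter.Eventually.of_forall fun (w : ℝ) =>
        airy_sin_decomp (-((A:ℝ):ℂ) * (w:ℂ) ^ n / (n:ℂ)) ((c:ℂ) * (w:ℂ) * x) θ)]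
      simp only [← hzadef, ← hzbdef]
      have int1 : Integrable (fun w : ℝ => za *
          Complex.exp (-(A:ℂ) * (w:ℂ) ^ n / (n:ℂ) - (c:ℂ) * (w:ℂ) * x * za))
          (volume.restrict (Ioi 0)) := by
        simpa [pow_zero, one_mul] using (airy_int0 n hn A hApos c 0 za x).const_mul za
      have int2 : Integrable (fun w : ℝ => zb *
          Complex.exp (-(A:ℂ) * (w:ℂ) ^ n / (n:ℂ) - (c:ℂ) * (w:ℂ) * x * zb))
          (volume.restrict (Ioi 0)) := by
        simpa [pow_zero, one_mul] using (airy_int0 n hn A hApos c 0 zb x).const_mul zb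
      rw [MeasureTheory.integral_const_mul, MeasureTheory.integral_sub int1 int2,
        MeasureTheory.integral_const_mul, MeasureTheory.integral_const_mul]
      rw [airyG, airyG]
      simp only [pow_zero, one_mul]
    | succ j ih =>
      funext x
      rw [iteratedDeriv_succ, ih]
      have h1 := airy_hasDeriv n hn A hApos c j za x
      have h2 := airy_hasDeriv n hn A hApos c j zb x
      exact (((h1.const_mul za).sub (h2.const_mul zb)).const_mul (Complex.I/2)).deriv
  intro x
  have h1 := congrFun (hrep (n-1)) x
  have h0 := congrFun (hrep 0) x
  rw [iteratedDeriv_zero] at h0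
  rw [h1, h0, airy_ibp n hn A hApos c hAc za x hzan, airy_ibp n hn A hApos c hAc zb x hzbn]
  have ha : za ^ (n-1) * za = 1 := by
    rw [← pow_succ, show n - 1 + 1 = n by omega]; exact hzan
  have hb : zb ^ (n-1) * zb = 1 := by
    rw [← pow_succ, show n - 1 + 1 = n by omega]; exact hzbn
  linear_combination (Complex.I/2) * ha - (Complex.I/2) * hb
end

section
/- Let n ≥ 2 be an even integer, c > 0 a real number, and let k be an integer with 1 ≤ k ≤ n/2 - 1. Then the function y : ℂ → ℂ defined by y(x) = ∫₀^∞ e^{-c^{n-1} w^n/n} ( e^{iπ/n} e^{-c w x e^{iπ/n}} - e^{-c w x a_k} cos(c w x b_k - (2k+1)π/n) ) dw satisfies the ordinary differential equation y^{(n-1)}(x) + c·x·y(x) = 0 for every x ∈ ℂ. -/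
open MeasureTheory Real Set

namespace AiryAuxP

lemma key_exp_bound {n : ℕ} (hn : 2 ≤ n) {A : ℝ} (hA : 0 < A) (s : ℝ) :
    ∃ B : ℝ, 0 ≤ B ∧ ∀ w : ℝ, 0 ≤ w → -A * w ^ n + s * w ≤ B - w := by
  set t : ℝ := |s| + 1 with htdef
  have ht : 0 < t := by positivity
  set M : ℝ := max 1 (t / A) with hMdef
  have hM1 : (1:ℝ) ≤ M := le_max_left _ _
  refine ⟨t * M, by positivity, fun w hw => ?_⟩
  have hst : s + 1 ≤ t := by
    have := le_abs_self s; simp only [htdef]; linarith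
  rcases le_or_gt w M with hwM | hwM
  · have hpow : 0 ≤ A * w ^ n := by positivity
    nlinarith [mul_le_mul_of_nonneg_right hst hw, mul_le_mul_of_nonneg_left hwM ht.le]
  · have hw1 : 1 ≤ w := le_trans hM1 hwM.le
    have hAw : t ≤ A * w := by
      have h1 : t / A ≤ M := le_max_right _ _
      have := (div_le_iff₀ hA).mp (h1.trans hwM.le)
      linarith [this]
    have hpow : w ^ 2 ≤ w ^ n := pow_le_pow_right₀ hw1 hn
    have h2 : t * w ≤ A * w ^ 2 := by nlinarith
    nlinarith [mul_le_mul_of_nonneg_right hst hw, mul_nonneg ht.le (le_trans zero_le_one hM1), mul_pos ht (lt_of_lt_of_le one_pos hM1)]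

lemma integ_pow_exp {n : ℕ} (hn : 2 ≤ n) {A : ℝ} (hA : 0 < A) (j : ℕ) (s : ℝ) :
    IntegrableOn (fun w : ℝ => w ^ j * Real.exp (-A * w ^ n + s * w)) (Ioi 0) := by
  obtain ⟨B, hB0, hB⟩ := key_exp_bound hn hA (s + 1)
  have hint : IntegrableOn (fun w : ℝ => (j.factorial * Real.exp B) * Real.exp (-1 * w)) (Ioi 0) :=
    (exp_neg_integrableOn_Ioi 0 one_pos).const_mul _
  refine hint.mono' (Continuous.aestronglyMeasurable (by fun_prop)).restrict ?_
  rw [ae_restrict_iff' measurableSet_Ioi]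
  filter_upwards with w hw
  have hw0 : (0:ℝ) ≤ w := le_of_lt hw
  have h1 : w ^ j ≤ j.factorial * Real.exp w := by
    have h := Real.pow_div_factorial_le_exp w hw0 j
    have hf : (0:ℝ) < j.factorial := by exact_mod_cast j.factorial_pos
    calc w ^ j = j.factorial * (w ^ j / j.factorial) := by field_simp
      _ ≤ j.factorial * Real.exp w := by
          exact mul_le_mul_of_nonneg_left h hf.le
  have hnorm : ‖w ^ j * Real.exp (-A * w ^ n + s * w)‖ = w ^ j * Real.exp (-A * w ^ n + s * w) := by
    rw [Real.norm_eq_abs, abs_of_nonneg (by positivity)]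
  rw [hnorm]
  calc w ^ j * Real.exp (-A * w ^ n + s * w)
      ≤ (j.factorial * Real.exp w) * Real.exp (-A * w ^ n + s * w) :=
        mul_le_mul_of_nonneg_right h1 (Real.exp_pos _).le
    _ = j.factorial * Real.exp (-A * w ^ n + (s + 1) * w) := by
        rw [mul_assoc, ← Real.exp_add]; ring_nf
    _ ≤ j.factorial * Real.exp (B - w) := by
        have := Real.exp_le_exp.2 (hB w hw0)
        exact mul_le_mul_of_nonneg_left this (by positivity)
    _ = (j.factorial * Real.exp B) * Real.exp (-1 * w) := by
        rw [mul_assoc, ← Real.exp_add]; ring_nf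


noncomputable def Ker (n : ℕ) (c : ℝ) (α x : ℂ) (j : ℕ) (w : ℝ) : ℂ :=
  Complex.exp (-(c:ℂ) ^ (n-1) * (w:ℂ) ^ n / (n:ℂ)) *
    ((-(c:ℂ) * w * α) ^ j * Complex.exp (-(c:ℂ) * w * x * α))

noncomputable def Gi (n : ℕ) (c : ℝ) (α x : ℂ) (j : ℕ) : ℂ := ∫ w in Ioi (0:ℝ), Ker n c α x j w

lemma Ker_cont (n : ℕ) (c : ℝ) (α x : ℂ) (j : ℕ) : Continuous (Ker n c α x j) := by
  unfold Ker; fun_prop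

lemma EE_norm_le {n : ℕ} {c : ℝ} (hc : 0 < c) {α : ℂ} (hα : ‖α‖ = 1)
    {x : ℂ} {R : ℝ} (hx : ‖x‖ ≤ R) {w : ℝ} (hw : 0 ≤ w) :
    ‖Complex.exp (-(c:ℂ) ^ (n-1) * (w:ℂ) ^ n / (n:ℂ)) * Complex.exp (-(c:ℂ) * w * x * α)‖
      ≤ Real.exp (-(c ^ (n-1) / n) * w ^ n + (c * R) * w) := by
  have h1 : Complex.exp (-(c:ℂ) ^ (n-1) * (w:ℂ) ^ n / (n:ℂ))
      = ((Real.exp (-(c ^ (n-1) * w ^ n / n)) : ℝ) : ℂ) := by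
    rw [Complex.ofReal_exp]; congr 1; push_cast; ring
  have h2 : ‖Complex.exp (-(c:ℂ) * w * x * α)‖ ≤ Real.exp ((c * R) * w) := by
    rw [Complex.norm_exp]
    apply Real.exp_le_exp.2
    calc (-(c:ℂ) * w * x * α).re ≤ ‖(-(c:ℂ) * w * x * α)‖ := Complex.re_le_norm _
      _ = c * w * ‖x‖ := by
          simp only [norm_mul, norm_neg, Complex.norm_real, Real.norm_eq_abs, hα, mul_one,
            abs_of_nonneg hc.le, abs_of_nonneg hw]
      _ ≤ (c * R) * w := by
          rw [mul_assoc, mul_comm w (‖x‖), ← mul_assoc]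
          exact mul_le_mul_of_nonneg_right (mul_le_mul_of_nonneg_left hx hc.le) hw
  rw [norm_mul, h1, Complex.norm_real, Real.norm_eq_abs, abs_of_nonneg (Real.exp_pos _).le]
  calc Real.exp (-(c ^ (n-1) * w ^ n / n)) * ‖Complex.exp (-(c:ℂ) * w * x * α)‖
      ≤ Real.exp (-(c ^ (n-1) * w ^ n / n)) * Real.exp ((c * R) * w) :=
        mul_le_mul_of_nonneg_left h2 (Real.exp_pos _).le
    _ = Real.exp (-(c ^ (n-1) / n) * w ^ n + (c * R) * w) := by
        rw [← Real.exp_add]; ring_nf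

lemma EE_int {n : ℕ} (hn : 2 ≤ n) {c : ℝ} (hc : 0 < c) {α : ℂ} (hα : ‖α‖ = 1)
    (x : ℂ) (j : ℕ) :
    IntegrableOn (fun w : ℝ => (w:ℂ) ^ j *
      (Complex.exp (-(c:ℂ) ^ (n-1) * (w:ℂ) ^ n / (n:ℂ)) * Complex.exp (-(c:ℂ) * w * x * α)))
      (Ioi 0) := by
  have hA : 0 < c ^ (n-1) / n := by
    have h0 : (0:ℝ) < n := by exact_mod_cast (by omega : 0 < n)
    positivity
  refine (AiryAuxP.integ_pow_exp hn hA j (c * ‖x‖)).mono'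
    (Continuous.aestronglyMeasurable (by fun_prop)).restrict ?_
  rw [ae_restrict_iff' measurableSet_Ioi]
  filter_upwards with w hw
  rw [norm_mul, norm_pow, Complex.norm_real, Real.norm_eq_abs, abs_of_nonneg hw.le]
  exact mul_le_mul_of_nonneg_left (EE_norm_le hc hα le_rfl hw.le) (pow_nonneg hw.le j)

lemma Ker_eq (n : ℕ) (c : ℝ) (α x : ℂ) (j : ℕ) :
    Ker n c α x j = fun w : ℝ => (-(c:ℂ) * α) ^ j * ((w:ℂ) ^ j *
      (Complex.exp (-(c:ℂ) ^ (n-1) * (w:ℂ) ^ n / (n:ℂ)) * Complex.exp (-(c:ℂ) * w * x * α))) := by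
  funext w; unfold Ker; ring

lemma Ker_integrableOn {n : ℕ} (hn : 2 ≤ n) {c : ℝ} (hc : 0 < c) {α : ℂ}
    (hα : ‖α‖ = 1) (x : ℂ) (j : ℕ) :
    IntegrableOn (Ker n c α x j) (Ioi 0) := by
  rw [Ker_eq]
  exact (EE_int hn hc hα x j).const_mul _

lemma norm_Ker_le {n : ℕ} {c : ℝ} (hc : 0 < c) {α : ℂ} (hα : ‖α‖ = 1)
    {x : ℂ} {R : ℝ} (hx : ‖x‖ ≤ R) (j : ℕ) {w : ℝ} (hw : 0 ≤ w) :
    ‖Ker n c α x j w‖ ≤ c ^ j * (w ^ j * Real.exp (-(c ^ (n-1) / n) * w ^ n + (c * R) * w)) := by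
  rw [Ker_eq]
  simp only [norm_mul, norm_pow, norm_neg, Complex.norm_real, Real.norm_eq_abs,
    hα, mul_one, abs_of_nonneg hc.le, abs_of_nonneg hw]
  have h := EE_norm_le (n := n) hc hα hx hw
  rw [norm_mul] at h
  exact mul_le_mul_of_nonneg_left (mul_le_mul_of_nonneg_left h (pow_nonneg hw j))
    (pow_nonneg hc.le j)

lemma Ker_hasDerivAt (n : ℕ) (c : ℝ) (α : ℂ) (j : ℕ) (w : ℝ) (x : ℂ) :
    HasDerivAt (fun x => Ker n c α x j w) (Ker n c α x (j+1) w) x := by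
  have h0 : HasDerivAt (fun x : ℂ => -(c:ℂ) * w * x * α) (-(c:ℂ) * w * α) x := by
    simpa using ((hasDerivAt_id x).const_mul (-(c:ℂ) * (w:ℂ))).mul_const α
  have h1 := h0.cexp
  have h2 := (h1.const_mul ((-(c:ℂ) * w * α) ^ j)).const_mul
    (Complex.exp (-(c:ℂ) ^ (n-1) * (w:ℂ) ^ n / (n:ℂ)))
  unfold Ker
  exact h2.congr_deriv (by rw [pow_succ]; ring)

lemma Gi_hasDerivAt {n : ℕ} (hn : 2 ≤ n) {c : ℝ} (hc : 0 < c) {α : ℂ}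
    (hα : ‖α‖ = 1) (x : ℂ) (j : ℕ) :
    HasDerivAt (fun x => Gi n c α x j) (Gi n c α x (j+1)) x := by
  have hA : 0 < c ^ (n-1) / n := by
    have h0 : (0:ℝ) < n := by exact_mod_cast (by omega : 0 < n)
    positivity
  have bint : IntegrableOn (fun w : ℝ => c ^ (j+1) *
      (w ^ (j+1) * Real.exp (-(c ^ (n-1) / n) * w ^ n + (c * (‖x‖ + 1)) * w)))
      (Ioi 0) :=
    (AiryAuxP.integ_pow_exp hn hA (j+1) (c * (‖x‖ + 1))).const_mul _
  have key := hasDerivAt_integral_of_dominated_loc_of_deriv_le (𝕜 := ℂ)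
    (F := fun x (w : ℝ) => Ker n c α x j w) (F' := fun x (w : ℝ) => Ker n c α x (j+1) w)
    (x₀ := x)
    (bound := fun w : ℝ => c ^ (j+1) *
      (w ^ (j+1) * Real.exp (-(c ^ (n-1) / n) * w ^ n + (c * (‖x‖ + 1)) * w)))
    (Metric.ball_mem_nhds x one_pos)
    (Filter.Eventually.of_forall fun x' => (Ker_cont n c α x' j).aestronglyMeasurable.restrict)
    (Ker_integrableOn hn hc hα x j)
    ((Ker_cont n c α x (j+1)).aestronglyMeasurable.restrict)
    ?_ bint ?_
  · exact key.2
  · rw [ae_restrict_iff' measurableSet_Ioi]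
    filter_upwards with w hw
    intro x' hx'
    have hxx : ‖x'‖ ≤ ‖x‖ + 1 := by
      have h := mem_ball_iff_norm.mp hx'
      calc ‖x'‖ = ‖x' - x + x‖ := by rw [sub_add_cancel]
        _ ≤ ‖x' - x‖ + ‖x‖ := norm_add_le _ _
        _ ≤ ‖x‖ + 1 := by
            linarith [h.le]
    exact norm_Ker_le hc hα hxx (j+1) hw.le
  · rw [ae_restrict_iff' measurableSet_Ioi]
    filter_upwards with w _
    intro x' _
    exact Ker_hasDerivAt n c α j w x'

lemma Gi_iter {n : ℕ} (hn : 2 ≤ n) {c : ℝ} (hc : 0 < c) {α₁ α₂ α₃ : ℂ}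
    (h₁ : ‖α₁‖ = 1) (h₂ : ‖α₂‖ = 1) (h₃ : ‖α₃‖ = 1)
    (c₁ c₂ c₃ : ℂ) (y : ℂ → ℂ)
    (hy : ∀ x, y x = c₁ * Gi n c α₁ x 0 + c₂ * Gi n c α₂ x 0 + c₃ * Gi n c α₃ x 0) :
    ∀ (m : ℕ) (x : ℂ), iteratedDeriv m y x
      = c₁ * Gi n c α₁ x m + c₂ * Gi n c α₂ x m + c₃ * Gi n c α₃ x m := by
  intro m
  induction m with
  | zero => intro x; simpa [iteratedDeriv_zero] using hy x
  | succ m ih =>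
    intro x
    rw [iteratedDeriv_succ]
    have hfe : iteratedDeriv m y = fun x =>
        c₁ * Gi n c α₁ x m + c₂ * Gi n c α₂ x m + c₃ * Gi n c α₃ x m := funext ih
    rw [hfe]
    exact ((((Gi_hasDerivAt hn hc h₁ x m).const_mul c₁).add
      ((Gi_hasDerivAt hn hc h₂ x m).const_mul c₂)).add
      ((Gi_hasDerivAt hn hc h₃ x m).const_mul c₃)).deriv

lemma Gi_ode {n : ℕ} (hn : 2 ≤ n) (hne : Even n) {c : ℝ} (hc : 0 < c) {α : ℂ}
    (hα : ‖α‖ = 1) (hαn : α ^ n = -1) (x : ℂ) :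
    α * Gi n c α x (n-1) + (c:ℂ) * x * (α * Gi n c α x 0) = 1 := by
  have hA : 0 < c ^ (n-1) / n := by
    have h0 : (0:ℝ) < n := by exact_mod_cast (by omega : 0 < n)
    positivity
  have hn0 : (n:ℂ) ≠ 0 := Nat.cast_ne_zero.2 (by omega)
  -- derivative of the kernel in w
  have hderiv : ∀ w : ℝ, HasDerivAt
      (fun w : ℝ => Complex.exp (-(c:ℂ) ^ (n-1) * (w:ℂ) ^ n / (n:ℂ)) *
        Complex.exp (-(c:ℂ) * w * x * α))
      (-(c:ℂ) ^ (n-1) * ((w:ℂ) ^ (n-1) *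
          (Complex.exp (-(c:ℂ) ^ (n-1) * (w:ℂ) ^ n / (n:ℂ)) * Complex.exp (-(c:ℂ) * w * x * α)))
        + (-((c:ℂ) * x * α)) *
          (Complex.exp (-(c:ℂ) ^ (n-1) * (w:ℂ) ^ n / (n:ℂ)) * Complex.exp (-(c:ℂ) * w * x * α))) w := by
    intro w
    have hfe : (fun z : ℂ => (-(c:ℂ) ^ (n-1) / (n:ℂ)) * z ^ n)
        = fun z : ℂ => -(c:ℂ) ^ (n-1) * z ^ n / (n:ℂ) := by
      funext z; ring
    have hg : HasDerivAt (fun z : ℂ => -(c:ℂ) ^ (n-1) * z ^ n / (n:ℂ))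
        (-(c:ℂ) ^ (n-1) * (w:ℂ) ^ (n-1)) ((w:ℝ):ℂ) := by
      have h := (hasDerivAt_pow n ((w:ℝ):ℂ)).const_mul (-(c:ℂ) ^ (n-1) / (n:ℂ))
      rw [hfe] at h
      refine h.congr_deriv ?_
      field_simp
    have hh : HasDerivAt (fun z : ℂ => -(c:ℂ) * z * x * α) (-((c:ℂ) * x * α)) ((w:ℝ):ℂ) := by
      have h := (((hasDerivAt_id ((w:ℝ):ℂ)).const_mul (-(c:ℂ))).mul_const x).mul_const α
      refine h.congr_deriv ?_
      ring
    have hF := (hg.cexp.mul hh.cexp).comp_ofReal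
    exact hF.congr_deriv (by ring)
  -- integrability of the derivative
  have h00 := (EE_int hn hc hα x 0).const_mul (-((c:ℂ) * x * α))
  simp only [pow_zero, one_mul] at h00
  have hfint : IntegrableOn (fun w : ℝ =>
      -(c:ℂ) ^ (n-1) * ((w:ℂ) ^ (n-1) *
          (Complex.exp (-(c:ℂ) ^ (n-1) * (w:ℂ) ^ n / (n:ℂ)) * Complex.exp (-(c:ℂ) * w * x * α)))
        + (-((c:ℂ) * x * α)) *
          (Complex.exp (-(c:ℂ) ^ (n-1) * (w:ℂ) ^ n / (n:ℂ)) * Complex.exp (-(c:ℂ) * w * x * α)))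
      (Ioi 0) :=
    ((EE_int hn hc hα x (n-1)).const_mul (-(c:ℂ) ^ (n-1))).add h00
  -- decay at infinity
  obtain ⟨B, hB0, hB⟩ := AiryAuxP.key_exp_bound hn hA (c * ‖x‖)
  have htend : Filter.Tendsto
      (fun w : ℝ => Complex.exp (-(c:ℂ) ^ (n-1) * (w:ℂ) ^ n / (n:ℂ)) *
        Complex.exp (-(c:ℂ) * w * x * α)) Filter.atTop (nhds 0) := by
    apply squeeze_zero_norm' (a := fun w : ℝ => Real.exp B * Real.exp (-w))
    · filter_upwards [Filter.eventually_ge_atTop (0:ℝ)] with w hw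
      calc ‖Complex.exp (-(c:ℂ) ^ (n-1) * (w:ℂ) ^ n / (n:ℂ)) * Complex.exp (-(c:ℂ) * w * x * α)‖
          ≤ Real.exp (-(c ^ (n-1) / n) * w ^ n + (c * ‖x‖) * w) :=
            EE_norm_le hc hα le_rfl hw
        _ ≤ Real.exp (B - w) := Real.exp_le_exp.2 (hB w hw)
        _ = Real.exp B * Real.exp (-w) := by rw [← Real.exp_add]; ring_nf
    · simpa using Real.tendsto_exp_neg_atTop_nhds_zero.const_mul (Real.exp B)
  -- continuity at 0
  have hcont : ContinuousWithinAt
      (fun w : ℝ => Complex.exp (-(c:ℂ) ^ (n-1) * (w:ℂ) ^ n / (n:ℂ)) *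
        Complex.exp (-(c:ℂ) * w * x * α)) (Ici (0:ℝ)) 0 :=
    Continuous.continuousWithinAt (by fun_prop)
  -- integration by parts
  have hibp := integral_Ioi_of_hasDerivAt_of_tendsto hcont (fun w _ => hderiv w) hfint htend
  have hf0 : Complex.exp (-(c:ℂ) ^ (n-1) * ((0:ℝ):ℂ) ^ n / (n:ℂ)) *
      Complex.exp (-(c:ℂ) * ((0:ℝ):ℂ) * x * α) = 1 := by
    simp [zero_pow (by omega : n ≠ 0)]
  rw [hf0] at hibp
  rw [MeasureTheory.integral_add ((EE_int hn hc hα x (n-1)).const_mul (-(c:ℂ) ^ (n-1))) h00,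
    MeasureTheory.integral_const_mul, MeasureTheory.integral_const_mul] at hibp
  -- express Gi in terms of the plain integrals
  have hGrel : ∀ j : ℕ, Gi n c α x j = (-(c:ℂ) * α) ^ j * ∫ w in Ioi (0:ℝ), (w:ℂ) ^ j *
      (Complex.exp (-(c:ℂ) ^ (n-1) * (w:ℂ) ^ n / (n:ℂ)) * Complex.exp (-(c:ℂ) * w * x * α)) := by
    intro j
    unfold Gi
    rw [Ker_eq]
    exact MeasureTheory.integral_const_mul _ _
  rw [hGrel (n-1), hGrel 0]
  simp only [pow_zero, one_mul]
  -- algebraic identity for the power of α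
  have hpow : α * (-(c:ℂ) * α) ^ (n-1) = (c:ℂ) ^ (n-1) := by
    have h1 : (-(c:ℂ) * α) ^ (n-1) = (-1:ℂ) ^ (n-1) * ((c:ℂ) ^ (n-1) * α ^ (n-1)) := by
      rw [show -(c:ℂ) * α = (-1) * ((c:ℂ) * α) by ring, mul_pow, mul_pow]
    have h2 : α ^ (n-1) * α = -1 := by
      rw [← pow_succ, show n-1+1 = n by omega, hαn]
    have h3 : (-1:ℂ) ^ (n-1) * (-1:ℂ) = 1 := by
      rw [show ((-1:ℂ) ^ (n-1) * (-1:ℂ)) = (-1:ℂ) ^ (n-1+1) by rw [pow_succ],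
        show n-1+1 = n by omega]
      exact hne.neg_one_pow
    calc α * (-(c:ℂ) * α) ^ (n-1)
        = (-1:ℂ) ^ (n-1) * (c:ℂ) ^ (n-1) * (α ^ (n-1) * α) := by rw [h1]; ring
      _ = (-1:ℂ) ^ (n-1) * (c:ℂ) ^ (n-1) * (-1) := by rw [h2]
      _ = (c:ℂ) ^ (n-1) := by
          rw [show (-1:ℂ) ^ (n-1) * (c:ℂ) ^ (n-1) * (-1) = (c:ℂ) ^ (n-1) * ((-1:ℂ) ^ (n-1) * (-1))
            by ring, h3, mul_one]
  linear_combination (∫ w in Ioi (0:ℝ), (w:ℂ) ^ (n-1) *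
      (Complex.exp (-(c:ℂ) ^ (n-1) * (w:ℂ) ^ n / (n:ℂ)) * Complex.exp (-(c:ℂ) * w * x * α))) * hpow
    - hibp

lemma cos_split (c' w x : ℂ) (t : ℝ) :
    Complex.exp (-c' * w * x * ((Real.cos t : ℝ) : ℂ)) *
      Complex.cos (c' * w * x * ((Real.sin t : ℝ) : ℂ) - (t:ℂ)) =
    Complex.exp ((t:ℂ) * Complex.I) *
        Complex.exp (-c' * w * x * Complex.exp ((t:ℂ) * Complex.I)) / 2 +
      Complex.exp (-((t:ℂ) * Complex.I)) *
        Complex.exp (-c' * w * x * Complex.exp (-((t:ℂ) * Complex.I))) / 2 := by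
  have e1 : Complex.exp ((t:ℂ) * Complex.I)
      = ((Real.cos t : ℝ):ℂ) + ((Real.sin t : ℝ):ℂ) * Complex.I := by
    rw [Complex.exp_mul_I, ← Complex.ofReal_cos, ← Complex.ofReal_sin]
  have e2 : Complex.exp (-((t:ℂ) * Complex.I))
      = ((Real.cos t : ℝ):ℂ) - ((Real.sin t : ℝ):ℂ) * Complex.I := by
    rw [show -((t:ℂ) * Complex.I) = ((-t : ℝ):ℂ) * Complex.I by push_cast; ring,
      Complex.exp_mul_I, ← Complex.ofReal_cos, ← Complex.ofReal_sin,
      Real.cos_neg, Real.sin_neg]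
    push_cast
    ring
  have hA : Complex.exp (-c' * w * x * ((Real.cos t : ℝ):ℂ)) *
      Complex.exp ((c' * w * x * ((Real.sin t : ℝ):ℂ) - (t:ℂ)) * Complex.I)
      = Complex.exp (-((t:ℂ) * Complex.I)) *
        Complex.exp (-c' * w * x * Complex.exp (-((t:ℂ) * Complex.I))) := by
    rw [← Complex.exp_add, ← Complex.exp_add, e2]
    congr 1
    ring
  have hB : Complex.exp (-c' * w * x * ((Real.cos t : ℝ):ℂ)) *
      Complex.exp (-(c' * w * x * ((Real.sin t : ℝ):ℂ) - (t:ℂ)) * Complex.I)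
      = Complex.exp ((t:ℂ) * Complex.I) *
        Complex.exp (-c' * w * x * Complex.exp ((t:ℂ) * Complex.I)) := by
    rw [← Complex.exp_add, ← Complex.exp_add, e1]
    congr 1
    ring
  rw [Complex.cos]
  linear_combination hA / 2 + hB / 2

lemma final_combo {n : ℕ} (hn : 2 ≤ n) (hne : Even n) {c : ℝ} (hc : 0 < c)
    (α₁ α₂ α₃ : ℂ) (h₁ : ‖α₁‖ = 1) (h₂ : ‖α₂‖ = 1)
    (h₃ : ‖α₃‖ = 1)
    (hp₁ : α₁ ^ n = -1) (hp₂ : α₂ ^ n = -1) (hp₃ : α₃ ^ n = -1)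
    (y : ℂ → ℂ)
    (hy : ∀ x, y x = α₁ * Gi n c α₁ x 0 + (-α₂/2) * Gi n c α₂ x 0 + (-α₃/2) * Gi n c α₃ x 0)
    (x : ℂ) : iteratedDeriv (n-1) y x + (c:ℂ) * x * y x = 0 := by
  have hit := Gi_iter hn hc h₁ h₂ h₃ α₁ (-α₂/2) (-α₃/2) y hy (n-1) x
  have e₁ := Gi_ode hn hne hc h₁ hp₁ x
  have e₂ := Gi_ode hn hne hc h₂ hp₂ x
  have e₃ := Gi_ode hn hne hc h₃ hp₃ x
  rw [hit, hy x]
  linear_combination e₁ - e₂/2 - e₃/2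

end AiryAuxP

open AiryAuxP in
theorem airy_type_ode_y_plus_even
    (n : ℕ) (hn : 2 ≤ n) (hne : Even n) (c : ℝ) (hc : 0 < c)
    (k : ℕ) (hk1 : 1 ≤ k) (hk2 : k ≤ n / 2 - 1)
    (y : ℂ → ℂ)
    (hy : ∀ x : ℂ, y x =
      ∫ w in Ioi (0 : ℝ),
        Complex.exp (-(c : ℂ) ^ (n - 1) * (w : ℂ) ^ n / n) *
          (Complex.exp (Complex.I * π / n) *
              Complex.exp (-(c : ℂ) * w * x * Complex.exp (Complex.I * π / n))
            - Complex.exp (-(c : ℂ) * w * x * (Real.cos ((2 * k + 1) * π / n) : ℝ)) *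
              Complex.cos ((c : ℂ) * w * x * (Real.sin ((2 * k + 1) * π / n) : ℝ)
                - ((2 * k + 1) * π / n : ℝ)))) :
    ∀ x : ℂ, iteratedDeriv (n - 1) y x + (c : ℂ) * x * y x = 0 := by
  have hn0 : (n:ℝ) ≠ 0 := Nat.cast_ne_zero.2 (by omega)
  have hn0c : (n:ℂ) ≠ 0 := Nat.cast_ne_zero.2 (by omega)
  set t : ℝ := (2 * (k:ℝ) + 1) * π / (n:ℝ) with htdef
  have habsβ : ‖(Complex.exp (Complex.I * (π:ℂ) / (n:ℂ)))‖ = 1 := by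
    rw [show Complex.I * (π:ℂ) / (n:ℂ) = ((π / n : ℝ):ℂ) * Complex.I by push_cast; ring]
    exact Complex.norm_exp_ofReal_mul_I _
  have hpowβ : (Complex.exp (Complex.I * (π:ℂ) / (n:ℂ))) ^ n = -1 := by
    rw [← Complex.exp_nat_mul,
      show (n:ℂ) * (Complex.I * (π:ℂ) / (n:ℂ)) = (π:ℂ) * Complex.I by field_simp,
      Complex.exp_pi_mul_I]
  have habsγ : ‖(Complex.exp ((t:ℂ) * Complex.I))‖ = 1 :=
    Complex.norm_exp_ofReal_mul_I t
  have hnt : (n:ℝ) * t = (2 * (k:ℝ) + 1) * π := by rw [htdef]; field_simp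
  have hodd : Odd (2 * k + 1) := ⟨k, by ring⟩
  have hpowγ : (Complex.exp ((t:ℂ) * Complex.I)) ^ n = -1 := by
    rw [← Complex.exp_nat_mul,
      show (n:ℂ) * ((t:ℂ) * Complex.I) = (((n:ℝ) * t : ℝ):ℂ) * Complex.I by push_cast; ring,
      hnt,
      show (((2 * (k:ℝ) + 1) * π : ℝ):ℂ) * Complex.I
        = ((2 * k + 1 : ℕ):ℂ) * ((π:ℂ) * Complex.I) by push_cast; ring,
      Complex.exp_nat_mul, Complex.exp_pi_mul_I]
    exact Odd.neg_one_pow hodd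
  have habsδ : ‖(Complex.exp (-((t:ℂ) * Complex.I)))‖ = 1 := by
    rw [show -((t:ℂ) * Complex.I) = ((-t : ℝ):ℂ) * Complex.I by push_cast; ring]
    exact Complex.norm_exp_ofReal_mul_I _
  have hpowδ : (Complex.exp (-((t:ℂ) * Complex.I))) ^ n = -1 := by
    rw [← Complex.exp_nat_mul,
      show (n:ℂ) * (-((t:ℂ) * Complex.I)) = -((((n:ℝ) * t : ℝ):ℂ) * Complex.I) by push_cast; ring,
      hnt,
      show -((((2 * (k:ℝ) + 1) * π : ℝ):ℂ) * Complex.I)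
        = -(((2 * k + 1 : ℕ):ℂ) * ((π:ℂ) * Complex.I)) by push_cast; ring,
      Complex.exp_neg, Complex.exp_nat_mul, Complex.exp_pi_mul_I, Odd.neg_one_pow hodd]
    norm_num
  have hy2 : ∀ x : ℂ, y x =
      (Complex.exp (Complex.I * (π:ℂ) / (n:ℂ))) *
          Gi n c (Complex.exp (Complex.I * (π:ℂ) / (n:ℂ))) x 0
        + (-(Complex.exp ((t:ℂ) * Complex.I))/2) *
          Gi n c (Complex.exp ((t:ℂ) * Complex.I)) x 0
        + (-(Complex.exp (-((t:ℂ) * Complex.I)))/2) *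
          Gi n c (Complex.exp (-((t:ℂ) * Complex.I))) x 0 := by
    intro x
    rw [hy x]
    have hI1 := (Ker_integrableOn hn hc habsβ x 0).const_mul
      (Complex.exp (Complex.I * (π:ℂ) / (n:ℂ)))
    have hI2 := (Ker_integrableOn hn hc habsγ x 0).const_mul
      (-(Complex.exp ((t:ℂ) * Complex.I))/2)
    have hI3 := (Ker_integrableOn hn hc habsδ x 0).const_mul
      (-(Complex.exp (-((t:ℂ) * Complex.I)))/2)
    have hptw : EqOn
        (fun w : ℝ =>
          Complex.exp (-(c : ℂ) ^ (n - 1) * (w : ℂ) ^ n / n) *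
            (Complex.exp (Complex.I * π / n) *
                Complex.exp (-(c : ℂ) * w * x * Complex.exp (Complex.I * π / n))
              - Complex.exp (-(c : ℂ) * w * x * (Real.cos t : ℝ)) *
                Complex.cos ((c : ℂ) * w * x * (Real.sin t : ℝ) - (t : ℝ))))
        (fun w : ℝ =>
          (Complex.exp (Complex.I * (π:ℂ) / (n:ℂ))) *
              Ker n c (Complex.exp (Complex.I * (π:ℂ) / (n:ℂ))) x 0 w
            + ((-(Complex.exp ((t:ℂ) * Complex.I))/2) *
                Ker n c (Complex.exp ((t:ℂ) * Complex.I)) x 0 w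
              + (-(Complex.exp (-((t:ℂ) * Complex.I)))/2) *
                Ker n c (Complex.exp (-((t:ℂ) * Complex.I))) x 0 w))
        (Ioi 0) := by
      intro w _
      simp only [Ker, pow_zero, one_mul]
      have h := cos_split (c:ℂ) (w:ℂ) x t
      linear_combination (-(Complex.exp (-(c:ℂ) ^ (n - 1) * (w:ℂ) ^ n / (n:ℂ)))) * h
    have hI23 : Integrable (fun w : ℝ =>
        (-(Complex.exp ((t:ℂ) * Complex.I))/2) *
            Ker n c (Complex.exp ((t:ℂ) * Complex.I)) x 0 w
          + (-(Complex.exp (-((t:ℂ) * Complex.I)))/2) *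
            Ker n c (Complex.exp (-((t:ℂ) * Complex.I))) x 0 w)
        (volume.restrict (Ioi 0)) := by exact hI2.add hI3
    rw [MeasureTheory.setIntegral_congr_fun measurableSet_Ioi hptw]
    rw [MeasureTheory.integral_add hI1 hI23, MeasureTheory.integral_add hI2 hI3,
      MeasureTheory.integral_const_mul, MeasureTheory.integral_const_mul,
      MeasureTheory.integral_const_mul]
    simp only [Gi]
    ring
  intro x
  exact final_combo hn hne hc _ _ _ habsβ habsγ habsδ hpowβ hpowγ hpowδ y hy2 x
end

section
/- Let n ≥ 2 be an even integer, c > 0 a real number, and let k be an integer with 0 ≤ k ≤ n/2 - 1. Then the function y : ℂ → ℂ defined by y(x) = -∫₀^∞ e^{-c^{n-1} w^n/n - c w x a_k} sin(c w x b_k - (2k+1)π/n) dw satisfies the ordinary differential equation y^{(n-1)}(x) + c·x·y(x) = 0 for every x ∈ ℂ. -/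
open MeasureTheory Real Set Filter

lemma integA (n : ℕ) (hn : 2 ≤ n) (α : ℝ) (hα : 0 < α) (j : ℕ) (R : ℝ) :
    IntegrableOn (fun w : ℝ => w ^ j * Real.exp (R * w - α * w ^ n)) (Ioi 0) := by
  set W : ℝ := max 1 ((R + j + 1) / α) with hW
  have hW1 : 1 ≤ W := le_max_left _ _
  have hW0 : (0:ℝ) < W := lt_of_lt_of_le one_pos hW1
  have hcont : Continuous fun w : ℝ => w ^ j * Real.exp (R * w - α * w ^ n) := by
    continuity
  have h1 : IntegrableOn (fun w : ℝ => w ^ j * Real.exp (R * w - α * w ^ n)) (Ioc 0 W) :=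
    (hcont.integrableOn_Icc (a := 0) (b := W)).mono_set Ioc_subset_Icc_self
  have h2 : IntegrableOn (fun w : ℝ => w ^ j * Real.exp (R * w - α * w ^ n)) (Ioi W) := by
    refine Integrable.mono' ((exp_neg_integrableOn_Ioi W (b := 1) one_pos))
      (hcont.aestronglyMeasurable.restrict) ?_
    filter_upwards [ae_restrict_mem measurableSet_Ioi] with w hw
    have hw1 : 1 ≤ w := le_trans hW1 (le_of_lt hw)
    have hw0 : (0:ℝ) ≤ w := by linarith
    have hwj : w ^ j ≤ Real.exp (j * w) := by
      calc w ^ j ≤ (Real.exp w) ^ j := by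
            exact pow_le_pow_left₀ hw0 (by linarith [Real.add_one_le_exp w]) j
        _ = Real.exp (j * w) := by rw [← Real.exp_nat_mul]
    have hpow : w ^ 2 ≤ w ^ n := pow_le_pow_right₀ hw1 hn
    have hexp : R * w - α * w ^ n + j * w ≤ -w := by
      have h3 : (R + j + 1) / α ≤ w := le_trans (le_max_right _ _) (le_of_lt hw)
      have h4 : R + j + 1 ≤ α * w := by
        rw [div_le_iff₀ hα] at h3; linarith [h3]
      have h5 : α * w * w ≤ α * w ^ n := by
        have : α * w ^ 2 ≤ α * w ^ n := by
          exact mul_le_mul_of_nonneg_left hpow (le_of_lt hα)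
        nlinarith
      nlinarith
    have : ‖w ^ j * Real.exp (R * w - α * w ^ n)‖
        = w ^ j * Real.exp (R * w - α * w ^ n) := by
      rw [norm_of_nonneg]; positivity
    rw [this]
    calc w ^ j * Real.exp (R * w - α * w ^ n)
        ≤ Real.exp (j * w) * Real.exp (R * w - α * w ^ n) := by
          exact mul_le_mul_of_nonneg_right hwj (Real.exp_nonneg _)
      _ = Real.exp (R * w - α * w ^ n + j * w) := by rw [← Real.exp_add]; ring_nf
      _ ≤ Real.exp (-1 * w) := by apply Real.exp_le_exp.2; linarith
  have : Ioi (0:ℝ) ⊆ Ioc 0 W ∪ Ioi W := by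
    intro w hw
    rcases le_or_gt w W with h | h
    · exact Or.inl ⟨hw, h⟩
    · exact Or.inr h
  exact (h1.union h2).mono_set this

noncomputable def FF (n : ℕ) (c : ℝ) (ε x : ℂ) (j : ℕ) (w : ℝ) : ℂ :=
  (-(c:ℂ) * w * ε) ^ j * Complex.exp (-(c:ℂ) ^ (n-1) * (w:ℂ) ^ n / n - (c:ℂ) * w * x * ε)

lemma normFF (n : ℕ) (c : ℝ) (hc : 0 < c) (ε x : ℂ) (hε : ‖ε‖ = 1) (j : ℕ)
    (w : ℝ) (hw : 0 ≤ w) :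
    ‖FF n c ε x j w‖ ≤ c ^ j * (w ^ j * Real.exp ((c * ‖x‖) * w - (c ^ (n-1) / n) * w ^ n)) := by
  rw [FF, norm_mul, norm_pow]
  have h1 : ‖-(c:ℂ) * (w:ℂ) * ε‖ = c * w := by
    simp [norm_mul, hε, Complex.norm_real, abs_of_pos hc, abs_of_nonneg hw]
  have h2 : ‖Complex.exp (-(c:ℂ) ^ (n-1) * (w:ℂ) ^ n / n - (c:ℂ) * w * x * ε)‖
      = Real.exp (-((c ^ (n-1) / n) * w ^ n) - c * w * (x * ε).re) := by
    rw [Complex.norm_exp]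
    congr 1
    have : -(c:ℂ) ^ (n-1) * (w:ℂ) ^ n / n - (c:ℂ) * w * x * ε
        = ((-((c ^ (n-1) / n) * w ^ n) : ℝ) : ℂ) + ((c * w : ℝ) : ℂ) * (-(x * ε)) := by
      push_cast; ring
    rw [this, Complex.add_re, Complex.ofReal_re]
    simp [Complex.mul_re]; ring
  rw [h1, h2, mul_pow, mul_assoc]
  have h4 : -(x * ε).re ≤ ‖x‖ := by
    calc -(x * ε).re ≤ |(x * ε).re| := neg_le_abs _
      _ ≤ ‖x * ε‖ := Complex.abs_re_le_norm _
      _ = ‖x‖ := by rw [norm_mul, hε, mul_one]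
  refine mul_le_mul_of_nonneg_left (mul_le_mul_of_nonneg_left (Real.exp_le_exp.2 ?_)
    (by positivity)) (by positivity)
  have := mul_le_mul_of_nonneg_left h4 (mul_nonneg (le_of_lt hc) hw)
  nlinarith

lemma contFF (n : ℕ) (c : ℝ) (ε x : ℂ) (j : ℕ) : Continuous (FF n c ε x j) := by
  unfold FF
  apply Continuous.mul
  · exact (Continuous.mul (continuous_const.mul Complex.continuous_ofReal) continuous_const).pow j
  · exact Complex.continuous_exp.comp <| by continuity

lemma integFF (n : ℕ) (hn : 2 ≤ n) (c : ℝ) (hc : 0 < c) (ε x : ℂ) (hε : ‖ε‖ = 1) (j : ℕ)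
    (r : ℝ) (hr : ‖x‖ ≤ r) :
    IntegrableOn (FF n c ε x j) (Ioi 0) := by
  have hα : (0:ℝ) < c ^ (n-1) / n := by
    apply div_pos (pow_pos hc _); exact_mod_cast lt_of_lt_of_le two_pos hn
  refine Integrable.mono' (((integA n hn _ hα j (c * r)).const_mul (c ^ j)))
    ((contFF n c ε x j).aestronglyMeasurable.restrict) ?_
  filter_upwards [ae_restrict_mem measurableSet_Ioi] with w hw
  calc ‖FF n c ε x j w‖
      ≤ c ^ j * (w ^ j * Real.exp ((c * ‖x‖) * w - (c ^ (n-1) / n) * w ^ n)) :=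
        normFF n c hc ε x hε j w (le_of_lt hw)
    _ ≤ c ^ j * (w ^ j * Real.exp ((c * r) * w - (c ^ (n-1) / n) * w ^ n)) := by
        have hx : (c * ‖x‖) * w ≤ (c * r) * w :=
          mul_le_mul_of_nonneg_right
            (mul_le_mul_of_nonneg_left hr (le_of_lt hc)) (le_of_lt hw)
        have hw0 : (0:ℝ) ≤ w := le_of_lt hw
        exact mul_le_mul_of_nonneg_left (mul_le_mul_of_nonneg_left
          (Real.exp_le_exp.2 (sub_le_sub_right hx _)) (by positivity)) (by positivity)

lemma hasDerivFF (n : ℕ) (c : ℝ) (ε : ℂ) (j : ℕ) (w : ℝ) (x : ℂ) :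
    HasDerivAt (fun x => FF n c ε x j w) (FF n c ε x (j+1) w) x := by
  have h0 : ∀ z : ℂ, FF n c ε z j w
      = (-(c:ℂ) * w * ε) ^ j *
        Complex.exp (-(c:ℂ)^(n-1)*(w:ℂ)^n/n - ((c:ℂ)*w*ε)*z) := by
    intro z; rw [FF]; ring_nf
  have h1 : HasDerivAt (fun z : ℂ => -(c:ℂ)^(n-1)*(w:ℂ)^n/n - ((c:ℂ)*w*ε)*z)
      (-((c:ℂ)*w*ε)) x := by
    simpa using ((hasDerivAt_id x).const_mul ((c:ℂ)*w*ε)).const_sub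
      (-(c:ℂ)^(n-1)*(w:ℂ)^n/n)
  have h2 := (h1.cexp).const_mul ((-(c:ℂ) * w * ε) ^ j)
  have h3 : (fun x : ℂ => FF n c ε x j w)
      = fun z => (-(c:ℂ) * w * ε) ^ j *
        Complex.exp (-(c:ℂ)^(n-1)*(w:ℂ)^n/n - ((c:ℂ)*w*ε)*z) := funext h0
  rw [h3]
  refine h2.congr_deriv ?_
  rw [FF, pow_succ]
  ring_nf

lemma hasDerivG (n : ℕ) (hn : 2 ≤ n) (c : ℝ) (hc : 0 < c) (ε : ℂ) (hε : ‖ε‖ = 1)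
    (j : ℕ) (x₀ : ℂ) :
    HasDerivAt (fun x => ∫ w in Ioi (0:ℝ), FF n c ε x j w)
      (∫ w in Ioi (0:ℝ), FF n c ε x₀ (j+1) w) x₀ := by
  have hα : (0:ℝ) < c ^ (n-1) / n := by
    apply div_pos (pow_pos hc _); exact_mod_cast lt_of_lt_of_le two_pos hn
  have key := hasDerivAt_integral_of_dominated_loc_of_deriv_le
    (μ := volume.restrict (Ioi (0:ℝ))) (x₀ := x₀)
    (F := fun x w => FF n c ε x j w) (F' := fun x w => FF n c ε x (j+1) w)
    (bound := fun w => c^(j+1) * (w^(j+1) * Real.exp ((c * (‖x₀‖+1)) * w - (c^(n-1)/n) * w^n)))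
    (s := Metric.ball x₀ 1) (Metric.ball_mem_nhds x₀ one_pos)
    (Eventually.of_forall fun x => (contFF n c ε x j).aestronglyMeasurable.restrict)
    (integFF n hn c hc ε x₀ hε j ‖x₀‖ le_rfl)
    ((contFF n c ε x₀ (j+1)).aestronglyMeasurable.restrict)
    ?_ ?_ ?_
  · exact key.2
  · filter_upwards [ae_restrict_mem measurableSet_Ioi] with w hw x hx
    have hxn : ‖x‖ ≤ ‖x₀‖ + 1 := by
      have := mem_ball_iff_norm.1 hx
      calc ‖x‖ = ‖x₀ + (x - x₀)‖ := by ring_nf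
        _ ≤ ‖x₀‖ + ‖x - x₀‖ := norm_add_le _ _
        _ ≤ ‖x₀‖ + 1 := by linarith
    calc ‖FF n c ε x (j+1) w‖
        ≤ c^(j+1) * (w^(j+1) * Real.exp ((c * ‖x‖) * w - (c^(n-1)/n) * w^n)) :=
          normFF n c hc ε x hε (j+1) w (le_of_lt hw)
      _ ≤ c^(j+1) * (w^(j+1) * Real.exp ((c * (‖x₀‖+1)) * w - (c^(n-1)/n) * w^n)) := by
          have hw0 : (0:ℝ) ≤ w := le_of_lt hw
          refine mul_le_mul_of_nonneg_left (mul_le_mul_of_nonneg_left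
            (Real.exp_le_exp.2 (sub_le_sub_right ?_ _)) (by positivity)) (by positivity)
          exact mul_le_mul_of_nonneg_right
            (mul_le_mul_of_nonneg_left hxn (le_of_lt hc)) hw0
  · exact (integA n hn _ hα (j+1) (c * (‖x₀‖+1))).const_mul _
  · filter_upwards [] with w x _
    exact hasDerivFF n c ε j w x

lemma integW (n : ℕ) (hn : 2 ≤ n) (c : ℝ) (hc : 0 < c) (ε x : ℂ) (hε : ‖ε‖ = 1) :
    IntegrableOn (fun w : ℝ => ((c:ℂ)^(n-1) * (w:ℂ)^(n-1)) * FF n c ε x 0 w) (Ioi 0) := by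
  have hα : (0:ℝ) < c ^ (n-1) / n := by
    apply div_pos (pow_pos hc _); exact_mod_cast lt_of_lt_of_le two_pos hn
  refine Integrable.mono' ((integA n hn _ hα (n-1) (c * ‖x‖)).const_mul (c ^ (n-1)))
    ((Continuous.mul (by continuity) (contFF n c ε x 0)).aestronglyMeasurable.restrict) ?_
  filter_upwards [ae_restrict_mem measurableSet_Ioi] with w hw
  have hw0 : (0:ℝ) ≤ w := le_of_lt hw
  rw [norm_mul]
  have h1 : ‖(c:ℂ)^(n-1) * (w:ℂ)^(n-1)‖ = c^(n-1) * w^(n-1) := by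
    simp [norm_mul, norm_pow, Complex.norm_real, Real.norm_eq_abs,
      abs_of_pos hc, abs_of_nonneg hw0]
  rw [h1]
  have h2 := normFF n c hc ε x hε 0 w hw0
  simp only [pow_zero, one_mul] at h2
  calc c^(n-1) * w^(n-1) * ‖FF n c ε x 0 w‖
      ≤ c^(n-1) * w^(n-1) * Real.exp ((c * ‖x‖) * w - (c ^ (n-1) / n) * w ^ n) := by
        refine mul_le_mul_of_nonneg_left h2 (by positivity)
    _ = c^(n-1) * (w^(n-1) * Real.exp ((c * ‖x‖) * w - (c ^ (n-1) / n) * w ^ n)) := by ring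

lemma tendstoFF (n : ℕ) (hn : 2 ≤ n) (c : ℝ) (hc : 0 < c) (ε x : ℂ) (hε : ‖ε‖ = 1) :
    Tendsto (fun w : ℝ => FF n c ε x 0 w) atTop (nhds 0) := by
  rw [tendsto_zero_iff_norm_tendsto_zero]
  have hα : (0:ℝ) < c ^ (n-1) / n := by
    apply div_pos (pow_pos hc _); exact_mod_cast lt_of_lt_of_le two_pos hn
  set α := c ^ (n-1) / n
  refine tendsto_of_tendsto_of_tendsto_of_le_of_le' tendsto_const_nhds
    tendsto_exp_neg_atTop_nhds_zero
    (Eventually.of_forall fun w => norm_nonneg _) ?_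
  filter_upwards [eventually_ge_atTop (max 1 ((c*‖x‖+1)/α))] with w hw
  have hw1 : (1:ℝ) ≤ w := le_trans (le_max_left _ _) hw
  have hw0 : (0:ℝ) ≤ w := by linarith
  have h2 := normFF n c hc ε x hε 0 w hw0
  simp only [pow_zero, one_mul] at h2
  refine h2.trans (Real.exp_le_exp.2 ?_)
  have h3 : (c*‖x‖+1)/α ≤ w := le_trans (le_max_right _ _) hw
  have h4 : c*‖x‖+1 ≤ α * w := by rw [div_le_iff₀ hα] at h3; linarith
  have hpow : w ^ 2 ≤ w ^ n := pow_le_pow_right₀ hw1 hn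
  have h5 : α * (w*w) ≤ α * w ^ n := by
    apply mul_le_mul_of_nonneg_left _ (le_of_lt hα); nlinarith
  nlinarith

lemma ftc (n : ℕ) (hn : 2 ≤ n) (c : ℝ) (hc : 0 < c) (ε x : ℂ) (hε : ‖ε‖ = 1) :
    ∫ w in Ioi (0:ℝ), ((c:ℂ)^(n-1) * (w:ℂ)^(n-1)) * FF n c ε x 0 w
      = 1 - (c:ℂ) * x * ε * ∫ w in Ioi (0:ℝ), FF n c ε x 0 w := by
  have hn0 : (n:ℂ) ≠ 0 := by
    exact Nat.cast_ne_zero.2 (by omega)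
  set A : ℂ := (c:ℂ)^(n-1)
  set B : ℂ := (c:ℂ) * x * ε
  -- derivative of -FF in w
  have hderiv : ∀ w : ℝ, HasDerivAt (fun w : ℝ => -FF n c ε x 0 w)
      ((A * (w:ℂ)^(n-1) + B) * FF n c ε x 0 w) w := by
    intro w
    have hcplx : HasDerivAt (fun z : ℂ => -Complex.exp (-A * z^n / n - B * z))
        ((A * (w:ℂ)^(n-1) + B) * Complex.exp (-A * (w:ℂ)^n / n - B * (w:ℂ))) (w:ℂ) := by
      have h1 : HasDerivAt (fun z : ℂ => -A * z^n / n - B * z)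
          (-A * ((n:ℂ) * (w:ℂ)^(n-1)) / n - B) (w:ℂ) :=
        (((hasDerivAt_pow n ((w:ℂ))).const_mul (-A)).div_const (n:ℂ)).sub
          (by simpa using (hasDerivAt_id ((w:ℂ))).const_mul B)
      have h2 := (h1.cexp).neg
      refine h2.congr_deriv ?_
      rw [mul_div_assoc (-A) ((n:ℂ) * (w:ℂ)^(n-1)), mul_div_cancel_left₀ _ hn0]
      ring
    have := hcplx.comp_ofReal
    convert this using 1
    · funext v; rw [FF]; push_cast; simp only [A, B]; ring_nf
    · rw [FF]; push_cast; simp only [A, B]; ring_nf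
  have hint1 : IntegrableOn (fun w : ℝ => (A * (w:ℂ)^(n-1)) * FF n c ε x 0 w) (Ioi 0) :=
    integW n hn c hc ε x hε
  have hint2 : IntegrableOn (fun w : ℝ => B * FF n c ε x 0 w) (Ioi 0) :=
    (integFF n hn c hc ε x hε 0 ‖x‖ le_rfl).const_mul B
  have hint : IntegrableOn (fun w : ℝ => (A * (w:ℂ)^(n-1) + B) * FF n c ε x 0 w) (Ioi 0) := by
    refine (hint1.add hint2).congr (Eventually.of_forall fun w => ?_)
    simp only [Pi.add_apply]; ring
  have hlim : Tendsto (fun w : ℝ => -FF n c ε x 0 w) atTop (nhds 0) := by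
    simpa using (tendstoFF n hn c hc ε x hε).neg
  have key := integral_Ioi_of_hasDerivAt_of_tendsto
    (a := (0:ℝ)) (m := (0:ℂ))
    (((contFF n c ε x 0).neg).continuousWithinAt)
    (fun w _ => hderiv w) hint hlim
  have hF0 : FF n c ε x 0 0 = 1 := by
    rw [FF]
    have h0 : ((0:ℝ):ℂ) = 0 := by norm_num
    simp [h0, zero_pow (by omega : n ≠ 0)]
  simp only [Pi.neg_apply] at key
  rw [hF0] at key
  -- key : ∫ (A w^{n-1} + B) FF = 0 - (-1) = 1
  have hsplit : ∫ w in Ioi (0:ℝ), (A * (w:ℂ)^(n-1) + B) * FF n c ε x 0 w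
      = (∫ w in Ioi (0:ℝ), (A * (w:ℂ)^(n-1)) * FF n c ε x 0 w)
        + ∫ w in Ioi (0:ℝ), B * FF n c ε x 0 w := by
    rw [← integral_add hint1 hint2]
    refine setIntegral_congr_fun measurableSet_Ioi (fun w _ => by ring)
  rw [hsplit] at key
  rw [integral_const_mul] at key
  have : (0:ℂ) - -1 = 1 := by norm_num
  rw [this] at key
  linear_combination key

lemma iterY (n : ℕ) (hn : 2 ≤ n) (c : ℝ) (hc : 0 < c) (εp εm : ℂ)
    (hp : ‖εp‖ = 1) (hm : ‖εm‖ = 1) (j : ℕ) :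
    iteratedDeriv j (fun x => -(Complex.I/2) *
        (εp * (∫ w in Ioi (0:ℝ), FF n c εp x 0 w)
          - εm * ∫ w in Ioi (0:ℝ), FF n c εm x 0 w))
      = fun x => -(Complex.I/2) *
        (εp * (∫ w in Ioi (0:ℝ), FF n c εp x j w)
          - εm * ∫ w in Ioi (0:ℝ), FF n c εm x j w) := by
  induction j with
  | zero => rw [iteratedDeriv_zero]
  | succ j ih =>
    rw [iteratedDeriv_succ, ih]
    funext x
    exact (((((hasDerivG n hn c hc εp hp j x).const_mul εp).sub
      ((hasDerivG n hn c hc εm hm j x).const_mul εm)).const_mul (-(Complex.I/2)))).deriv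

-- the (-ε)^(n-1) computation

lemma negpow (n : ℕ) (hn : 2 ≤ n) (hne : Even n) (εp εm : ℂ)
    (hpn : εp ^ n = -1) (hpm : εm * εp = 1) : (-εp) ^ (n-1) = εm := by
  have hodd : Odd (n - 1) := Nat.Even.sub_odd (by omega) hne odd_one
  rw [hodd.neg_pow]
  have h1 : εp ^ (n-1) * εp = -1 := by
    rw [← pow_succ]
    have : n - 1 + 1 = n := by omega
    rw [this, hpn]
  have : εp ^ (n-1) = -εm := by
    calc εp ^ (n-1) = εp ^ (n-1) * (εm * εp) := by rw [hpm, mul_one]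
      _ = (εp ^ (n-1) * εp) * εm := by ring
      _ = -εm := by rw [h1]; ring
  rw [this, neg_neg]

theorem airy_type_ode_y_minus_even
    (n : ℕ) (hn : 2 ≤ n) (hne : Even n) (c : ℝ) (hc : 0 < c)
    (k : ℕ) (hk2 : k ≤ n / 2 - 1)
    (y : ℂ → ℂ)
    (hy : ∀ x : ℂ, y x =
      -∫ w in Ioi (0 : ℝ),
        Complex.exp (-(c : ℂ) ^ (n - 1) * (w : ℂ) ^ n / n
            - (c : ℂ) * w * x * (Real.cos ((2 * k + 1) * π / n) : ℝ)) *
          Complex.sin ((c : ℂ) * w * x * (Real.sin ((2 * k + 1) * π / n) : ℝ)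
            - ((2 * k + 1) * π / n : ℝ))) :
    ∀ x : ℂ, iteratedDeriv (n - 1) y x + (c : ℂ) * x * y x = 0 := by
  have hn0 : (n:ℝ) ≠ 0 := Nat.cast_ne_zero.2 (by omega)
  set θ : ℝ := (2 * (k:ℝ) + 1) * π / (n:ℝ) with hθ
  set εp : ℂ := Complex.exp ((θ:ℂ) * Complex.I) with hεpdef
  set εm : ℂ := Complex.exp (-(θ:ℂ) * Complex.I) with hεmdef
  have hp : ‖εp‖ = 1 := by
    rw [hεpdef]; exact Complex.norm_exp_ofReal_mul_I θ
  have hm : ‖εm‖ = 1 := by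
    rw [hεmdef]
    have : -(θ:ℂ) * Complex.I = ((-θ : ℝ):ℂ) * Complex.I := by push_cast; ring
    rw [this]; exact Complex.norm_exp_ofReal_mul_I (-θ)
  have hpm : εm * εp = 1 := by
    have h0 : -(θ:ℂ)*Complex.I + (θ:ℂ)*Complex.I = 0 := by ring
    rw [hεpdef, hεmdef, ← Complex.exp_add, h0, Complex.exp_zero]
  have hmp : εp * εm = 1 := by rw [mul_comm]; exact hpm
  have hεp : εp = (Real.cos θ : ℂ) + (Real.sin θ : ℂ) * Complex.I := by
    rw [hεpdef, Complex.exp_mul_I, Complex.ofReal_cos, Complex.ofReal_sin]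
  have hεm : εm = (Real.cos θ : ℂ) - (Real.sin θ : ℂ) * Complex.I := by
    rw [hεmdef, Complex.exp_mul_I, Complex.cos_neg, Complex.sin_neg,
      Complex.ofReal_cos, Complex.ofReal_sin]
    ring
  have hpn : εp ^ n = -1 := by
    rw [hεpdef, ← Complex.exp_nat_mul]
    have h1 : (n:ℝ) * θ = ((2*k+1 : ℕ):ℝ) * π := by
      rw [hθ]; push_cast; field_simp
    have h2 : (n:ℂ) * ((θ:ℂ) * Complex.I) = ((2*k+1 : ℕ):ℂ) * (π * Complex.I) := by
      calc (n:ℂ) * ((θ:ℂ) * Complex.I) = (((n:ℝ) * θ : ℝ):ℂ) * Complex.I := by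
            push_cast; ring
        _ = _ := by rw [h1]; push_cast; ring
    rw [h2, Complex.exp_nat_mul, Complex.exp_pi_mul_I]
    exact Odd.neg_one_pow ⟨k, by ring⟩
  have hmn : εm ^ n = -1 := by
    have h := congrArg (· ^ n) hpm
    simp only [mul_pow, one_pow] at h
    rw [hpn] at h
    linear_combination -h
  -- rewrite y
  have hyY : y = (fun z => -(Complex.I/2) *
      (εp * (∫ w in Ioi (0:ℝ), FF n c εp z 0 w)
        - εm * ∫ w in Ioi (0:ℝ), FF n c εm z 0 w)) := by
    funext z
    rw [hy z]
    have key : ∀ w : ℝ,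
        Complex.exp (-(c : ℂ) ^ (n - 1) * (w : ℂ) ^ n / n
            - (c : ℂ) * w * z * (Real.cos θ : ℝ)) *
          Complex.sin ((c : ℂ) * w * z * (Real.sin θ : ℝ) - (θ : ℝ))
        = (Complex.I/2) * (εp * FF n c εp z 0 w)
          - (Complex.I/2) * (εm * FF n c εm z 0 w) := by
      intro w
      have hsin : ∀ u : ℂ, Complex.sin u
          = (Complex.exp (-u * Complex.I) - Complex.exp (u * Complex.I))
            * Complex.I / 2 := fun u => rfl
      rw [hsin]
      have E1 : Complex.exp (-(c : ℂ) ^ (n - 1) * (w : ℂ) ^ n / n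
            - (c : ℂ) * w * z * (Real.cos θ : ℝ)) *
          Complex.exp (-((c : ℂ) * w * z * (Real.sin θ : ℝ) - (θ : ℝ)) * Complex.I)
          = εp * FF n c εp z 0 w := by
        rw [FF, pow_zero, one_mul, ← Complex.exp_add, hεpdef, ← Complex.exp_add]
        congr 1
        rw [Complex.exp_mul_I, ← Complex.ofReal_cos, ← Complex.ofReal_sin]
        push_cast; ring
      have E2 : Complex.exp (-(c : ℂ) ^ (n - 1) * (w : ℂ) ^ n / n
            - (c : ℂ) * w * z * (Real.cos θ : ℝ)) *
          Complex.exp (((c : ℂ) * w * z * (Real.sin θ : ℝ) - (θ : ℝ)) * Complex.I)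
          = εm * FF n c εm z 0 w := by
        rw [FF, pow_zero, one_mul, ← Complex.exp_add, hεmdef, ← Complex.exp_add]
        congr 1
        rw [Complex.exp_mul_I, Complex.cos_neg, Complex.sin_neg,
          ← Complex.ofReal_cos, ← Complex.ofReal_sin]
        push_cast; ring
      linear_combination (Complex.I/2) * E1 - (Complex.I/2) * E2
    rw [setIntegral_congr_fun measurableSet_Ioi (fun w _ => key w)]
    rw [integral_sub
      (((integFF n hn c hc εp z hp 0 ‖z‖ le_rfl).const_mul εp).const_mul (Complex.I/2))
      (((integFF n hn c hc εm z hm 0 ‖z‖ le_rfl).const_mul εm).const_mul (Complex.I/2)),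
      integral_const_mul, integral_const_mul, integral_const_mul, integral_const_mul]
    ring
  intro x
  rw [hyY]
  rw [iterY n hn c hc εp εm hp hm (n-1)]
  beta_reduce
  have hsplit : ∀ (ε : ℂ), ‖ε‖ = 1 →
      ∫ w in Ioi (0:ℝ), FF n c ε x (n-1) w
        = (-ε)^(n-1) * (1 - (c:ℂ)*x*ε * ∫ w in Ioi (0:ℝ), FF n c ε x 0 w) := by
    intro ε hε
    rw [← ftc n hn c hc ε x hε, ← integral_const_mul]
    refine setIntegral_congr_fun measurableSet_Ioi (fun w _ => ?_)
    rw [FF, FF, pow_zero, one_mul]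
    have h : (-(c:ℂ) * (w:ℂ) * ε) = (-ε) * ((c:ℂ) * (w:ℂ)) := by ring
    rw [h, mul_pow, mul_pow]
    ring
  rw [hsplit εp hp, hsplit εm hm, negpow n hn hne εp εm hpn hpm,
    negpow n hn hne εm εp hmn hmp]
  set Gp := ∫ w in Ioi (0:ℝ), FF n c εp x 0 w
  set Gm := ∫ w in Ioi (0:ℝ), FF n c εm x 0 w
  linear_combination ((Complex.I/2) * (c:ℂ) * x * (εp * Gp - εm * Gm)) * hpm
end

section
/- Let n ≥ 2 be an integer and c a nonzero real number, with n odd or (n even and c < 0). For k = 1, …, n-1 define y_k : ℂ → ℂ by y_k(x) = ∫₀^∞ e^{-c t x - (-c)^{n-1} t^n/n} dt - e^{i 2kπ/n} ∫₀^∞ e^{-(-c)^{n-1} t^n/n - c t x e^{i 2kπ/n}} dt. Then the family of functions (y_k)_{k=1}^{n-1} is linearly independent over ℂ (as elements of the ℂ-vector space of functions ℂ → ℂ). -/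
open MeasureTheory Real Set
open scoped ENNReal NNReal

/-- The moment integral `∫₀^∞ tᵐ e^{-a tⁿ/n} dt`. -/
noncomputable def Mint (a : ℝ) (n m : ℕ) : ℝ :=
  ∫ t in Ioi (0 : ℝ), t ^ m * Real.exp (-(a * t ^ n) / n)

lemma aux_integrable (a : ℝ) (ha : 0 < a) {n : ℕ} (hn : 2 ≤ n) (r : ℝ) (m : ℕ) :
    IntegrableOn (fun t : ℝ => t ^ m * (Real.exp (r * t) * Real.exp (-(a * t ^ n) / n)))
      (Ioi 0) := by
  have hn0 : (0 : ℝ) < n := by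
    have : 0 < n := by omega
    exact_mod_cast this
  apply integrable_of_isBigO_exp_neg (b := 1) one_pos
  · exact (Continuous.continuousOn (by continuity))
  · rw [Asymptotics.isBigO_iff]
    refine ⟨1, ?_⟩
    have h1 : ∀ᶠ t : ℝ in Filter.atTop, t ^ m * Real.exp (-t) ≤ 1 :=
      (tendsto_pow_mul_exp_neg_atTop_nhds_zero m).eventually_le_const one_pos
    filter_upwards [h1, Filter.eventually_ge_atTop (1 : ℝ),
      Filter.eventually_ge_atTop ((r + 2) * n / a)] with t htm ht1 hta
    have ht0 : (0 : ℝ) ≤ t := le_trans zero_le_one ht1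
    have htm' : t ^ m ≤ Real.exp t := by
      have h2 := mul_le_mul_of_nonneg_right htm (Real.exp_pos t).le
      rwa [mul_assoc, ← Real.exp_add, neg_add_cancel, Real.exp_zero, mul_one, one_mul] at h2
    have htpow : t ^ 2 ≤ t ^ n := pow_le_pow_right₀ ht1 hn
    have key : (r + 2) * t ≤ a * t ^ n / n := by
      rw [le_div_iff₀ hn0]
      have h3 : (r + 2) * n / a * a ≤ t * a := mul_le_mul_of_nonneg_right hta ha.le
      rw [div_mul_cancel₀ _ ha.ne'] at h3
      rcases le_or_gt (r + 2) 0 with hr | hr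
      · have h4 : 0 ≤ a * t ^ n := mul_nonneg ha.le (pow_nonneg ht0 n)
        nlinarith [mul_nonneg (neg_nonneg.2 hr) (mul_nonneg ht0 hn0.le)]
      · nlinarith [mul_le_mul_of_nonneg_right h3 ht0, mul_le_mul_of_nonneg_left htpow ha.le]
    have hpos : (0 : ℝ) ≤ t ^ m * (Real.exp (r * t) * Real.exp (-(a * t ^ n) / n)) := by
      positivity
    rw [Real.norm_eq_abs, Real.norm_eq_abs, abs_of_nonneg hpos,
      abs_of_nonneg (Real.exp_pos _).le, ← Real.exp_add]
    calc t ^ m * Real.exp (r * t + -(a * t ^ n) / n)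
        ≤ Real.exp t * Real.exp (r * t + -(a * t ^ n) / n) := by
          apply mul_le_mul_of_nonneg_right htm' (Real.exp_pos _).le
      _ = Real.exp (t + (r * t + -(a * t ^ n) / n)) := (Real.exp_add _ _).symm
      _ ≤ Real.exp (-1 * t) := by
          apply Real.exp_le_exp.2
          have : -(a * t ^ n) / n = -(a * t ^ n / n) := by ring
          rw [this]
          linarith
      _ = 1 * Real.exp (-1 * t) := (one_mul _).symm

lemma aux_integrable0 (a : ℝ) (ha : 0 < a) {n : ℕ} (hn : 2 ≤ n) (m : ℕ) :
    IntegrableOn (fun t : ℝ => t ^ m * Real.exp (-(a * t ^ n) / n)) (Ioi 0) := by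
  simpa using aux_integrable a ha hn 0 m

lemma aux_pos (a : ℝ) (ha : 0 < a) {n : ℕ} (hn : 2 ≤ n) (m : ℕ) : 0 < Mint a n m := by
  have hnn : 0 ≤ᵐ[volume.restrict (Ioi (0 : ℝ))]
      fun t : ℝ => t ^ m * Real.exp (-(a * t ^ n) / n) := by
    refine (ae_restrict_iff' measurableSet_Ioi).2 (Filter.Eventually.of_forall fun t ht => ?_)
    have ht' : (0 : ℝ) < t := ht
    positivity
  rw [Mint, setIntegral_pos_iff_support_of_nonneg_ae hnn (aux_integrable0 a ha hn m)]
  have h1 : Ioi (0 : ℝ)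
      ⊆ (Function.support fun t => t ^ m * Real.exp (-(a * t ^ n) / n)) ∩ Ioi 0 := by
    intro t ht
    have ht' : (0 : ℝ) < t := ht
    exact ⟨Function.mem_support.2 (show (0:ℝ) < _ by positivity).ne', ht⟩
  calc (0 : ℝ≥0∞) < volume (Ioi (0 : ℝ)) := by simp [Real.volume_Ioi]
    _ ≤ _ := measure_mono h1

lemma aux_summable (a : ℝ) (ha : 0 < a) {n : ℕ} (hn : 2 ≤ n) {s : ℝ} (hs : 0 ≤ s) :
    Summable (fun m : ℕ => s ^ m / m.factorial * Mint a n m) := by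
  apply summable_of_sum_range_le
    (c := ∫ t in Ioi (0 : ℝ), Real.exp (s * t) * Real.exp (-(a * t ^ n) / n))
  · intro m
    have := (aux_pos a ha hn m).le
    positivity
  · intro N
    have hterm : ∀ m : ℕ, s ^ m / m.factorial * Mint a n m
        = ∫ t in Ioi (0 : ℝ), s ^ m / m.factorial * (t ^ m * Real.exp (-(a * t ^ n) / n)) := by
      intro m
      rw [Mint, ← integral_const_mul]
    simp_rw [hterm]
    rw [← integral_finset_sum]
    · apply setIntegral_mono_on
      · apply integrable_finset_sum
        intro m _
        exact (aux_integrable0 a ha hn m).const_mul _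
      · exact aux_integrable a ha hn s 0 |>.congr_fun (fun t ht => by simp) measurableSet_Ioi
          |>.mono_set (subset_refl _) |>.congr_fun (fun t ht => rfl) measurableSet_Ioi
      · exact measurableSet_Ioi
      · intro t ht
        have ht0 : (0 : ℝ) ≤ t := le_of_lt ht
        have : ∑ m ∈ Finset.range N, s ^ m / m.factorial * (t ^ m * Real.exp (-(a * t ^ n) / n))
            = (∑ m ∈ Finset.range N, (s * t) ^ m / m.factorial) * Real.exp (-(a * t ^ n) / n) := by
          rw [Finset.sum_mul]
          refine Finset.sum_congr rfl fun m _ => ?_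
          rw [mul_pow]; ring
        rw [this]
        apply mul_le_mul_of_nonneg_right (Real.sum_le_exp_of_nonneg (mul_nonneg hs ht0) N)
          (Real.exp_pos _).le
    · intro m _
      exact (aux_integrable0 a ha hn m).const_mul _

lemma aux_series (a : ℝ) (ha : 0 < a) {n : ℕ} (hn : 2 ≤ n) (β x : ℂ) :
    ∫ t in Ioi (0 : ℝ), Complex.exp (β * t * x - (a : ℂ) * (t : ℂ) ^ n / n)
      = ∑' m : ℕ, (β * x) ^ m / (m.factorial : ℂ) * ((Mint a n m : ℝ) : ℂ) := by
  have hg : ∀ t : ℝ, Complex.exp (β * t * x - (a : ℂ) * (t : ℂ) ^ n / n)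
      = ∑' m : ℕ, (β * t * x) ^ m / (m.factorial : ℂ) * ((Real.exp (-(a * t ^ n) / n) : ℝ) : ℂ) := by
    intro t
    rw [show β * t * x - (a : ℂ) * (t : ℂ) ^ n / n
        = β * t * x + ((-(a * t ^ n) / n : ℝ) : ℂ) by push_cast; ring]
    rw [Complex.exp_add, ← Complex.ofReal_exp]
    rw [Complex.exp_eq_exp_ℂ, NormedSpace.exp_eq_tsum_div]
    exact (tsum_mul_right).symm
  simp_rw [hg]
  rw [MeasureTheory.integral_tsum]
  · refine tsum_congr fun m => ?_
    have hcongr : ∀ t ∈ Ioi (0 : ℝ),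
        (β * (t : ℂ) * x) ^ m / (m.factorial : ℂ) * ((Real.exp (-(a * t ^ n) / n) : ℝ) : ℂ)
        = (β * x) ^ m / (m.factorial : ℂ) * ((t ^ m * Real.exp (-(a * t ^ n) / n) : ℝ) : ℂ) := by
      intro t ht
      push_cast
      ring
    rw [setIntegral_congr_fun measurableSet_Ioi hcongr, integral_const_mul]
    congr 1
    rw [Mint]
    exact integral_ofReal
  · intro m
    apply Continuous.aestronglyMeasurable
    continuity
  · have key : ∀ m : ℕ,
        (∫⁻ t in Ioi (0 : ℝ),
          ‖(β * (t : ℂ) * x) ^ m / (m.factorial : ℂ) * ((Real.exp (-(a * t ^ n) / n) : ℝ) : ℂ)‖₊)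
        = ENNReal.ofReal (‖β * x‖ ^ m / m.factorial * Mint a n m) := by
      intro m
      have hInt : IntegrableOn
          (fun t : ℝ => ‖β * x‖ ^ m / m.factorial * (t ^ m * Real.exp (-(a * t ^ n) / n)))
          (Ioi 0) := (aux_integrable0 a ha hn m).const_mul _
      have heq : ∀ t ∈ Ioi (0 : ℝ),
          ‖(β * (t : ℂ) * x) ^ m / (m.factorial : ℂ) * ((Real.exp (-(a * t ^ n) / n) : ℝ) : ℂ)‖
          = ‖β * x‖ ^ m / m.factorial * (t ^ m * Real.exp (-(a * t ^ n) / n)) := by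
        intro t ht
        have ht0 : (0 : ℝ) < t := ht
        rw [norm_mul, norm_div, norm_pow, Complex.norm_real, Complex.norm_natCast,
          Real.norm_eq_abs, abs_of_pos (Real.exp_pos _)]
        rw [show β * (t : ℂ) * x = (β * x) * (t : ℂ) by ring, norm_mul, Complex.norm_real,
          Real.norm_eq_abs, abs_of_pos ht0, mul_pow]
        ring
      calc (∫⁻ t in Ioi (0 : ℝ),
            ‖(β * (t : ℂ) * x) ^ m / (m.factorial : ℂ) * ((Real.exp (-(a * t ^ n) / n) : ℝ) : ℂ)‖₊)
          = ∫⁻ t in Ioi (0 : ℝ), ENNReal.ofReal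
              (‖β * x‖ ^ m / m.factorial * (t ^ m * Real.exp (-(a * t ^ n) / n))) := by
            refine setLIntegral_congr_fun measurableSet_Ioi
              (fun t ht => ?_)
            rw [← enorm_eq_nnnorm, ← ofReal_norm, heq t ht]
        _ = ENNReal.ofReal (∫ t in Ioi (0 : ℝ),
              ‖β * x‖ ^ m / m.factorial * (t ^ m * Real.exp (-(a * t ^ n) / n))) := by
            rw [← ofReal_integral_eq_lintegral_ofReal hInt]
            refine (ae_restrict_iff' measurableSet_Ioi).2
              (Filter.Eventually.of_forall fun t ht => ?_)
            have ht0 : (0 : ℝ) < t := ht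
            positivity
        _ = ENNReal.ofReal (‖β * x‖ ^ m / m.factorial * Mint a n m) := by
            rw [integral_const_mul, Mint]
    simp_rw [enorm_eq_nnnorm, key]
    rw [← ENNReal.ofReal_tsum_of_nonneg]
    · exact ENNReal.ofReal_ne_top
    · intro m
      have := (aux_pos a ha hn m).le
      positivity
    · exact aux_summable a ha hn (norm_nonneg (β * x))

lemma coeff_eq_zero {b : ℕ → ℂ} (hb : Summable fun m => ‖b m‖)
    (h0 : ∀ x : ℂ, ∑' m : ℕ, b m * x ^ m = 0) (m : ℕ) : b m = 0 := by
  set p : FormalMultilinearSeries ℂ ℂ ℂ := FormalMultilinearSeries.ofScalars ℂ b with hp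
  have hrad : 0 < p.radius := by
    refine lt_of_lt_of_le (show (0 : ℝ≥0∞) < ((1 : ℝ≥0) : ℝ≥0∞) by norm_num)
      (p.le_radius_of_summable (r := 1) ?_)
    simp only [hp, FormalMultilinearSeries.ofScalars_norm, NNReal.coe_one, one_pow, mul_one]
    exact hb
  have hsum := (p.hasFPowerSeriesOnBall hrad).hasFPowerSeriesAt
  have hzero : p.sum = 0 := by
    funext z
    have h1 : p.sum z = ∑' m : ℕ, b m • z ^ m := FormalMultilinearSeries.ofScalars_sum_eq b z
    simp only [smul_eq_mul] at h1
    rw [h1, h0 z]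
    rfl
  rw [hzero] at hsum
  have hpz : p = 0 := hsum.eq_zero
  have hpm := congrFun hpz m
  exact (FormalMultilinearSeries.ofScalars_eq_zero ℂ m).mp hpm

theorem airy_type_solutions_linearly_independent
    (n : ℕ) (hn : 2 ≤ n) (c : ℝ) (hc : c ≠ 0)
    (hcase : Odd n ∨ (Even n ∧ c < 0))
    (y : ℕ → ℂ → ℂ)
    (hy : ∀ k, 1 ≤ k → k ≤ n - 1 → ∀ x : ℂ, y k x =
      (∫ t in Ioi (0 : ℝ),
          Complex.exp (-(c : ℂ) * t * x - (-(c : ℂ)) ^ (n - 1) * (t : ℂ) ^ n / n))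
      - Complex.exp (Complex.I * (2 * k * π / n)) *
        ∫ t in Ioi (0 : ℝ),
          Complex.exp (-(-(c : ℂ)) ^ (n - 1) * (t : ℂ) ^ n / n
            - (c : ℂ) * t * x * Complex.exp (Complex.I * (2 * k * π / n)))) :
    LinearIndependent ℂ (fun k : Fin (n - 1) => y (k + 1)) := by
  classical
  -- the positive real constant in the exponent
  set a : ℝ := (-c) ^ (n - 1) with ha_def
  have hc' : (-c) ≠ 0 := neg_ne_zero.mpr hc
  have ha : 0 < a := by
    rcases hcase with h | ⟨h, hcneg⟩
    · have he : Even (n - 1) := Nat.Odd.sub_odd h odd_one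
      exact he.pow_pos hc'
    · exact pow_pos (by linarith) _
  have hacast : (-(c : ℂ)) ^ (n - 1) = ((a : ℝ) : ℂ) := by
    rw [ha_def]; push_cast; ring
  have hnne : (n : ℂ) ≠ 0 := Nat.cast_ne_zero.mpr (by omega)
  -- the primitive n-th root of unity
  set ζ : ℂ := Complex.exp (2 * (π : ℂ) * Complex.I / n) with hζ_def
  have hζprim : IsPrimitiveRoot ζ n := Complex.isPrimitiveRoot_exp n (by omega)
  have hζ0 : ζ ≠ 0 := Complex.exp_ne_zero _
  have hζn : ζ ^ n = 1 := hζprim.pow_eq_one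
  have hζ1 : ‖ζ‖ = 1 := by
    rw [hζ_def, Complex.norm_exp]
    have : (2 * (π : ℂ) * Complex.I / n).re = 0 := by
      simp [Complex.div_re, Complex.mul_re, Complex.mul_im]
    rw [this, Real.exp_zero]
  have hζpow_n : ∀ l : ℕ, (ζ ^ l) ^ n = 1 := fun l => by
    rw [← pow_mul, mul_comm, pow_mul, hζn, one_pow]
  have hζne1 : ∀ l : ℕ, 1 ≤ l → l < n → ζ ^ l ≠ 1 := fun l h1 h2 =>
    hζprim.pow_ne_one_of_pos_of_lt (by omega) h2
  have hgeom0 : ∀ z : ℂ, z ≠ 1 → z ^ n = 1 → ∑ j ∈ Finset.range n, z ^ j = 0 := by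
    intro z h1 hz
    rw [geom_sum_eq h1, hz]
    simp
  have hMpos : ∀ m : ℕ, 0 < Mint a n m := fun m => aux_pos a ha hn m
  -- summability of the basic series
  have hsumF : ∀ (β x : ℂ),
      Summable (fun m : ℕ => (β * x) ^ m / (m.factorial : ℂ) * ((Mint a n m : ℝ) : ℂ)) := by
    intro β x
    apply Summable.of_norm
    refine (aux_summable a ha hn (norm_nonneg (β * x))).congr fun m => ?_
    simp only [norm_mul, norm_div, norm_pow, Complex.norm_natCast, Complex.norm_real,
      Real.norm_eq_abs]
    rw [abs_of_pos (hMpos m)]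
  -- power series representation of each y (k+1)
  have hy3 : ∀ k : Fin (n - 1), ∀ x : ℂ, y ((k : ℕ) + 1) x
      = ∑' m : ℕ, ((-(c : ℂ)) ^ m / (m.factorial : ℂ) * ((Mint a n m : ℝ) : ℂ)
          * (1 - (ζ ^ ((k : ℕ) + 1)) ^ (m + 1))) * x ^ m := by
    intro k x
    have hk1 : (k : ℕ) + 1 ≤ n - 1 := by have := k.isLt; omega
    rw [hy ((k : ℕ) + 1) (by omega) hk1 x]
    have hω : Complex.exp (Complex.I * (2 * (((k : ℕ) + 1 : ℕ) : ℂ) * (π : ℂ) / n))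
        = ζ ^ ((k : ℕ) + 1) := by
      rw [hζ_def, ← Complex.exp_nat_mul]
      congr 1
      push_cast
      ring
    rw [hω, hacast]
    rw [aux_series a ha hn (-(c : ℂ)) x]
    have hre : (fun t : ℝ => Complex.exp (-((a : ℝ) : ℂ) * (t : ℂ) ^ n / n
          - (c : ℂ) * t * x * ζ ^ ((k : ℕ) + 1)))
        = fun t : ℝ => Complex.exp ((-(c : ℂ) * ζ ^ ((k : ℕ) + 1)) * t * x
          - ((a : ℝ) : ℂ) * (t : ℂ) ^ n / n) :=
      funext fun t => congrArg Complex.exp (by ring)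
    rw [hre, aux_series a ha hn (-(c : ℂ) * ζ ^ ((k : ℕ) + 1)) x]
    rw [← tsum_mul_left, ← Summable.tsum_sub (hsumF _ x) ((hsumF _ x).mul_left _)]
    exact tsum_congr fun m => by ring
  -- summability of the coefficient series of y (k+1)
  have hsumy : ∀ (k : Fin (n - 1)) (x : ℂ),
      Summable (fun m : ℕ => ((-(c : ℂ)) ^ m / (m.factorial : ℂ) * ((Mint a n m : ℝ) : ℂ)
        * (1 - (ζ ^ ((k : ℕ) + 1)) ^ (m + 1))) * x ^ m) := by
    intro k x
    have h2 : ∀ (j : ℕ), ‖(1 : ℂ) - (ζ ^ ((k : ℕ) + 1)) ^ j‖ ≤ 2 := by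
      intro j
      refine (norm_sub_le _ _).trans ?_
      rw [norm_one, norm_pow, norm_pow, hζ1, one_pow, one_pow]
      norm_num
    apply Summable.of_norm
    refine Summable.of_nonneg_of_le (fun m => norm_nonneg _) ?_
      (((aux_summable a ha hn (s := ‖(c : ℂ)‖ * ‖x‖)
        (mul_nonneg (norm_nonneg _) (norm_nonneg _)))).mul_left 2)
    intro m
    have hnorm : ‖((-(c : ℂ)) ^ m / (m.factorial : ℂ) * ((Mint a n m : ℝ) : ℂ)
          * (1 - (ζ ^ ((k : ℕ) + 1)) ^ (m + 1))) * x ^ m‖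
        = (‖(c : ℂ)‖ ^ m / (m.factorial : ℝ) * Mint a n m)
          * (‖(1 : ℂ) - (ζ ^ ((k : ℕ) + 1)) ^ (m + 1)‖ * ‖x‖ ^ m) := by
      simp only [norm_mul, norm_div, norm_pow, norm_neg, Complex.norm_natCast,
        Complex.norm_real, Real.norm_eq_abs]
      rw [abs_of_pos (hMpos m)]
      ring
    rw [hnorm]
    have hb : (‖(c : ℂ)‖ ^ m / (m.factorial : ℝ) * Mint a n m)
          * (‖(1 : ℂ) - (ζ ^ ((k : ℕ) + 1)) ^ (m + 1)‖ * ‖x‖ ^ m)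
        ≤ (‖(c : ℂ)‖ ^ m / (m.factorial : ℝ) * Mint a n m) * (2 * ‖x‖ ^ m) := by
      have h3 : (0 : ℝ) ≤ ‖(c : ℂ)‖ ^ m / (m.factorial : ℝ) * Mint a n m := by
        have := (hMpos m).le
        positivity
      exact mul_le_mul_of_nonneg_left
        (mul_le_mul_of_nonneg_right (h2 (m + 1)) (by positivity)) h3
    refine hb.trans (le_of_eq ?_)
    rw [mul_pow]
    ring
  -- now prove linear independence
  rw [Fintype.linearIndependent_iff]
  intro A hA
  have hx : ∀ x : ℂ, (∑ k : Fin (n - 1), A k * y ((k : ℕ) + 1) x) = 0 := by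
    intro x
    have := congrFun hA x
    simpa using this
  -- the combined power series vanishes, so its coefficients vanish
  have hBzero : ∀ m : ℕ, (∑ k : Fin (n - 1), A k * ((-(c : ℂ)) ^ m / (m.factorial : ℂ)
      * ((Mint a n m : ℝ) : ℂ) * (1 - (ζ ^ ((k : ℕ) + 1)) ^ (m + 1)))) = 0 := by
    apply coeff_eq_zero
    · refine Summable.of_nonneg_of_le (fun m => norm_nonneg _) ?_
        ((aux_summable a ha hn (s := ‖(c : ℂ)‖)
          (norm_nonneg _)).mul_left ((∑ k : Fin (n - 1), ‖A k‖) * 2))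
      intro m
      refine (norm_sum_le _ _).trans ?_
      have hterm : ∀ k : Fin (n - 1), ‖A k * ((-(c : ℂ)) ^ m / (m.factorial : ℂ)
            * ((Mint a n m : ℝ) : ℂ) * (1 - (ζ ^ ((k : ℕ) + 1)) ^ (m + 1)))‖
          ≤ ‖A k‖ * (2 * (‖(c : ℂ)‖ ^ m / (m.factorial : ℝ) * Mint a n m)) := by
        intro k
        rw [norm_mul]
        refine mul_le_mul_of_nonneg_left ?_ (norm_nonneg _)
        have h2 : ‖(1 : ℂ) - (ζ ^ ((k : ℕ) + 1)) ^ (m + 1)‖ ≤ 2 := by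
          refine (norm_sub_le _ _).trans ?_
          rw [norm_one, norm_pow, norm_pow, hζ1, one_pow, one_pow]
          norm_num
        have hnorm : ‖(-(c : ℂ)) ^ m / (m.factorial : ℂ) * ((Mint a n m : ℝ) : ℂ)
              * (1 - (ζ ^ ((k : ℕ) + 1)) ^ (m + 1))‖
            = (‖(c : ℂ)‖ ^ m / (m.factorial : ℝ) * Mint a n m)
              * ‖(1 : ℂ) - (ζ ^ ((k : ℕ) + 1)) ^ (m + 1)‖ := by
          simp only [norm_mul, norm_div, norm_pow, norm_neg, Complex.norm_natCast,
            Complex.norm_real, Real.norm_eq_abs]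
          rw [abs_of_pos (hMpos m)]
        rw [hnorm]
        have h3 : (0 : ℝ) ≤ ‖(c : ℂ)‖ ^ m / (m.factorial : ℝ) * Mint a n m := by
          have := (hMpos m).le
          positivity
        calc (‖(c : ℂ)‖ ^ m / (m.factorial : ℝ) * Mint a n m)
              * ‖(1 : ℂ) - (ζ ^ ((k : ℕ) + 1)) ^ (m + 1)‖
            ≤ (‖(c : ℂ)‖ ^ m / (m.factorial : ℝ) * Mint a n m) * 2 :=
              mul_le_mul_of_nonneg_left h2 h3
          _ = 2 * (‖(c : ℂ)‖ ^ m / (m.factorial : ℝ) * Mint a n m) := by ring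
      refine (Finset.sum_le_sum fun k _ => hterm k).trans (le_of_eq ?_)
      rw [← Finset.sum_mul]
      ring
    · intro x
      calc ∑' m : ℕ, (∑ k : Fin (n - 1), A k * ((-(c : ℂ)) ^ m / (m.factorial : ℂ)
              * ((Mint a n m : ℝ) : ℂ) * (1 - (ζ ^ ((k : ℕ) + 1)) ^ (m + 1)))) * x ^ m
          = ∑' m : ℕ, ∑ k : Fin (n - 1), A k * (((-(c : ℂ)) ^ m / (m.factorial : ℂ)
              * ((Mint a n m : ℝ) : ℂ) * (1 - (ζ ^ ((k : ℕ) + 1)) ^ (m + 1))) * x ^ m) := by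
            refine tsum_congr fun m => ?_
            rw [Finset.sum_mul]
            exact Finset.sum_congr rfl fun k _ => (mul_assoc _ _ _)
        _ = ∑ k : Fin (n - 1), ∑' m : ℕ, A k * (((-(c : ℂ)) ^ m / (m.factorial : ℂ)
              * ((Mint a n m : ℝ) : ℂ) * (1 - (ζ ^ ((k : ℕ) + 1)) ^ (m + 1))) * x ^ m) :=
            Summable.tsum_finsetSum fun k _ => (hsumy k x).mul_left _
        _ = ∑ k : Fin (n - 1), A k * ∑' m : ℕ, ((-(c : ℂ)) ^ m / (m.factorial : ℂ)
              * ((Mint a n m : ℝ) : ℂ) * (1 - (ζ ^ ((k : ℕ) + 1)) ^ (m + 1))) * x ^ m :=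
            Finset.sum_congr rfl fun k _ => tsum_mul_left
        _ = ∑ k : Fin (n - 1), A k * y ((k : ℕ) + 1) x :=
            Finset.sum_congr rfl fun k _ => by rw [hy3 k x]
        _ = 0 := hx x
  -- extract the root-of-unity relations
  have hT : ∀ m : ℕ, (∑ k : Fin (n - 1), A k * (1 - ζ ^ (((k : ℕ) + 1) * (m + 1)))) = 0 := by
    intro m
    have h := hBzero m
    have hfac : (∑ k : Fin (n - 1), A k * ((-(c : ℂ)) ^ m / (m.factorial : ℂ)
          * ((Mint a n m : ℝ) : ℂ) * (1 - (ζ ^ ((k : ℕ) + 1)) ^ (m + 1))))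
        = ((-(c : ℂ)) ^ m / (m.factorial : ℂ) * ((Mint a n m : ℝ) : ℂ))
          * ∑ k : Fin (n - 1), A k * (1 - (ζ ^ ((k : ℕ) + 1)) ^ (m + 1)) := by
      rw [Finset.mul_sum]
      exact Finset.sum_congr rfl fun k _ => by ring
    rw [hfac] at h
    have hcC : (-(c : ℂ)) ≠ 0 := by
      simpa using (Complex.ofReal_ne_zero.mpr hc)
    have hXne : ((-(c : ℂ)) ^ m / (m.factorial : ℂ) * ((Mint a n m : ℝ) : ℂ)) ≠ 0 := by
      apply mul_ne_zero
      · exact div_ne_zero (pow_ne_zero _ hcC) (Nat.cast_ne_zero.mpr m.factorial_ne_zero)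
      · exact_mod_cast (hMpos m).ne'
    have h2 := (mul_eq_zero.mp h).resolve_left hXne
    calc ∑ k : Fin (n - 1), A k * (1 - ζ ^ (((k : ℕ) + 1) * (m + 1)))
        = ∑ k : Fin (n - 1), A k * (1 - (ζ ^ ((k : ℕ) + 1)) ^ (m + 1)) :=
          Finset.sum_congr rfl fun k _ => by rw [pow_mul]
      _ = 0 := h2
  -- sum of all A k vanishes
  have hA0 : (∑ k : Fin (n - 1), A k) = 0 := by
    have h1 : ∑ j ∈ Finset.range n, ∑ k : Fin (n - 1), A k * (1 - ζ ^ (((k : ℕ) + 1) * j)) = 0 := by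
      apply Finset.sum_eq_zero
      intro j _
      rcases Nat.eq_zero_or_pos j with h | h
      · subst h; simp
      · have := hT (j - 1)
        rwa [Nat.sub_add_cancel h] at this
    rw [Finset.sum_comm] at h1
    have h2 : ∀ k : Fin (n - 1),
        ∑ j ∈ Finset.range n, A k * (1 - ζ ^ (((k : ℕ) + 1) * j)) = A k * n := by
      intro k
      rw [← Finset.mul_sum]
      congr 1
      have he : ∑ j ∈ Finset.range n, ((1 : ℂ) - ζ ^ (((k : ℕ) + 1) * j))
          = ∑ j ∈ Finset.range n, ((1 : ℂ) - (ζ ^ ((k : ℕ) + 1)) ^ j) := by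
        exact Finset.sum_congr rfl fun j _ => by rw [pow_mul]
      have hkn : (k : ℕ) + 1 < n := by have := k.isLt; omega
      rw [he, Finset.sum_sub_distrib, Finset.sum_const, Finset.card_range,
        hgeom0 _ (hζne1 _ (by omega) hkn) (hζpow_n _), sub_zero, nsmul_eq_mul, mul_one]
    simp_rw [h2] at h1
    rw [← Finset.sum_mul] at h1
    exact (mul_eq_zero.mp h1).resolve_right hnne
  -- hence all "Fourier" sums vanish
  have hU : ∀ j : ℕ, (∑ k : Fin (n - 1), A k * ζ ^ (((k : ℕ) + 1) * j)) = 0 := by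
    intro j
    have hsplit : (∑ k : Fin (n - 1), A k * ζ ^ (((k : ℕ) + 1) * j))
        = (∑ k : Fin (n - 1), A k) - ∑ k : Fin (n - 1), A k * (1 - ζ ^ (((k : ℕ) + 1) * j)) := by
      rw [← Finset.sum_sub_distrib]
      exact Finset.sum_congr rfl fun k _ => by ring
    rcases Nat.eq_zero_or_pos j with h | h
    · subst h
      simp only [Nat.mul_zero, pow_zero, mul_one]
      exact hA0
    · have := hT (j - 1)
      rw [Nat.sub_add_cancel h] at this
      rw [hsplit, hA0, this, sub_zero]
  -- invert the discrete Fourier transform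
  intro k'
  have hfin : ∑ j ∈ Finset.range n,
      ((ζ ^ ((k' : ℕ) + 1))⁻¹) ^ j * ∑ k : Fin (n - 1), A k * ζ ^ (((k : ℕ) + 1) * j) = 0 :=
    Finset.sum_eq_zero fun j _ => by rw [hU j, mul_zero]
  have hswap : ∑ j ∈ Finset.range n,
        ((ζ ^ ((k' : ℕ) + 1))⁻¹) ^ j * ∑ k : Fin (n - 1), A k * ζ ^ (((k : ℕ) + 1) * j)
      = ∑ k : Fin (n - 1), A k * ∑ j ∈ Finset.range n,
          (ζ ^ ((k : ℕ) + 1) * (ζ ^ ((k' : ℕ) + 1))⁻¹) ^ j := by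
    simp_rw [Finset.mul_sum]
    rw [Finset.sum_comm]
    refine Finset.sum_congr rfl fun k _ => Finset.sum_congr rfl fun j _ => ?_
    rw [mul_pow, pow_mul]
    ring
  have hinner : ∀ k : Fin (n - 1),
      ∑ j ∈ Finset.range n, (ζ ^ ((k : ℕ) + 1) * (ζ ^ ((k' : ℕ) + 1))⁻¹) ^ j
        = if k = k' then (n : ℂ) else 0 := by
    intro k
    by_cases hkk : k = k'
    · subst hkk
      rw [mul_inv_cancel₀ (pow_ne_zero _ hζ0)]
      simp
    · rw [if_neg hkk]
      apply hgeom0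
      · intro hw
        rw [mul_inv_eq_one₀ (pow_ne_zero _ hζ0)] at hw
        have hk1 : (k : ℕ) + 1 < n := by have := k.isLt; omega
        have hk'1 : (k' : ℕ) + 1 < n := by have := k'.isLt; omega
        have := hζprim.pow_inj hk1 hk'1 hw
        exact hkk (Fin.ext (by omega))
      · rw [mul_pow, inv_pow, hζpow_n, hζpow_n, inv_one, mul_one]
  rw [hswap] at hfin
  simp_rw [hinner] at hfin
  simp only [mul_ite, mul_zero, Finset.sum_ite_eq', Finset.mem_univ, if_true] at hfin
  exact (mul_eq_zero.mp hfin).resolve_right hnne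
end

section
/- Let n ≥ 2 be an integer and c a nonzero real number, with n odd or (n even and c < 0), and let k be a natural number with 1 ≤ k ≤ ⌊n/2⌋. Then for every x ∈ ℂ, ∫₀^∞ e^{-(-c)^{n-1} w^n/n} ( e^{-c w x} - e^{-c w x a_k} cos(c w x b_k - 2kπ/n) ) dw = Σ_{j=0}^∞ (-sgn(c)·x)^j / j! · ( 1 - cos((j+1)·2kπ/n) ) · Γ((j+1)/n) · (n|c|)^{(j+1)/n - 1}, and the series converges for all x ∈ ℂ. -/
open MeasureTheory Real Set

private lemma aux_comb (p q : ℂ) :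
    Complex.exp p * (Complex.exp q / 2) = Complex.exp (p + q) / 2 := by
  rw [Complex.exp_add, mul_div_assoc]

private lemma aux_cos_exp (t : ℝ) :
    ((Real.cos t : ℝ) : ℂ) =
      (Complex.exp ((t : ℂ) * Complex.I) + Complex.exp (-(t : ℂ) * Complex.I)) / 2 := by
  rw [Complex.ofReal_cos]; rfl

private lemma aux_hasSum (R : ℝ) (θ : ℝ) (u : ℂ) :
    HasSum
      (fun j : ℕ => (R : ℂ) * (u ^ j / (Nat.factorial j) *
        (1 - (Real.cos (((j : ℝ) + 1) * θ) : ℂ))))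
      ((R : ℂ) * (Complex.exp u - Complex.exp (u * (Real.cos θ : ℝ)) *
        Complex.cos (-u * (Real.sin θ : ℝ) - (θ : ℝ)))) := by
  have hEpv : Complex.exp ((θ : ℂ) * Complex.I)
      = (Real.cos θ : ℂ) + (Real.sin θ : ℂ) * Complex.I := by
    rw [Complex.exp_mul_I, ← Complex.ofReal_cos, ← Complex.ofReal_sin]
  have hEmv : Complex.exp (-(θ : ℂ) * Complex.I)
      = (Real.cos θ : ℂ) - (Real.sin θ : ℂ) * Complex.I := by
    rw [show -(θ : ℂ) * Complex.I = ((-θ : ℝ) : ℂ) * Complex.I by push_cast; ring,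
      Complex.exp_mul_I, ← Complex.ofReal_cos, ← Complex.ofReal_sin, Real.cos_neg, Real.sin_neg]
    push_cast; ring
  have hexp : ∀ z : ℂ, HasSum (fun j : ℕ => z ^ j / (Nat.factorial j)) (Complex.exp z) := by
    intro z
    rw [Complex.exp_eq_exp_ℂ]
    exact NormedSpace.expSeries_div_hasSum_exp z
  have h1 := hexp u
  have h2 := (hexp (u * Complex.exp (-(θ : ℂ) * Complex.I))).mul_right
    (Complex.exp (-(θ : ℂ) * Complex.I) / 2)
  have h3 := (hexp (u * Complex.exp ((θ : ℂ) * Complex.I))).mul_right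
    (Complex.exp ((θ : ℂ) * Complex.I) / 2)
  have h := (h1.sub (h2.add h3)).mul_left (R : ℂ)
  have hfun : (fun j : ℕ => (R : ℂ) * (u ^ j / (Nat.factorial j) *
        (1 - (Real.cos (((j : ℝ) + 1) * θ) : ℂ))))
      = fun j : ℕ => (R : ℂ) * (u ^ j / (Nat.factorial j) -
          ((u * Complex.exp (-(θ : ℂ) * Complex.I)) ^ j / (Nat.factorial j) *
              (Complex.exp (-(θ : ℂ) * Complex.I) / 2) +
            (u * Complex.exp ((θ : ℂ) * Complex.I)) ^ j / (Nat.factorial j) *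
              (Complex.exp ((θ : ℂ) * Complex.I) / 2))) := by
    funext j
    have hc : ((Real.cos (((j : ℝ) + 1) * θ) : ℝ) : ℂ)
        = ((Complex.exp ((θ : ℂ) * Complex.I)) ^ j * Complex.exp ((θ : ℂ) * Complex.I)
            + (Complex.exp (-(θ : ℂ) * Complex.I)) ^ j * Complex.exp (-(θ : ℂ) * Complex.I)) / 2 := by
      rw [aux_cos_exp, ← Complex.exp_nat_mul, ← Complex.exp_nat_mul,
        ← Complex.exp_add, ← Complex.exp_add]
      congr 2 <;> push_cast <;> ring
    rw [hc, mul_pow, mul_pow]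
    ring
  have hval : Complex.exp u - Complex.exp (u * (Real.cos θ : ℝ)) *
        Complex.cos (-u * (Real.sin θ : ℝ) - (θ : ℝ))
      = Complex.exp u -
          (Complex.exp (u * Complex.exp (-(θ : ℂ) * Complex.I)) *
              (Complex.exp (-(θ : ℂ) * Complex.I) / 2) +
            Complex.exp (u * Complex.exp ((θ : ℂ) * Complex.I)) *
              (Complex.exp ((θ : ℂ) * Complex.I) / 2)) := by
    congr 1
    rw [show Complex.cos (-u * (Real.sin θ : ℝ) - (θ : ℝ))
        = (Complex.exp ((-u * (Real.sin θ : ℝ) - (θ : ℝ)) * Complex.I)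
            + Complex.exp (-(-u * (Real.sin θ : ℝ) - (θ : ℝ)) * Complex.I)) / 2 from rfl,
      add_div, mul_add, aux_comb, aux_comb, aux_comb, aux_comb, hEpv, hEmv]
    congr 3 <;> ring
  rw [hfun, show ((R : ℂ) * (Complex.exp u - Complex.exp (u * (Real.cos θ : ℝ)) *
        Complex.cos (-u * (Real.sin θ : ℝ) - (θ : ℝ)))) = (R : ℂ) * _ from congrArg _ hval]
  exact h

private lemma aux_rpow (n : ℕ) (hn : 2 ≤ n) (A : ℝ) (hA : 0 < A) (j : ℕ) :
    A ^ j * ((A ^ (n - 1) / n) ^ (-(((j : ℝ) + 1) / n)) * (1 / n))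
      = ((n : ℝ) * A) ^ (((j : ℝ) + 1) / n - 1) := by
  have hn0 : (0 : ℝ) < n := by exact_mod_cast Nat.pos_of_ne_zero (by omega)
  have hb : (0 : ℝ) < A ^ (n - 1) / n := by positivity
  set s : ℝ := ((j : ℝ) + 1) / n with hs
  have hns : s * n = (j : ℝ) + 1 := div_mul_cancel₀ _ (ne_of_gt hn0)
  have hcast : ((n - 1 : ℕ) : ℝ) = (n : ℝ) - 1 := by
    rw [Nat.cast_sub (by omega)]; norm_num
  apply Real.log_injOn_pos (Set.mem_Ioi.mpr (by positivity)) (Set.mem_Ioi.mpr (by positivity))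
  rw [Real.log_mul (by positivity) (by positivity), Real.log_mul (by positivity) (by positivity),
    Real.log_pow, Real.log_rpow hb, Real.log_rpow (by positivity),
    Real.log_div (by positivity) (ne_of_gt hn0), Real.log_pow, one_div, Real.log_inv,
    Real.log_mul (ne_of_gt hn0) (ne_of_gt hA), hcast]
  have hinv : (n:ℝ) * (n:ℝ)⁻¹ = 1 := mul_inv_cancel₀ (ne_of_gt hn0)
  linear_combination (-((j:ℝ)+1) * Real.log A) * hinv

theorem airy_type_power_series_y_plus
    (n : ℕ) (hn : 2 ≤ n) (c : ℝ) (hc : c ≠ 0)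
    (hcase : Odd n ∨ (Even n ∧ c < 0))
    (k : ℕ) (hk1 : 1 ≤ k) (hk2 : k ≤ n / 2) (x : ℂ) :
    HasSum
      (fun j : ℕ =>
        ((-(Real.sign c : ℂ)) * x) ^ j / (Nat.factorial j) *
          ((1 : ℂ) - (Real.cos (((j : ℝ) + 1) * (2 * k * π / n)) : ℝ)) *
          (Real.Gamma (((j : ℝ) + 1) / n) : ℝ) *
          ((((n : ℝ) * |c|) ^ (((j : ℝ) + 1) / n - 1) : ℝ) : ℂ))
      (∫ w in Ioi (0 : ℝ),
        Complex.exp (-(-(c : ℂ)) ^ (n - 1) * (w : ℂ) ^ n / n) *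
          (Complex.exp (-(c : ℂ) * w * x)
            - Complex.exp (-(c : ℂ) * w * x * (Real.cos (2 * k * π / n) : ℝ)) *
              Complex.cos ((c : ℂ) * w * x * (Real.sin (2 * k * π / n) : ℝ)
                - (2 * k * π / n : ℝ)))) := by
  have hn0 : (0 : ℝ) < n := by exact_mod_cast Nat.pos_of_ne_zero (by omega)
  have hn0C : (n : ℂ) ≠ 0 := by exact_mod_cast (show (n:ℕ) ≠ 0 by omega)
  have hA : (0 : ℝ) < |c| := abs_pos.mpr hc
  set θ : ℝ := 2 * k * π / n with hθ
  set b : ℝ := |c| ^ (n - 1) / n with hbdef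
  have hb : 0 < b := by rw [hbdef]; positivity
  -- the exponential prefactor is real
  have hreal : (-c) ^ (n - 1) = |c| ^ (n - 1) := by
    rcases hcase with h | ⟨he, hneg⟩
    · have he2 : Even (n - 1) := Nat.Odd.sub_odd h odd_one
      rw [he2.neg_pow, he2.pow_abs]
    · rw [abs_of_neg hneg]
  have hE : ∀ w : ℝ, Complex.exp (-(-(c : ℂ)) ^ (n - 1) * (w : ℂ) ^ n / n)
      = ((Real.exp (-(b * w ^ n)) : ℝ) : ℂ) := by
    intro w
    have hcast : (-(c : ℂ)) ^ (n - 1) = ((|c| ^ (n - 1) : ℝ) : ℂ) := by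
      rw [show -(c : ℂ) = ((-c : ℝ) : ℂ) by push_cast; ring, ← Complex.ofReal_pow, hreal]
    rw [hcast, Complex.ofReal_exp]
    congr 1
    rw [hbdef]
    push_cast
    field_simp
  -- the series of functions
  set F : ℕ → ℝ → ℂ := fun j w =>
    (-(c : ℂ) * x) ^ j / (Nat.factorial j) * (1 - (Real.cos (((j : ℝ) + 1) * θ) : ℂ)) *
      ((Real.exp (-(b * w ^ n)) * w ^ j : ℝ) : ℂ) with hF
  -- integrability of the basic real functions
  have hIntR : ∀ j : ℕ, IntegrableOn (fun w : ℝ => Real.exp (-(b * w ^ n)) * w ^ j)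
      (Ioi (0 : ℝ)) := by
    intro j
    have h0 := integrableOn_rpow_mul_exp_neg_mul_rpow
      (show (-1 : ℝ) < j from lt_of_lt_of_le neg_one_lt_zero (Nat.cast_nonneg j))
      (show (0 : ℝ) < n from hn0) hb
    exact h0.congr_fun (fun w hw => by
      simp only [Real.rpow_natCast, neg_mul]; ring) measurableSet_Ioi
  have hIntF : ∀ j : ℕ, Integrable (F j) (Measure.restrict volume (Ioi (0 : ℝ))) := by
    intro j
    simp only [hF]
    exact ((hIntR j).ofReal).const_mul _
  -- value of the basic real integral
  have hIval : ∀ j : ℕ, (∫ w in Ioi (0 : ℝ), Real.exp (-(b * w ^ n)) * w ^ j)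
      = b ^ (-(((j : ℝ) + 1) / n)) * (1 / n) * Real.Gamma (((j : ℝ) + 1) / n) := by
    intro j
    rw [setIntegral_congr_fun (g := fun w : ℝ => w ^ (j : ℝ) * Real.exp (-b * w ^ (n : ℝ)))
      measurableSet_Ioi (fun w hw => by simp only [Real.rpow_natCast, neg_mul]; ring)]
    rw [integral_rpow_mul_exp_neg_mul_rpow hn0
      (lt_of_lt_of_le neg_one_lt_zero (Nat.cast_nonneg j)) hb, neg_div]
  -- pointwise expansion
  have hps : ∀ w : ℝ, HasSum (fun j => F j w)
      (Complex.exp (-(-(c : ℂ)) ^ (n - 1) * (w : ℂ) ^ n / n) *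
        (Complex.exp (-(c : ℂ) * w * x)
          - Complex.exp (-(c : ℂ) * w * x * (Real.cos θ : ℝ)) *
            Complex.cos ((c : ℂ) * w * x * (Real.sin θ : ℝ) - (θ : ℝ)))) := by
    intro w
    have h := aux_hasSum (Real.exp (-(b * w ^ n))) θ (-(c : ℂ) * w * x)
    rw [hE w, show (c : ℂ) * w * x * ((Real.sin θ : ℝ) : ℂ) - ((θ : ℝ) : ℂ)
      = -(-(c : ℂ) * w * x) * ((Real.sin θ : ℝ) : ℂ) - ((θ : ℝ) : ℂ) from by ring]
    convert h using 1
    funext j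
    simp only [hF]
    rw [Complex.ofReal_mul, Complex.ofReal_pow,
      show (-(c : ℂ) * w * x) ^ j = (-(c : ℂ) * x) ^ j * (w : ℂ) ^ j from by
        rw [show -(c : ℂ) * w * x = -(c : ℂ) * x * w from by ring, mul_pow]]
    ring
  have htsum : ∀ w : ℝ, (∑' j, F j w)
      = Complex.exp (-(-(c : ℂ)) ^ (n - 1) * (w : ℂ) ^ n / n) *
        (Complex.exp (-(c : ℂ) * w * x)
          - Complex.exp (-(c : ℂ) * w * x * (Real.cos θ : ℝ)) *
            Complex.cos ((c : ℂ) * w * x * (Real.sin θ : ℝ) - (θ : ℝ))) :=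
    fun w => (hps w).tsum_eq
  -- sign decomposition
  have hsign : Real.sign c * |c| = c := by
    rcases lt_or_gt_of_ne hc with h | h
    · rw [Real.sign_of_neg h, abs_of_neg h]; ring
    · rw [Real.sign_of_pos h, abs_of_pos h]; ring
  -- values of the term integrals
  have hterm : ∀ j : ℕ, (∫ w in Ioi (0 : ℝ), F j w)
      = ((-(Real.sign c : ℂ)) * x) ^ j / (Nat.factorial j) *
          ((1 : ℂ) - (Real.cos (((j : ℝ) + 1) * θ) : ℝ)) *
          (Real.Gamma (((j : ℝ) + 1) / n) : ℝ) *
          ((((n : ℝ) * |c|) ^ (((j : ℝ) + 1) / n - 1) : ℝ) : ℂ) := by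
    intro j
    simp only [hF]
    rw [integral_const_mul]
    have hio : (∫ a in Ioi (0:ℝ), (((Real.exp (-(b * a ^ n)) * a ^ j) : ℝ) : ℂ))
        = ((b ^ (-(((j : ℝ) + 1) / n)) * (1 / n) * Real.Gamma (((j : ℝ) + 1) / n) : ℝ) : ℂ) := by
      rw [← hIval j]; exact integral_ofReal
    rw [hio]
    have hrm : |c| ^ j * (b ^ (-(((j : ℝ) + 1) / n)) * (1 / n))
        = ((n : ℝ) * |c|) ^ (((j : ℝ) + 1) / n - 1) := by
      rw [hbdef]; exact aux_rpow n hn |c| hA j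
    rw [← hrm,
      show -(c : ℂ) * x = (-(Real.sign c : ℂ) * x) * ((|c| : ℝ) : ℂ) from by
        rw [show (c : ℂ) = ((Real.sign c : ℝ) : ℂ) * ((|c| : ℝ) : ℂ) from by
          rw [← Complex.ofReal_mul, hsign]]
        ring,
      mul_pow]
    push_cast
    ring
  -- summability of the integrals of norms
  set r : ℝ := |c| * ‖x‖ with hrdef
  have hr0 : 0 ≤ r := by rw [hrdef]; positivity
  have hCnorm : ∀ j : ℕ, ‖(-(c : ℂ) * x) ^ j / (Nat.factorial j) *
      (1 - (Real.cos (((j : ℝ) + 1) * θ) : ℂ))‖ ≤ 2 * r ^ j / (Nat.factorial j) := by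
    intro j
    rw [norm_mul, norm_div, norm_pow, norm_mul, norm_neg, Complex.norm_real,
      Real.norm_eq_abs]
    have h2 : ‖(1 : ℂ) - ((Real.cos (((j : ℝ) + 1) * θ) : ℝ) : ℂ)‖ ≤ 2 := by
      refine (norm_sub_le _ _).trans ?_
      rw [norm_one, Complex.norm_real, Real.norm_eq_abs]
      have := Real.abs_cos_le_one (((j : ℝ) + 1) * θ)
      linarith
    have h3 : ‖((Nat.factorial j : ℕ) : ℂ)‖ = (Nat.factorial j : ℝ) := by
      rw [Complex.norm_natCast]
    rw [h3]
    calc (|c| * ‖x‖) ^ j / (Nat.factorial j : ℝ) * ‖(1 : ℂ) - _‖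
        ≤ (|c| * ‖x‖) ^ j / (Nat.factorial j : ℝ) * 2 := by
          exact mul_le_mul_of_nonneg_left h2 (by positivity)
      _ = 2 * r ^ j / (Nat.factorial j : ℝ) := by rw [hrdef]; ring
  have hInorm : ∀ j : ℕ, (∫ w in Ioi (0 : ℝ), ‖F j w‖)
      ≤ 2 * r ^ j / (Nat.factorial j) * (∫ w in Ioi (0 : ℝ), Real.exp (-(b * w ^ n)) * w ^ j) := by
    intro j
    have heq : (∫ w in Ioi (0 : ℝ), ‖F j w‖)
        = ‖(-(c : ℂ) * x) ^ j / (Nat.factorial j) * (1 - (Real.cos (((j : ℝ) + 1) * θ) : ℂ))‖ *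
          (∫ w in Ioi (0 : ℝ), Real.exp (-(b * w ^ n)) * w ^ j) := by
      rw [← integral_const_mul]
      refine setIntegral_congr_fun measurableSet_Ioi (fun w hw => ?_)
      simp only [hF]
      rw [norm_mul, Complex.norm_real, Real.norm_eq_abs,
        abs_of_nonneg (mul_nonneg (Real.exp_nonneg _)
          (pow_nonneg (le_of_lt (mem_Ioi.mp hw)) j))]
    rw [heq]
    have hI0 : (0:ℝ) ≤ ∫ w in Ioi (0 : ℝ), Real.exp (-(b * w ^ n)) * w ^ j :=
      setIntegral_nonneg measurableSet_Ioi (fun w hw =>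
        mul_nonneg (Real.exp_nonneg _) (pow_nonneg (le_of_lt (mem_Ioi.mp hw)) j))
    exact mul_le_mul_of_nonneg_right (hCnorm j) hI0
  -- the dominating function
  have hGint : IntegrableOn (fun w : ℝ => 2 * Real.exp (r * w - b * w ^ n)) (Ioi (0 : ℝ)) := by
    set W : ℝ := 1 + 2 * r / b with hW
    have hW1 : (1 : ℝ) ≤ W := le_add_of_nonneg_right (by positivity)
    have hsub : Ioi (0 : ℝ) ⊆ Ioc 0 W ∪ Ioi W := by
      intro w hw
      rcases le_or_gt w W with h | h
      · exact Or.inl ⟨hw, h⟩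
      · exact Or.inr h
    refine IntegrableOn.mono_set (IntegrableOn.union ?_ ?_) hsub
    · exact (Continuous.integrableOn_Icc (by fun_prop)).mono_set Ioc_subset_Icc_self
    · refine Integrable.mono' (g := fun w : ℝ => 2 * Real.exp (-(b / 2) * w))
        ((exp_neg_integrableOn_Ioi W (by positivity)).const_mul 2)
        ((Continuous.aestronglyMeasurable (by fun_prop)).restrict) ?_
      filter_upwards [ae_restrict_mem measurableSet_Ioi] with w hw
      rw [Real.norm_eq_abs, abs_of_nonneg (by positivity)]
      have hw1 : 1 ≤ w := le_of_lt (lt_of_le_of_lt hW1 hw)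
      have hw0 : (0 : ℝ) ≤ w := by linarith
      have hwb : 2 * r ≤ w * b := by
        have h1 : 2 * r / b ≤ w := le_of_lt (lt_of_le_of_lt (by rw [hW]; linarith) hw)
        calc 2 * r = 2 * r / b * b := by field_simp
          _ ≤ w * b := mul_le_mul_of_nonneg_right h1 hb.le
      have hpow : w ^ 2 ≤ w ^ n := pow_le_pow_right₀ hw1 hn
      have harg : r * w - b * w ^ n ≤ -(b / 2) * w := by
        nlinarith [mul_le_mul_of_nonneg_right hwb hw0,
          mul_le_mul_of_nonneg_left hpow hb.le,
          mul_le_mul_of_nonneg_right hw1 (by positivity : (0:ℝ) ≤ b / 2 * w)]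
      have := Real.exp_le_exp.mpr harg
      linarith
  have hsumm : Summable (fun j : ℕ => ∫ w in Ioi (0 : ℝ), ‖F j w‖) := by
    apply summable_of_sum_range_le
      (c := ∫ w in Ioi (0 : ℝ), 2 * Real.exp (r * w - b * w ^ n))
      (fun j => integral_nonneg (fun w => norm_nonneg _))
    intro N
    calc ∑ j ∈ Finset.range N, ∫ w in Ioi (0 : ℝ), ‖F j w‖
        ≤ ∑ j ∈ Finset.range N, 2 * r ^ j / (Nat.factorial j) *
            (∫ w in Ioi (0 : ℝ), Real.exp (-(b * w ^ n)) * w ^ j) :=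
          Finset.sum_le_sum fun j _ => hInorm j
      _ = ∫ w in Ioi (0 : ℝ), ∑ j ∈ Finset.range N,
            2 * r ^ j / (Nat.factorial j) * (Real.exp (-(b * w ^ n)) * w ^ j) := by
          rw [integral_finset_sum _ (fun j _ => (hIntR j).const_mul _)]
          exact Finset.sum_congr rfl fun j _ => (integral_const_mul _ _).symm
      _ ≤ ∫ w in Ioi (0 : ℝ), 2 * Real.exp (r * w - b * w ^ n) := by
          refine setIntegral_mono_on
            (integrable_finset_sum _ (fun j _ => (hIntR j).const_mul _)) hGint
            measurableSet_Ioi (fun w hw => ?_)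
          have hw0 : (0 : ℝ) ≤ w := le_of_lt hw
          have h1 : ∑ j ∈ Finset.range N, 2 * r ^ j / (Nat.factorial j) *
              (Real.exp (-(b * w ^ n)) * w ^ j)
              = 2 * Real.exp (-(b * w ^ n)) * ∑ j ∈ Finset.range N, (r * w) ^ j / (Nat.factorial j) := by
            rw [Finset.mul_sum]
            exact Finset.sum_congr rfl fun j _ => by rw [mul_pow]; ring
          rw [h1]
          have h2 := Real.sum_le_exp_of_nonneg (mul_nonneg hr0 hw0) N
          calc 2 * Real.exp (-(b * w ^ n)) * ∑ j ∈ Finset.range N, (r * w) ^ j / (Nat.factorial j)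
              ≤ 2 * Real.exp (-(b * w ^ n)) * Real.exp (r * w) :=
                mul_le_mul_of_nonneg_left h2 (by positivity)
            _ = 2 * Real.exp (r * w - b * w ^ n) := by
                rw [mul_assoc, ← Real.exp_add,
                  show -(b * w ^ n) + r * w = r * w - b * w ^ n from by ring]
  -- put everything together
  have key := hasSum_integral_of_summable_integral_norm
    (μ := Measure.restrict volume (Ioi (0 : ℝ))) hIntF hsumm
  simp only [htsum] at key
  rwa [funext hterm] at key
end

section
/- Let n ≥ 2 be an integer and c a nonzero real number, with n odd or (n even and c < 0), and let k be a natural number with 1 ≤ k ≤ ⌊n/2⌋. Then for every x ∈ ℂ, -∫₀^∞ e^{-(-c)^{n-1} w^n/n - c w x a_k} sin(c w x b_k - 2kπ/n) dw = Σ_{j=0}^∞ (-sgn(c)·x)^j / j! · sin((j+1)·2kπ/n) · Γ((j+1)/n) · (n|c|)^{(j+1)/n - 1}, and the series converges for all x ∈ ℂ. -/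
open MeasureTheory Real Set

private lemma myHasSum.congr' {f g : ℕ → ℂ} {a b : ℂ} (h : HasSum f a)
    (hfg : ∀ j, f j = g j) (hab : a = b) : HasSum g b := by
  rw [show g = f from (funext hfg).symm, ← hab]; exact h

private lemma keyHasSum (z : ℂ) (θ : ℝ) :
    HasSum (fun j : ℕ => (-z) ^ j / (Nat.factorial j : ℂ) *
        ((Real.sin (((j : ℝ) + 1) * θ) : ℝ) : ℂ))
      (-(Complex.exp (-(z * ((Real.cos θ : ℝ) : ℂ))) *
          Complex.sin (z * ((Real.sin θ : ℝ) : ℂ) - ((θ : ℝ) : ℂ)))) := by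
  have hexp : ∀ w : ℂ, HasSum (fun j : ℕ => w ^ j / (Nat.factorial j : ℂ)) (Complex.exp w) := by
    intro w
    rw [Complex.exp_eq_exp_ℂ]
    exact NormedSpace.expSeries_div_hasSum_exp w
  set u : ℂ := Complex.exp ((θ : ℂ) * Complex.I) with hu
  set v : ℂ := Complex.exp (-(θ : ℂ) * Complex.I) with hv
  have hueq : u = ((Real.cos θ : ℝ) : ℂ) + ((Real.sin θ : ℝ) : ℂ) * Complex.I := by
    rw [hu, Complex.exp_mul_I, Complex.ofReal_cos, Complex.ofReal_sin]
  have hveq : v = ((Real.cos θ : ℝ) : ℂ) - ((Real.sin θ : ℝ) : ℂ) * Complex.I := by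
    rw [hv, show -(θ : ℂ) = ((-θ : ℝ) : ℂ) by push_cast; ring, Complex.exp_mul_I]
    push_cast
    rw [Complex.cos_neg, Complex.sin_neg]
    push_cast
    ring
  have h := ((hexp (-(z * v))).mul_left (v * (Complex.I / 2))).sub
    ((hexp (-(z * u))).mul_left (u * (Complex.I / 2)))
  refine myHasSum.congr' h (fun j => ?_) ?_
  · -- term equality
    have hsin : ((Real.sin (((j : ℝ) + 1) * θ) : ℝ) : ℂ)
        = (v ^ (j + 1) - u ^ (j + 1)) * Complex.I / 2 := by
      rw [Complex.ofReal_sin]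
      show Complex.sin _ = _
      rw [show ((((j : ℝ) + 1) * θ : ℝ) : ℂ) = (((j : ℕ) + 1 : ℕ) : ℂ) * (θ : ℂ) by
        push_cast; ring]
      simp only [Complex.sin]
      rw [show -((((j : ℕ) + 1 : ℕ) : ℂ) * (θ : ℂ)) * Complex.I
            = (((j : ℕ) + 1 : ℕ) : ℂ) * (-(θ : ℂ) * Complex.I) by ring,
        show ((((j : ℕ) + 1 : ℕ) : ℂ) * (θ : ℂ)) * Complex.I
            = (((j : ℕ) + 1 : ℕ) : ℂ) * ((θ : ℂ) * Complex.I) by ring,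
        Complex.exp_nat_mul, Complex.exp_nat_mul, ← hu, ← hv]
    rw [hsin]
    ring
  · -- value equality
    have l1 : Complex.exp (-(z * v)) =
        Complex.exp (-(z * ((Real.cos θ : ℝ) : ℂ))) *
          Complex.exp (z * ((Real.sin θ : ℝ) : ℂ) * Complex.I) := by
      rw [← Complex.exp_add, hveq]; congr 1; ring
    have l2 : Complex.exp (-(z * u)) =
        Complex.exp (-(z * ((Real.cos θ : ℝ) : ℂ))) *
          Complex.exp (-(z * ((Real.sin θ : ℝ) : ℂ) * Complex.I)) := by
      rw [← Complex.exp_add, hueq]; congr 1; ring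
    have l3 : Complex.exp (-(z * ((Real.sin θ : ℝ) : ℂ) - ((θ : ℝ) : ℂ)) * Complex.I) =
        Complex.exp (-(z * ((Real.sin θ : ℝ) : ℂ) * Complex.I)) * u := by
      rw [hu, ← Complex.exp_add]; congr 1; ring
    have l4 : Complex.exp ((z * ((Real.sin θ : ℝ) : ℂ) - ((θ : ℝ) : ℂ)) * Complex.I) =
        Complex.exp (z * ((Real.sin θ : ℝ) : ℂ) * Complex.I) * v := by
      rw [hv, ← Complex.exp_add]; congr 1; ring
    simp only [Complex.sin]
    rw [l1, l2, l3, l4]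
    ring

private lemma realIntegral (n : ℕ) (hn : 2 ≤ n) (b : ℝ) (hb : 0 < b) (j : ℕ) :
    ∫ w in Ioi (0 : ℝ), w ^ j * Real.exp (-(b * w ^ n)) =
      b ^ (-((j : ℝ) + 1) / n) * (1 / n) * Real.Gamma (((j : ℝ) + 1) / n) := by
  have hp : (0 : ℝ) < n := by positivity
  have hq : (-1 : ℝ) < (j : ℝ) := lt_of_lt_of_le (by norm_num) (Nat.cast_nonneg j)
  rw [← integral_rpow_mul_exp_neg_mul_rpow hp hq hb]
  refine setIntegral_congr_fun measurableSet_Ioi fun w hw => ?_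
  rw [Real.rpow_natCast, Real.rpow_natCast, neg_mul]

private lemma mainHasSum (n : ℕ) (hn : 2 ≤ n) (b : ℝ) (hb : 0 < b) (γ : ℂ) (θ : ℝ) :
    HasSum
      (fun j : ℕ => (-γ) ^ j / (Nat.factorial j : ℂ) *
        ((Real.sin (((j : ℝ) + 1) * θ) : ℝ) : ℂ) *
        (((b ^ (-((j : ℝ) + 1) / n) * (1 / n) * Real.Gamma (((j : ℝ) + 1) / n) : ℝ)) : ℂ))
      (-∫ w in Ioi (0 : ℝ),
        Complex.exp (((-(b * w ^ n) : ℝ) : ℂ) - γ * (w : ℂ) * ((Real.cos θ : ℝ) : ℂ)) *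
          Complex.sin (γ * (w : ℂ) * ((Real.sin θ : ℝ) : ℂ) - ((θ : ℝ) : ℂ))) := by
  have hn' : (0 : ℝ) < n := by positivity
  have hn1 : (1 : ℝ) ≤ (n : ℝ) := by exact_mod_cast Nat.one_le_of_lt hn
  set R : ℝ := ‖γ‖ with hRdef
  have hR : 0 ≤ R := norm_nonneg _
  set C : ℝ := R * (1 + 2 * R / b) with hCdef
  have hC : 0 ≤ C := by
    have : (0:ℝ) ≤ 1 + 2 * R / b := by positivity
    exact mul_nonneg hR this
  have hRw : ∀ w : ℝ, 0 ≤ w → R * w ≤ C + b / 2 * w ^ n := by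
    intro w hw
    rcases le_or_gt w (1 + 2 * R / b) with h | h
    · have h1 : R * w ≤ C := by rw [hCdef]; nlinarith
      nlinarith [pow_nonneg hw n, hb.le]
    · have hW : (0:ℝ) ≤ 2 * R / b := by positivity
      have hw1 : (1 : ℝ) ≤ w := by nlinarith
      have h2 : w ^ 2 ≤ w ^ n := pow_le_pow_right₀ hw1 hn
      have h3 : 2 * R / b ≤ w := by nlinarith
      have h3' : 2 * R ≤ b * w := by
        rw [div_le_iff₀ hb] at h3; linarith
      have h4 : R * w ≤ b / 2 * w ^ 2 := by nlinarith [mul_nonneg (by linarith : (0:ℝ) ≤ b * w - 2 * R) hw]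
      have h5 : b / 2 * w ^ 2 ≤ b / 2 * w ^ n :=
        mul_le_mul_of_nonneg_left h2 (by positivity)
      linarith
  have hbase : IntegrableOn (fun w : ℝ => Real.exp (-(b / 2 * w ^ n))) (Ioi 0) := by
    have h0 := integrableOn_rpow_mul_exp_neg_mul_rpow (p := (n : ℝ)) (s := 0) (b := b / 2)
      (by norm_num) hn' (by positivity)
    refine h0.congr_fun (fun w hw => ?_) measurableSet_Ioi
    dsimp only
    rw [Real.rpow_zero, one_mul, Real.rpow_natCast, neg_mul]
  have hgint : IntegrableOn (fun w : ℝ => Real.exp C * Real.exp (-(b / 2 * w ^ n))) (Ioi 0) :=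
    hbase.const_mul _
  -- the dominated convergence argument
  have key := MeasureTheory.hasSum_integral_of_dominated_convergence
    (μ := (volume : Measure ℝ).restrict (Ioi 0))
    (F := fun (j : ℕ) (w : ℝ) => ((-γ) ^ j / (Nat.factorial j : ℂ) *
        ((Real.sin (((j : ℝ) + 1) * θ) : ℝ) : ℂ)) *
        (((w ^ j * Real.exp (-(b * w ^ n)) : ℝ)) : ℂ))
    (f := fun w : ℝ =>
      -(Complex.exp (((-(b * w ^ n) : ℝ) : ℂ) - γ * (w : ℂ) * ((Real.cos θ : ℝ) : ℂ)) *
          Complex.sin (γ * (w : ℂ) * ((Real.sin θ : ℝ) : ℂ) - ((θ : ℝ) : ℂ))))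
    (fun j w => (R * w) ^ j / (Nat.factorial j : ℝ) * Real.exp (-(b * w ^ n)))
    (fun j => by
      apply Continuous.aestronglyMeasurable
      fun_prop)
    (fun j => by
      filter_upwards [ae_restrict_mem measurableSet_Ioi] with w hw
      have hw0 : (0 : ℝ) < w := hw
      have hnorm : ‖((-γ) ^ j / (Nat.factorial j : ℂ) *
          ((Real.sin (((j : ℝ) + 1) * θ) : ℝ) : ℂ)) *
          (((w ^ j * Real.exp (-(b * w ^ n)) : ℝ)) : ℂ)‖
          = R ^ j / (Nat.factorial j : ℝ) * |Real.sin (((j : ℝ) + 1) * θ)| *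
            (w ^ j * Real.exp (-(b * w ^ n))) := by
        rw [norm_mul, norm_mul, norm_div, norm_pow, norm_neg, Complex.norm_natCast,
          Complex.norm_real, Complex.norm_real, Real.norm_eq_abs, Real.norm_eq_abs,
          abs_of_nonneg (by positivity : (0:ℝ) ≤ w ^ j * Real.exp (-(b * w ^ n)))]
      rw [hnorm]
      calc R ^ j / (Nat.factorial j : ℝ) * |Real.sin (((j : ℝ) + 1) * θ)| *
            (w ^ j * Real.exp (-(b * w ^ n)))
          ≤ R ^ j / (Nat.factorial j : ℝ) * 1 * (w ^ j * Real.exp (-(b * w ^ n))) := by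
            gcongr
            exact Real.abs_sin_le_one _
        _ = (R * w) ^ j / (Nat.factorial j : ℝ) * Real.exp (-(b * w ^ n)) := by
            rw [mul_pow]; ring)
    (by
      filter_upwards with w
      exact ((Real.summable_pow_div_factorial (R * w)).mul_right _))
    (by
      have heq : (fun w : ℝ => ∑' j : ℕ,
          (R * w) ^ j / (Nat.factorial j : ℝ) * Real.exp (-(b * w ^ n)))
          = fun w : ℝ => Real.exp (R * w - b * w ^ n) := by
        funext w
        rw [tsum_mul_right]
        rw [show (∑' j : ℕ, (R * w) ^ j / (Nat.factorial j : ℝ)) = Real.exp (R * w) by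
          refine HasSum.tsum_eq ?_
          rw [Real.exp_eq_exp_ℝ]
          exact NormedSpace.expSeries_div_hasSum_exp (R * w)]
        rw [← Real.exp_add]; ring_nf
      rw [heq]
      refine hgint.mono' ?_ ?_
      · apply Continuous.aestronglyMeasurable; fun_prop
      · filter_upwards [ae_restrict_mem measurableSet_Ioi] with w hw
        have hw0 : (0 : ℝ) < w := hw
        rw [Real.norm_eq_abs, abs_of_pos (Real.exp_pos _), ← Real.exp_add]
        apply Real.exp_le_exp.mpr
        have := hRw w hw0.le
        nlinarith [pow_nonneg hw0.le n])
    (by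
      filter_upwards with w
      have h := (keyHasSum (γ * (w : ℂ)) θ).mul_left
        ((Real.exp (-(b * w ^ n)) : ℝ) : ℂ)
      refine myHasSum.congr' h (fun j => ?_) ?_
      · push_cast
        ring
      · rw [show (((-(b * w ^ n) : ℝ)) : ℂ) - γ * (w : ℂ) * ((Real.cos θ : ℝ) : ℂ)
            = (((-(b * w ^ n) : ℝ)) : ℂ) + -(γ * (w : ℂ) * ((Real.cos θ : ℝ) : ℂ)) from
            sub_eq_add_neg _ _,
          Complex.exp_add, ← Complex.ofReal_exp]
        ring)
  rw [integral_neg] at key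
  refine myHasSum.congr' key (fun j => ?_) rfl
  rw [MeasureTheory.integral_const_mul]
  congr 1
  rw [← realIntegral n hn b hb j]
  exact integral_ofReal

private lemma constAlg (n : ℕ) (hn : 2 ≤ n) (c : ℝ) (hc : c ≠ 0) (j : ℕ) :
    |c| ^ j * ((|c| ^ (n - 1) / n) ^ (-((j : ℝ) + 1) / n) * (1 / n)) =
      ((n : ℝ) * |c|) ^ (((j : ℝ) + 1) / n - 1) := by
  have hn' : (0 : ℝ) < n := by positivity
  have hc' : (0 : ℝ) < |c| := abs_pos.mpr hc
  have hn1 : ((n - 1 : ℕ) : ℝ) = (n : ℝ) - 1 := by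
    have h1 : (1 : ℕ) ≤ n := by omega
    push_cast [h1]
    ring
  set s : ℝ := ((j : ℝ) + 1) / n with hs
  have h1 : (|c| ^ (n - 1) / (n : ℝ)) ^ (-((j : ℝ) + 1) / n)
      = |c| ^ (((n : ℝ) - 1) * (-s)) * (n : ℝ) ^ s := by
    rw [show -((j : ℝ) + 1) / n = -s by rw [hs]; ring]
    rw [div_eq_mul_inv, Real.mul_rpow (by positivity) (by positivity),
      Real.inv_rpow hn'.le, ← Real.rpow_neg hn'.le, neg_neg,
      ← Real.rpow_natCast |c| (n - 1), ← Real.rpow_mul hc'.le, hn1]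
  rw [h1, ← Real.rpow_natCast |c| j]
  have e1 : |c| ^ ((j : ℝ)) * |c| ^ (((n : ℝ) - 1) * (-s)) = |c| ^ (s - 1) := by
    rw [← Real.rpow_add hc']
    congr 1
    rw [hs]; field_simp; ring
  have e2 : (n : ℝ) ^ s * (1 / (n : ℝ)) = (n : ℝ) ^ (s - 1) := by
    rw [one_div, ← Real.rpow_neg_one (n : ℝ), ← Real.rpow_add hn']
    congr 1
  calc |c| ^ ((j:ℝ)) * (|c| ^ (((n:ℝ) - 1) * (-s)) * (n:ℝ) ^ s * (1 / (n:ℝ)))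
      = (|c| ^ ((j:ℝ)) * |c| ^ (((n:ℝ) - 1) * (-s))) * ((n:ℝ) ^ s * (1 / (n:ℝ))) := by ring
    _ = |c| ^ (s - 1) * (n:ℝ) ^ (s - 1) := by rw [e1, e2]
    _ = ((n:ℝ) * |c|) ^ (s - 1) := by rw [Real.mul_rpow hn'.le hc'.le]; ring

theorem airy_type_power_series_y_minus
    (n : ℕ) (hn : 2 ≤ n) (c : ℝ) (hc : c ≠ 0)
    (hcase : Odd n ∨ (Even n ∧ c < 0))
    (k : ℕ) (hk1 : 1 ≤ k) (hk2 : k ≤ n / 2) (x : ℂ) :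
    HasSum
      (fun j : ℕ =>
        ((-(Real.sign c : ℂ)) * x) ^ j / (Nat.factorial j) *
          (Real.sin (((j : ℝ) + 1) * (2 * k * π / n)) : ℝ) *
          (Real.Gamma (((j : ℝ) + 1) / n) : ℝ) *
          ((((n : ℝ) * |c|) ^ (((j : ℝ) + 1) / n - 1) : ℝ) : ℂ))
      (-∫ w in Ioi (0 : ℝ),
        Complex.exp (-(-(c : ℂ)) ^ (n - 1) * (w : ℂ) ^ n / n
            - (c : ℂ) * w * x * (Real.cos (2 * k * π / n) : ℝ)) *
          Complex.sin ((c : ℂ) * w * x * (Real.sin (2 * k * π / n) : ℝ)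
            - (2 * k * π / n : ℝ))) := by
  have hc' : (0 : ℝ) < |c| := abs_pos.mpr hc
  have hn' : (0 : ℝ) < n := by positivity
  set θ : ℝ := 2 * k * π / n with hθ
  set b : ℝ := |c| ^ (n - 1) / n with hbdef
  have hb : 0 < b := by rw [hbdef]; positivity
  have hreal : (-c) ^ (n - 1) = |c| ^ (n - 1) := by
    rcases hcase with h | ⟨h, hneg⟩
    · have he : Even (n - 1) := Nat.Odd.sub_odd h odd_one
      rw [he.neg_pow, he.pow_abs]
    · rw [abs_of_neg hneg]
  have hcpow : (-(c : ℂ)) ^ (n - 1) = ((|c| ^ (n - 1) : ℝ) : ℂ) := by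
    rw [show -(c : ℂ) = (((-c : ℝ)) : ℂ) by push_cast; ring, ← Complex.ofReal_pow, hreal]
  have hsign : (c : ℂ) = ((Real.sign c : ℝ) : ℂ) * ((|c| : ℝ) : ℂ) := by
    rw [← Complex.ofReal_mul]
    congr 1
    rcases lt_or_gt_of_ne hc with h | h
    · rw [Real.sign_of_neg h, abs_of_neg h]; ring
    · rw [Real.sign_of_pos h, abs_of_pos h]; ring
  have hmain := mainHasSum n hn b hb ((c : ℂ) * x) θ
  refine myHasSum.congr' hmain (fun j => ?_) ?_
  · -- term equality
    rw [← constAlg n hn c hc j]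
    rw [hbdef]
    push_cast
    rw [hsign]
    push_cast
    ring
  · -- integral equality
    congr 1
    refine setIntegral_congr_fun measurableSet_Ioi fun w hw => ?_
    congr 2
    · rw [hcpow, hbdef]
      push_cast
      ring
    · ring
end
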